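/- arXiv:2603.19772 — 7 statements merged into one kernel-verified Lean document; each statement's English description precedes it below -/
import Mathlib

section
/- For every r ≥ 2 and ε > 0 there exists δ > 0 such that: for any finite partition α with at most r atoms and any finite partition β, if H_μ(α|β) < δ then there exists a partition β′ with at most r+1 atoms which is coarser than β (each atom of β′ is a union of atoms of β) and satisfies ρ̃(α,β′) < ε. -/
open MeasureTheory Filter Real Topology
open scoped symmDiff ENNReal

variable {X : Type*} [MeasurableSpace X]

/-- A finite measurable partition of `X` (mod `μ`-null sets), with atoms indexed by `ι`. -/
def IsPartition (μ : Measure X) {ι : Type*} (A : ι → Set X) : Prop :=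
  (∀ i, MeasurableSet (A i)) ∧ Pairwise (Function.onFun Disjoint A) ∧ μ (⋃ i, A i)ᶜ = 0

/-- `μ(A|B)`, with the convention that it is `0` when `μ B = 0`. -/
noncomputable def condProb (μ : Measure X) (A B : Set X) : ℝ :=
  if μ B = 0 then 0 else (μ (A ∩ B)).toReal / (μ B).toReal

/-- Conditional entropy `H_μ(α|β)` of two finite partitions. -/
noncomputable def condEntropy' (μ : Measure X) {ι κ : Type*} [Fintype ι] [Fintype κ]
    (A : ι → Set X) (B : κ → Set X) : ℝ :=
  ∑ j, (μ (B j)).toReal * ∑ i, Real.negMulLog (condProb μ (A i) (B j))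

/-- The Rokhlin distance `ρ(α,β) = H_μ(α|β) + H_μ(β|α)`. -/
noncomputable def rokhlinDist (μ : Measure X) {ι κ : Type*} [Fintype ι] [Fintype κ]
    (A : ι → Set X) (B : κ → Set X) : ℝ :=
  condEntropy' μ A B + condEntropy' μ B A

/-- Shannon entropy `H_μ(α)` of a finite partition. -/
noncomputable def partEntropy (μ : Measure X) {ι : Type*} [Fintype ι] (A : ι → Set X) : ℝ :=
  ∑ i, Real.negMulLog (μ (A i)).toReal

/-- Entropy of the join `⋁_{i=1}^n α_i` of `n` finite partitions. -/
noncomputable def jointEntropy (μ : Measure X) {n : ℕ} {ι : Type*} [Fintype ι]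
    (A : Fin n → ι → Set X) : ℝ :=
  ∑ f : Fin n → ι, Real.negMulLog (μ (⋂ i, A i (f i))).toReal

/-- `ρ̃(α,β)`: the minimal total symmetric difference over matchings of atoms. -/
noncomputable def rhoTilde (μ : Measure X) {r : ℕ} (A B : Fin r → Set X) : ℝ :=
  ⨅ σ : Equiv.Perm (Fin r), ∑ i, (μ (A i ∆ B (σ i))).toReal

/-- Total boundedness (precompactness) of a set w.r.t. a distance-like function. -/
def TotBddIn {α : Type*} (d : α → α → ℝ) (K : Set α) : Prop :=
  ∀ ε > 0, ∃ F : Finset α, ↑F ⊆ K ∧ ∀ a ∈ K, ∃ b ∈ F, d a b < ε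

open Classical in
/-- Normalized Hamming distance w.r.t. a finite family `E` of partitions. -/
noncomputable def hamDist {r : ℕ} (E : Finset (Fin r → Set X)) (x y : X) : ℝ :=
  ((E.filter fun α => ∀ i, ¬(x ∈ α i ∧ y ∈ α i)).card : ℝ) / E.card

/-- Ball for the normalized Hamming distance. -/
def hamBall {r : ℕ} (E : Finset (Fin r → Set X)) (x : X) (ε : ℝ) : Set X :=
  {y | hamDist E x y < ε}


/-- For every `r ≥ 2` and `ε > 0` there is `δ > 0` such that for any
partition `α` with at most `r` atoms and any finite partition `β`, if `H_μ(α|β) < δ` then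
some partition `β′` with at most `r+1` atoms, coarser than `β` (each atom of `β′` is a
union of atoms of `β`), satisfies `ρ̃(α,β′) < ε` (with `α` enumerated with `r+1` atoms by
adding an empty atom). -/
theorem exists_coarsening_close_of_small_condEntropy (μ : Measure X) [IsProbabilityMeasure μ]
    (r : ℕ) (hr : 2 ≤ r) (ε : ℝ) (hε : 0 < ε) :
    ∃ δ > (0 : ℝ), ∀ (m : ℕ) (α : Fin r → Set X) (β : Fin m → Set X),
      IsPartition μ α → IsPartition μ β → condEntropy' μ α β < δ →
      ∃ β' : Fin (r + 1) → Set X, IsPartition μ β' ∧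
        (∀ j, ∃ s : Finset (Fin m), β' j = ⋃ i ∈ s, β i) ∧
        rhoTilde μ (Fin.snoc α (∅ : Set X)) β' < ε := by
  classical
  refine ⟨ε / 2, by positivity, ?_⟩
  intro m α β hα hβ hent
  obtain ⟨hαm, hαd, hαc⟩ := hα
  obtain ⟨hβm, hβd, hβc⟩ := hβ
  have hr0 : 0 < r := by omega
  have hfin : ∀ s : Set X, μ s ≠ ∞ := fun s => measure_ne_top μ s
  -- choose for each j the atom of α with maximal intersection
  have hmax : ∀ j : Fin m, ∃ i : Fin r, ∀ i', μ (α i' ∩ β j) ≤ μ (α i ∩ β j) := by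
    intro j
    obtain ⟨i, -, hi⟩ := Finset.exists_max_image Finset.univ (fun i => μ (α i ∩ β j))
      ⟨⟨0, hr0⟩, Finset.mem_univ _⟩
    exact ⟨i, fun i' => hi i' (Finset.mem_univ _)⟩
  choose f hf using hmax
  set B' : Fin r → Set X := fun i => ⋃ j ∈ Finset.univ.filter (fun j => f j = i), β j with hB'def
  -- ∑ᵢ μ(αᵢ ∩ βⱼ) = μ(βⱼ)
  have hsum_meas : ∀ j, ∑ i, μ (α i ∩ β j) = μ (β j) := by
    intro j
    have h1 : μ (⋃ i ∈ Finset.univ, α i ∩ β j) = ∑ i, μ (α i ∩ β j) := by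
      refine measure_biUnion_finset ?_ (fun i _ => (hαm i).inter (hβm j))
      intro i _ i' _ h
      exact (hαd h).mono Set.inter_subset_left Set.inter_subset_left
    have h2 : (⋃ i ∈ Finset.univ, α i ∩ β j) = (⋃ i, α i) ∩ β j := by
      simp [Set.iUnion_inter]
    rw [h2] at h1
    rw [← h1]
    refine le_antisymm (measure_mono Set.inter_subset_right) ?_
    have hsub : β j ⊆ ((⋃ i, α i) ∩ β j) ∪ (⋃ i, α i)ᶜ := by
      intro x hx
      by_cases hx' : x ∈ ⋃ i, α i
      · exact Or.inl ⟨hx', hx⟩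
      · exact Or.inr hx'
    calc μ (β j) ≤ μ (((⋃ i, α i) ∩ β j) ∪ (⋃ i, α i)ᶜ) := measure_mono hsub
      _ ≤ μ ((⋃ i, α i) ∩ β j) + μ ((⋃ i, α i)ᶜ) := measure_union_le _ _
      _ = μ ((⋃ i, α i) ∩ β j) := by rw [hαc, add_zero]
  have hsumR : ∀ j, ∑ i, (μ (α i ∩ β j)).toReal = (μ (β j)).toReal := by
    intro j
    rw [← ENNReal.toReal_sum (fun i _ => hfin _), hsum_meas j]
  -- key entropy bound for each j
  have hkey : ∀ j, (μ (β j)).toReal - (μ (α (f j) ∩ β j)).toReal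
      ≤ (μ (β j)).toReal * ∑ i, Real.negMulLog (condProb μ (α i) (β j)) := by
    intro j
    by_cases hbj : μ (β j) = 0
    · have ha0 : μ (α (f j) ∩ β j) = 0 := measure_mono_null Set.inter_subset_right hbj
      simp [hbj, ha0]
    · have hc : 0 < (μ (β j)).toReal := ENNReal.toReal_pos hbj (hfin _)
      have hq_def : ∀ i, condProb μ (α i) (β j)
          = (μ (α i ∩ β j)).toReal / (μ (β j)).toReal := by
        intro i; simp [condProb, hbj]
      have hq_nonneg : ∀ i, 0 ≤ condProb μ (α i) (β j) := by
        intro i; rw [hq_def]; positivity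
      have hq_le_p : ∀ i, condProb μ (α i) (β j) ≤ condProb μ (α (f j)) (β j) := by
        intro i
        rw [hq_def, hq_def]
        have : (μ (α i ∩ β j)).toReal ≤ (μ (α (f j) ∩ β j)).toReal :=
          ENNReal.toReal_mono (hfin _) (hf j i)
        gcongr
      have hqsum : ∑ i, condProb μ (α i) (β j) = 1 := by
        simp only [hq_def]
        rw [← Finset.sum_div, hsumR j, div_self hc.ne']
      set p := condProb μ (α (f j)) (β j) with hp_def
      have hp_pos : 0 < p := by
        by_contra h
        push_neg at h
        have h0 : ∑ i, condProb μ (α i) (β j) ≤ 0 :=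
          Finset.sum_nonpos fun i _ => (hq_le_p i).trans h
        rw [hqsum] at h0; linarith
      have hterm : ∀ i, -(condProb μ (α i) (β j) * Real.log p)
          ≤ Real.negMulLog (condProb μ (α i) (β j)) := by
        intro i
        rcases eq_or_lt_of_le (hq_nonneg i) with h0 | h0
        · simp [Real.negMulLog, ← h0]
        · rw [Real.negMulLog]
          have : Real.log (condProb μ (α i) (β j)) ≤ Real.log p :=
            Real.log_le_log h0 (hq_le_p i)
          nlinarith
      have hSig : -(Real.log p) ≤ ∑ i, Real.negMulLog (condProb μ (α i) (β j)) := by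
        have h5 := Finset.sum_le_sum (fun i (_ : i ∈ Finset.univ) => hterm i)
        have e : ∑ i, condProb μ (α i) (β j) * Real.log p = Real.log p := by
          rw [← Finset.sum_mul, hqsum, one_mul]
        have e2 : ∑ i, -(condProb μ (α i) (β j) * Real.log p)
            = -(Real.log p) := by
          rw [Finset.sum_neg_distrib, e]
        rw [e2] at h5
        exact h5
      have hlog : 1 - p ≤ -Real.log p := by
        have := Real.log_le_sub_one_of_pos hp_pos
        linarith
      have hpc : (μ (β j)).toReal * p = (μ (α (f j) ∩ β j)).toReal := by
        rw [hp_def, hq_def, mul_div_cancel₀]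
        exact hc.ne'
      have h1 : (μ (β j)).toReal * (1 - p)
          ≤ (μ (β j)).toReal * ∑ i, Real.negMulLog (condProb μ (α i) (β j)) := by
        apply mul_le_mul_of_nonneg_left (hlog.trans hSig) hc.le
      calc (μ (β j)).toReal - (μ (α (f j) ∩ β j)).toReal
          = (μ (β j)).toReal * (1 - p) := by rw [mul_one_sub, hpc]
        _ ≤ _ := h1
  -- define β'
  refine ⟨Fin.snoc B' ∅, ⟨?_, ?_, ?_⟩, ?_, ?_⟩
  · -- measurability
    intro i
    refine Fin.lastCases ?_ (fun i => ?_) i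
    · simp [Fin.snoc_last]
    · rw [Fin.snoc_castSucc]
      exact Finset.measurableSet_biUnion _ fun j _ => hβm j
  · -- pairwise disjoint
    have hBd : Pairwise (Function.onFun Disjoint B') := by
      intro i i' hne
      simp only [Function.onFun, hB'def]
      rw [Set.disjoint_iUnion_left]
      intro j
      rw [Set.disjoint_iUnion_left]
      intro hj
      rw [Set.disjoint_iUnion_right]
      intro j'
      rw [Set.disjoint_iUnion_right]
      intro hj'
      simp only [Finset.mem_filter] at hj hj'
      have : j ≠ j' := by
        rintro rfl
        exact hne (hj.2.symm.trans hj'.2)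
      exact hβd this
    intro i i'
    refine Fin.lastCases ?_ (fun i0 => ?_) i <;> refine Fin.lastCases ?_ (fun i1 => ?_) i' <;>
      intro hne <;>
      simp only [Function.onFun, Fin.snoc_last, Fin.snoc_castSucc]
    · exact absurd rfl hne
    · exact Set.empty_disjoint _
    · exact Set.disjoint_empty _
    · exact hBd fun h => hne (congrArg Fin.castSucc h)
  · -- covers
    apply measure_mono_null _ hβc
    intro x hx
    simp only [Set.mem_compl_iff, Set.mem_iUnion] at hx ⊢
    intro ⟨j, hj⟩
    apply hx
    refine ⟨(f j).castSucc, ?_⟩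
    rw [Fin.snoc_castSucc]
    simp only [hB'def, Set.mem_iUnion]
    exact ⟨j, by simp, hj⟩
  · -- coarsening
    intro j
    refine Fin.lastCases ?_ (fun i => ?_) j
    · exact ⟨∅, by simp [Fin.snoc_last]⟩
    · exact ⟨Finset.univ.filter (fun j => f j = i), by rw [Fin.snoc_castSucc]⟩
  · -- the rhoTilde estimate
    -- bound for each atom
    have hbound : ∀ i : Fin r, (μ (α i ∆ B' i)).toReal
        ≤ (∑ j ∈ Finset.univ.filter (fun j => f j = i), (μ (β j \ α i)).toReal)
          + ∑ j ∈ Finset.univ.filter (fun j => f j ≠ i), (μ (α i ∩ β j)).toReal := by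
      intro i
      have h1 : μ (B' i \ α i) ≤ ∑ j ∈ Finset.univ.filter (fun j => f j = i), μ (β j \ α i) := by
        have : B' i \ α i ⊆ ⋃ j ∈ Finset.univ.filter (fun j => f j = i), (β j \ α i) := by
          simp only [hB'def]
          rintro x ⟨hx1, hx2⟩
          simp only [Set.mem_iUnion] at hx1 ⊢
          obtain ⟨j, hj, hxj⟩ := hx1
          exact ⟨j, hj, hxj, hx2⟩
        exact (measure_mono this).trans (measure_biUnion_finset_le _ _)
      have h2 : μ (α i \ B' i)
          ≤ ∑ j ∈ Finset.univ.filter (fun j => f j ≠ i), μ (α i ∩ β j) := by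
        have hsub : α i \ B' i ⊆ (⋃ j, β j)ᶜ
            ∪ ⋃ j ∈ Finset.univ.filter (fun j => f j ≠ i), (α i ∩ β j) := by
          rintro x ⟨hx1, hx2⟩
          by_cases hxb : x ∈ ⋃ j, β j
          · obtain ⟨j, hj⟩ := Set.mem_iUnion.1 hxb
            right
            have hfj : f j ≠ i := by
              rintro rfl
              apply hx2
              simp only [hB'def, Set.mem_iUnion]
              exact ⟨j, by simp, hj⟩
            simp only [Set.mem_iUnion]
            exact ⟨j, by simp [hfj], hx1, hj⟩
          · exact Or.inl hxb
        calc μ (α i \ B' i) ≤ μ ((⋃ j, β j)ᶜ)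
              + μ (⋃ j ∈ Finset.univ.filter (fun j => f j ≠ i), (α i ∩ β j)) :=
              (measure_mono hsub).trans (measure_union_le _ _)
          _ ≤ 0 + ∑ j ∈ Finset.univ.filter (fun j => f j ≠ i), μ (α i ∩ β j) := by
              gcongr
              · exact hβc.le
              · exact measure_biUnion_finset_le _ _
          _ = _ := by rw [zero_add]
      have h3 : μ (α i ∆ B' i) ≤ μ (α i \ B' i) + μ (B' i \ α i) := by
        rw [Set.symmDiff_def]
        exact measure_union_le _ _
      have h4 : μ (α i ∆ B' i)
          ≤ (∑ j ∈ Finset.univ.filter (fun j => f j ≠ i), μ (α i ∩ β j))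
            + ∑ j ∈ Finset.univ.filter (fun j => f j = i), μ (β j \ α i) :=
        h3.trans (add_le_add h2 h1)
      have hne1 : (∑ j ∈ Finset.univ.filter (fun j => f j ≠ i), μ (α i ∩ β j)) ≠ ∞ :=
        (ENNReal.sum_lt_top.2 fun j _ => (hfin _).lt_top).ne
      have hne2 : (∑ j ∈ Finset.univ.filter (fun j => f j = i), μ (β j \ α i)) ≠ ∞ :=
        (ENNReal.sum_lt_top.2 fun j _ => (hfin _).lt_top).ne
      have := ENNReal.toReal_mono (by rw [ENNReal.add_ne_top]; exact ⟨hne1, hne2⟩) h4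
      rw [ENNReal.toReal_add hne1 hne2, ENNReal.toReal_sum (fun j _ => hfin _),
        ENNReal.toReal_sum (fun j _ => hfin _)] at this
      linarith
    -- identify the diff term
    have hD : ∀ j, (μ (β j \ α (f j))).toReal
        = (μ (β j)).toReal - (μ (α (f j) ∩ β j)).toReal := by
      intro j
      have := measure_inter_add_diff (μ := μ) (β j) (hαm (f j))
      have h' := congrArg ENNReal.toReal this
      rw [ENNReal.toReal_add (hfin _) (hfin _)] at h'
      rw [Set.inter_comm]
      linarith
    -- sum the bounds
    set D : Fin m → ℝ := fun j => (μ (β j)).toReal - (μ (α (f j) ∩ β j)).toReal with hDdef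
    have hsum1 : ∑ i : Fin r, ∑ j ∈ Finset.univ.filter (fun j => f j = i),
        (μ (β j \ α i)).toReal = ∑ j, D j := by
      rw [← Finset.sum_fiberwise Finset.univ f D]
      refine Finset.sum_congr rfl fun i _ => Finset.sum_congr rfl fun j hj => ?_
      simp only [Finset.mem_filter] at hj
      rw [← hj.2, hD j]
    have hsum2 : ∑ i : Fin r, ∑ j ∈ Finset.univ.filter (fun j => f j ≠ i),
        (μ (α i ∩ β j)).toReal = ∑ j, D j := by
      have : ∀ i : Fin r, ∑ j ∈ Finset.univ.filter (fun j => f j ≠ i),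
          (μ (α i ∩ β j)).toReal
          = ∑ j : Fin m, if f j ≠ i then (μ (α i ∩ β j)).toReal else 0 := by
        intro i; rw [Finset.sum_filter]
      simp only [this]
      rw [Finset.sum_comm]
      refine Finset.sum_congr rfl fun j _ => ?_
      have h1 : ∑ i : Fin r, (if f j ≠ i then (μ (α i ∩ β j)).toReal else 0)
          = ∑ i ∈ Finset.univ.filter (fun i => f j ≠ i), (μ (α i ∩ β j)).toReal := by
        rw [Finset.sum_filter]
      rw [h1, Finset.filter_ne, Finset.sum_erase_eq_sub (Finset.mem_univ _), hsumR j]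
    have htot : ∑ i : Fin r, (μ (α i ∆ B' i)).toReal ≤ 2 * ∑ j, D j := by
      calc ∑ i : Fin r, (μ (α i ∆ B' i)).toReal
          ≤ ∑ i : Fin r, ((∑ j ∈ Finset.univ.filter (fun j => f j = i),
              (μ (β j \ α i)).toReal)
            + ∑ j ∈ Finset.univ.filter (fun j => f j ≠ i), (μ (α i ∩ β j)).toReal) :=
            Finset.sum_le_sum fun i _ => hbound i
        _ = ∑ j, D j + ∑ j, D j := by rw [Finset.sum_add_distrib, hsum1, hsum2]
        _ = 2 * ∑ j, D j := by ring
    -- entropy bounds ∑ D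
    have hDent : ∑ j, D j ≤ condEntropy' μ α β := by
      unfold condEntropy'
      exact Finset.sum_le_sum fun j _ => hkey j
    -- conclude via the identity permutation
    have hS1 : ∑ i : Fin (r + 1),
        (μ ((Fin.snoc α (∅ : Set X) : Fin (r+1) → Set X) i
          ∆ (Fin.snoc B' ∅ : Fin (r+1) → Set X) ((Equiv.refl (Fin (r+1))) i))).toReal
        = ∑ i : Fin r, (μ (α i ∆ B' i)).toReal := by
      rw [Fin.sum_univ_castSucc]
      simp [Fin.snoc_castSucc, Fin.snoc_last]
    have hbdd : BddBelow (Set.range fun σ : Equiv.Perm (Fin (r+1)) =>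
        ∑ i, (μ ((Fin.snoc α (∅ : Set X) : Fin (r+1) → Set X) i
          ∆ (Fin.snoc B' ∅ : Fin (r+1) → Set X) (σ i))).toReal) := by
      refine ⟨0, ?_⟩
      rintro x ⟨σ, rfl⟩
      exact Finset.sum_nonneg fun i _ => ENNReal.toReal_nonneg
    calc rhoTilde μ (Fin.snoc α (∅ : Set X)) (Fin.snoc B' ∅)
        ≤ ∑ i : Fin (r + 1),
          (μ ((Fin.snoc α (∅ : Set X) : Fin (r+1) → Set X) i
            ∆ (Fin.snoc B' ∅ : Fin (r+1) → Set X) ((Equiv.refl (Fin (r+1))) i))).toReal :=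
          ciInf_le hbdd (Equiv.refl _)
      _ = ∑ i : Fin r, (μ (α i ∆ B' i)).toReal := hS1
      _ ≤ 2 * ∑ j, D j := htot
      _ ≤ 2 * condEntropy' μ α β := by linarith
      _ < 2 * (ε / 2) := by linarith
      _ = ε := by ring
end

section
/- If a subset K of 𝔓_r is precompact in the Rokhlin metric ρ, then the maximal pattern entropy h*_μ(K) is zero. -/
open MeasureTheory Filter Real Topology
open scoped symmDiff ENNReal

variable {X : Type*} [MeasurableSpace X]

/-- `P*_{K,μ}(n) = sup_{α_1,…,α_n ∈ K} H_μ(⋁_{i=1}^n α_i)` for partitions with at most `r` atoms. -/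
noncomputable def patternSup (μ : Measure X) {r : ℕ} (K : Set (Fin r → Set X)) (n : ℕ) : ℝ :=
  sSup {H : ℝ | ∃ A : Fin n → Fin r → Set X, (∀ i, A i ∈ K) ∧ H = jointEntropy μ A}

/-- Maximal pattern entropy `h*_μ(K) = lim_n P*_{K,μ}(n)/n`. -/
noncomputable def maxPatternEntropy (μ : Measure X) {r : ℕ} (K : Set (Fin r → Set X)) : ℝ :=
  limsup (fun n => patternSup μ K n / n) atTop

namespace MPE

/-- Log-sum inequality. -/
lemma logSum {γ : Type*} (s : Finset γ) (x w : γ → ℝ) (hx : ∀ i ∈ s, 0 ≤ x i)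
    (hw : ∀ i ∈ s, 0 ≤ w i) (h0 : ∀ i ∈ s, w i = 0 → x i = 0) :
    (∑ i ∈ s, x i) * Real.log ((∑ i ∈ s, x i) / (∑ i ∈ s, w i)) ≤
      ∑ i ∈ s, x i * Real.log (x i / w i) := by
  set S := ∑ i ∈ s, x i with hS
  set W := ∑ i ∈ s, w i with hW
  rcases eq_or_lt_of_le (Finset.sum_nonneg hx) with h | hSpos
  · have hall : ∀ i ∈ s, x i = 0 := by
      intro i hi
      have h1 := Finset.single_le_sum hx hi
      have hS0 : S = 0 := hS.trans h.symm
      exact le_antisymm (by rw [← hS0]; exact h1) (hx i hi)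
    have hS0 : S = 0 := hS.trans h.symm
    rw [hS0]
    simp only [zero_mul]
    refine Finset.sum_nonneg fun i hi => ?_
    rw [hall i hi]; simp
  · -- S > 0
    have hWpos : 0 < W := by
      obtain ⟨i, hi, hxi⟩ : ∃ i ∈ s, 0 < x i := by
        by_contra h
        push_neg at h
        have : S ≤ 0 := Finset.sum_nonpos h
        linarith
      have hwi : 0 < w i := by
        rcases (hw i hi).lt_or_eq with h | h
        · exact h
        · exact absurd (h0 i hi h.symm) (by linarith)
      exact lt_of_lt_of_le hwi (Finset.single_le_sum hw hi)
    have key : ∀ i ∈ s, x i * Real.log (S / W) + (x i - w i * (S / W)) ≤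
        x i * Real.log (x i / w i) := by
      intro i hi
      rcases (hx i hi).lt_or_eq with hxi | hxi
      · have hwi : 0 < w i := by
          rcases (hw i hi).lt_or_eq with h | h
          · exact h
          · exact absurd (h0 i hi h.symm) (by linarith)
        have hy : 0 < (x i * W) / (w i * S) := div_pos (mul_pos hxi hWpos) (mul_pos hwi hSpos)
        have hlog : 1 - ((x i * W) / (w i * S))⁻¹ ≤ Real.log ((x i * W) / (w i * S)) :=
          Real.one_sub_inv_le_log_of_pos hy
        have hsplit : Real.log ((x i * W) / (w i * S)) =
            Real.log (x i / w i) - Real.log (S / W) := by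
          rw [Real.log_div (mul_pos hxi hWpos).ne' (mul_pos hwi hSpos).ne',
            Real.log_div hxi.ne' hwi.ne',
            Real.log_div hSpos.ne' hWpos.ne', Real.log_mul hxi.ne' hWpos.ne',
            Real.log_mul hwi.ne' hSpos.ne']
          ring
        have hinv : ((x i * W) / (w i * S))⁻¹ = (w i * S) / (x i * W) := by
          rw [inv_div]
        rw [hsplit, hinv] at hlog
        have := mul_le_mul_of_nonneg_left hlog (hx i hi)
        have hxy : x i * ((w i * S) / (x i * W)) = w i * (S / W) := by
          field_simp
        nlinarith [this, hxy]
      · rw [← hxi]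
        have : (0:ℝ) - w i * (S / W) ≤ 0 := by
          have : 0 ≤ w i * (S / W) := mul_nonneg (hw i hi) (div_pos hSpos hWpos).le
          linarith
        simpa using this
    calc S * Real.log (S / W) = ∑ i ∈ s, (x i * Real.log (S / W) + (x i - w i * (S / W))) := by
          rw [Finset.sum_add_distrib, Finset.sum_sub_distrib, ← Finset.sum_mul, ← hS,
            ← Finset.sum_mul, ← hW]
          have : W * (S / W) = S := by field_simp
          rw [this]
          ring
      _ ≤ ∑ i ∈ s, x i * Real.log (x i / w i) := Finset.sum_le_sum key


/-- Gibbs inequality. -/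
lemma gibbs {γ : Type*} [Fintype γ] (p t : γ → ℝ) (hp : ∀ i, 0 ≤ p i) (ht : ∀ i, 0 ≤ t i)
    (h0 : ∀ i, t i = 0 → p i = 0) (hT : ∑ i, t i ≤ ∑ i, p i) :
    ∑ i, Real.negMulLog (p i) ≤ ∑ i, -(p i * Real.log (t i)) := by
  have hls := logSum Finset.univ p t (fun i _ => hp i) (fun i _ => ht i) (fun i _ h => h0 i h)
  set P := ∑ i, p i
  set T := ∑ i, t i
  have hPT : 0 ≤ P * Real.log (P / T) := by
    rcases eq_or_lt_of_le (Finset.sum_nonneg fun i (_ : i ∈ Finset.univ) => hp i) with h | hPpos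
    · rw [show P = ∑ i, p i from rfl, ← h]; simp
    · have hTpos : 0 < T := by
        rcases eq_or_lt_of_le (Finset.sum_nonneg fun i (_ : i ∈ Finset.univ) => ht i) with h | h
        · exfalso
          have : ∀ i, t i = 0 := by
            intro i
            refine le_antisymm ?_ (ht i)
            have := Finset.single_le_sum (fun j (_ : j ∈ Finset.univ) => ht j) (Finset.mem_univ i)
            rw [← h] at this
            exact this
          have : P = 0 := by
            refine Finset.sum_eq_zero fun i _ => h0 i (this i)
          linarith
        · exact h
      have : 1 ≤ P / T := (one_le_div hTpos).mpr hT
      exact mul_nonneg hPpos.le (Real.log_nonneg this)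
  have hterm : ∀ i, Real.negMulLog (p i) = -(p i * Real.log (t i)) - p i * Real.log (p i / t i) := by
    intro i
    rcases (hp i).lt_or_eq with hpi | hpi
    · have hti : 0 < t i := by
        rcases (ht i).lt_or_eq with h | h
        · exact h
        · exact absurd (h0 i h.symm) (by linarith)
      rw [Real.negMulLog, Real.log_div hpi.ne' hti.ne']
      ring
    · rw [← hpi]; simp
  calc ∑ i, Real.negMulLog (p i)
      = ∑ i, -(p i * Real.log (t i)) - ∑ i, p i * Real.log (p i / t i) := by
        rw [← Finset.sum_sub_distrib]
        exact Finset.sum_congr rfl fun i _ => hterm i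
    _ ≤ ∑ i, -(p i * Real.log (t i)) := by linarith
  
/-- entropy increases under refinement -/
lemma negMulLog_sum_le {γ : Type*} [Fintype γ] (m : γ → ℝ) (hm : ∀ j, 0 ≤ m j) :
    Real.negMulLog (∑ j, m j) ≤ ∑ j, Real.negMulLog (m j) := by
  have hX : ∀ j, -(m j * Real.log (∑ k, m k)) ≤ Real.negMulLog (m j) := by
    intro j
    rcases (hm j).lt_or_eq with hj | hj
    · have hle : m j ≤ ∑ k, m k := Finset.single_le_sum (fun k _ => hm k) (Finset.mem_univ j)
      have := Real.log_le_log hj hle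
      rw [Real.negMulLog]
      nlinarith
    · rw [← hj]; simp
  calc Real.negMulLog (∑ j, m j) = ∑ j, -(m j * Real.log (∑ k, m k)) := by
        rw [Real.negMulLog, neg_mul, Finset.sum_mul, ← Finset.sum_neg_distrib]
    _ ≤ ∑ j, Real.negMulLog (m j) := Finset.sum_le_sum fun j _ => hX j

/-- concavity form: conditional entropy grouping -/
lemma condLS {γ : Type*} (s : Finset γ) (x w : γ → ℝ) (hx : ∀ i ∈ s, 0 ≤ x i)
    (hxw : ∀ i ∈ s, x i ≤ w i) :
    ∑ i ∈ s, w i * Real.negMulLog (x i / w i) ≤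
      (∑ i ∈ s, w i) * Real.negMulLog ((∑ i ∈ s, x i) / (∑ i ∈ s, w i)) := by
  have hw : ∀ i ∈ s, 0 ≤ w i := fun i hi => (hx i hi).trans (hxw i hi)
  have h0 : ∀ i ∈ s, w i = 0 → x i = 0 := fun i hi h =>
    le_antisymm (h ▸ hxw i hi) (hx i hi)
  have hid : ∀ a b : ℝ, (b = 0 → a = 0) → b * Real.negMulLog (a / b) = -(a * Real.log (a / b)) := by
    intro a b hab
    rcases eq_or_ne b 0 with h | h
    · rw [h, hab h]; simp
    · rw [Real.negMulLog]
      field_simp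
  have hls := logSum s x w hx hw h0
  have hW0 : (∑ i ∈ s, w i) = 0 → (∑ i ∈ s, x i) = 0 := by
    intro h
    refine Finset.sum_eq_zero fun i hi => h0 i hi ?_
    exact le_antisymm (by
      have := Finset.single_le_sum hw hi
      rw [h] at this
      exact this) (hw i hi)
  calc ∑ i ∈ s, w i * Real.negMulLog (x i / w i)
      = ∑ i ∈ s, -(x i * Real.log (x i / w i)) := Finset.sum_congr rfl fun i hi =>
        hid _ _ (h0 i hi)
    _ = -∑ i ∈ s, x i * Real.log (x i / w i) := by rw [Finset.sum_neg_distrib]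
    _ ≤ -((∑ i ∈ s, x i) * Real.log ((∑ i ∈ s, x i) / (∑ i ∈ s, w i))) := by linarith
    _ = (∑ i ∈ s, w i) * Real.negMulLog ((∑ i ∈ s, x i) / (∑ i ∈ s, w i)) := (hid _ _ hW0).symm



lemma toReal_mono' (μ : Measure X) [IsFiniteMeasure μ] {S T : Set X} (h : S ⊆ T) :
    (μ S).toReal ≤ (μ T).toReal :=
  ENNReal.toReal_mono (measure_ne_top μ T) (measure_mono h)

lemma toReal_le_one (μ : Measure X) [IsProbabilityMeasure μ] (S : Set X) :
    (μ S).toReal ≤ 1 := by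
  have := ENNReal.toReal_mono (by simp : (1 : ℝ≥0∞) ≠ ⊤) (prob_le_one (μ := μ) (s := S))
  simpa using this

/-- additivity of measure over a finite partition -/
lemma sum_measure_inter {κ : Type*} [Fintype κ] (μ : Measure X) [IsFiniteMeasure μ]
    (C : κ → Set X) (hC : IsPartition μ C) (S : Set X) (hS : MeasurableSet S) :
    ∑ k, (μ (S ∩ C k)).toReal = (μ S).toReal := by
  have hdisj : Pairwise (Function.onFun Disjoint fun k => S ∩ C k) := fun k k' hkk' =>
    ((hC.2.1 hkk').mono Set.inter_subset_right Set.inter_subset_right)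
  have hmeas : ∀ k, MeasurableSet (S ∩ C k) := fun k => hS.inter (hC.1 k)
  have h1 : μ S = μ (⋃ k, S ∩ C k) := by
    refine le_antisymm ?_ (measure_mono (Set.iUnion_subset fun k => Set.inter_subset_left))
    have hsub : S ⊆ (⋃ k, S ∩ C k) ∪ (⋃ k, C k)ᶜ := by
      intro x hx
      by_cases h : x ∈ ⋃ k, C k
      · obtain ⟨k, hk⟩ := Set.mem_iUnion.mp h
        exact Or.inl (Set.mem_iUnion.mpr ⟨k, hx, hk⟩)
      · exact Or.inr h
    calc μ S ≤ μ ((⋃ k, S ∩ C k) ∪ (⋃ k, C k)ᶜ) := measure_mono hsub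
      _ ≤ μ (⋃ k, S ∩ C k) + μ (⋃ k, C k)ᶜ := measure_union_le _ _
      _ = μ (⋃ k, S ∩ C k) := by rw [hC.2.2, add_zero]
  rw [h1, measure_iUnion hdisj hmeas, tsum_fintype, ENNReal.toReal_sum
    (fun k _ => measure_ne_top μ _)]

/-- the common refinement of finitely many partitions is a partition -/
lemma isPartition_joint {κ ι : Type*} [Countable κ] (μ : Measure X) (P : κ → ι → Set X)
    (hP : ∀ k, IsPartition μ (P k)) :
    IsPartition μ (fun g : κ → ι => ⋂ k, P k (g k)) := by
  refine ⟨fun g => MeasurableSet.iInter fun k => (hP k).1 _, ?_, ?_⟩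
  · intro g g' hne
    obtain ⟨k, hk⟩ := Function.ne_iff.mp hne
    exact ((hP k).2.1 hk).mono (Set.iInter_subset _ k) (Set.iInter_subset _ k)
  · have hsub : (⋃ g : κ → ι, ⋂ k, P k (g k))ᶜ ⊆ ⋃ k, (⋃ a, P k a)ᶜ := by
      intro x hx
      by_contra hx2
      simp only [Set.mem_iUnion, Set.mem_compl_iff, not_exists, not_not] at hx2
      have : ∀ k, ∃ a, x ∈ P k a := by
        intro k
        have := hx2 k
        simpa [Set.mem_iUnion] using this
      choose a ha using this
      exact hx (Set.mem_iUnion.mpr ⟨a, Set.mem_iInter.mpr ha⟩)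
    exact measure_mono_null hsub (measure_iUnion_null fun k => (hP k).2.2)

/-- expand a single value against a disjoint family -/
lemma single_expand {ι : Type*} [Fintype ι] [DecidableEq ι] (μ : Measure X)
    (β : ι → Set X) (hdis : Pairwise (Function.onFun Disjoint β)) (b₀ : ι) (S : Set X)
    (hS : S ⊆ β b₀) (h : ι → ℝ) :
    (μ S).toReal * h b₀ = ∑ b, (μ (β b ∩ S)).toReal * h b := by
  rw [Finset.sum_eq_single b₀]
  · rw [Set.inter_eq_right.mpr hS]
  · intro b _ hb
    have : β b ∩ S ⊆ (∅ : Set X) := by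
      rw [← Set.disjoint_iff_inter_eq_empty.mp (hdis hb)]
      exact Set.inter_subset_inter_right _ hS
    rw [measure_mono_null this (measure_empty), ENNReal.toReal_zero, zero_mul]
  · intro h; exact absurd (Finset.mem_univ b₀) h



lemma partEntropy_nonneg (μ : Measure X) [IsProbabilityMeasure μ] {ι : Type*} [Fintype ι]
    (A : ι → Set X) : 0 ≤ partEntropy μ A :=
  Finset.sum_nonneg fun _ _ => Real.negMulLog_nonneg ENNReal.toReal_nonneg (toReal_le_one μ _)

lemma jointEntropy_nonneg (μ : Measure X) [IsProbabilityMeasure μ] {n : ℕ} {ι : Type*} [Fintype ι]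
    (A : Fin n → ι → Set X) : 0 ≤ jointEntropy μ A :=
  Finset.sum_nonneg fun _ _ => Real.negMulLog_nonneg ENNReal.toReal_nonneg (toReal_le_one μ _)

lemma condProb_nonneg (μ : Measure X) (A B : Set X) : 0 ≤ condProb μ A B := by
  unfold condProb
  split
  · exact le_refl 0
  · exact div_nonneg ENNReal.toReal_nonneg ENNReal.toReal_nonneg

lemma condProb_le_one (μ : Measure X) [IsFiniteMeasure μ] (A B : Set X) : condProb μ A B ≤ 1 := by
  unfold condProb
  split
  · exact zero_le_one
  · rename_i h
    rw [div_le_one (ENNReal.toReal_pos h (measure_ne_top μ B))]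
    exact toReal_mono' μ Set.inter_subset_right

lemma condEntropy'_nonneg (μ : Measure X) [IsProbabilityMeasure μ] {ι κ : Type*} [Fintype ι]
    [Fintype κ] (A : ι → Set X) (B : κ → Set X) : 0 ≤ condEntropy' μ A B :=
  Finset.sum_nonneg fun j _ => mul_nonneg ENNReal.toReal_nonneg <| Finset.sum_nonneg fun i _ =>
    Real.negMulLog_nonneg (condProb_nonneg μ _ _) (condProb_le_one μ _ _)

lemma condEntropy'_le_rokhlinDist (μ : Measure X) [IsProbabilityMeasure μ] {ι κ : Type*}
    [Fintype ι] [Fintype κ] (A : ι → Set X) (B : κ → Set X) :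
    condEntropy' μ A B ≤ rokhlinDist μ A B :=
  le_add_of_nonneg_right (condEntropy'_nonneg μ B A)

lemma key (μ : Measure X) [IsProbabilityMeasure μ] {r n : ℕ}
    (F : Finset (Fin r → Set X)) (hF : ∀ β ∈ F, IsPartition μ β)
    (A : Fin n → Fin r → Set X) (hA : ∀ i, IsPartition μ (A i))
    (B : Fin n → Fin r → Set X) (hBF : ∀ i, B i ∈ F) :
    jointEntropy μ A ≤ (∑ β ∈ F, partEntropy μ β) + ∑ i, condEntropy' μ (A i) (B i) := by
  classical
  set PA : (Fin n → Fin r) → Set X := fun f => ⋂ i, A i (f i) with hPAdef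
  set QB : ({β // β ∈ F} → Fin r) → Set X :=
    fun g => ⋂ β : {β // β ∈ F}, (β : Fin r → Set X) (g β) with hQBdef
  have hPA : IsPartition μ PA := isPartition_joint μ A hA
  have hQB : IsPartition μ QB :=
    isPartition_joint μ (fun β : {β // β ∈ F} => (β : Fin r → Set X)) (fun β => hF β β.2)
  set m : (Fin n → Fin r) → ({β // β ∈ F} → Fin r) → ℝ :=
    fun f g => (μ (PA f ∩ QB g)).toReal with hmdef
  set q : ({β // β ∈ F} → Fin r) → ℝ := fun g => (μ (QB g)).toReal with hqdef
  set c : Fin n → Fin r → ({β // β ∈ F} → Fin r) → ℝ :=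
    fun i a g => (μ (A i a ∩ QB g)).toReal / q g with hcdef
  set t : (Fin n → Fin r) → ({β // β ∈ F} → Fin r) → ℝ := fun f g =>
    (∏ β : {β // β ∈ F}, (μ ((β : Fin r → Set X) (g β))).toReal) * ∏ i, c i (f i) g with htdef
  have hQBsub : ∀ (g : {β // β ∈ F} → Fin r) (β : {β // β ∈ F}),
      QB g ⊆ (β : Fin r → Set X) (g β) := fun g β => Set.iInter_subset _ β
  have hPAsub : ∀ (f : Fin n → Fin r) (i), PA f ⊆ A i (f i) := fun f i => Set.iInter_subset _ i
  have hm_nonneg : ∀ f g, 0 ≤ m f g := fun f g => ENNReal.toReal_nonneg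
  have hm_le_q : ∀ f g, m f g ≤ q g := fun f g => toReal_mono' μ Set.inter_subset_right
  have hm_le_num : ∀ f g i, m f g ≤ (μ (A i (f i) ∩ QB g)).toReal := fun f g i =>
    toReal_mono' μ (Set.inter_subset_inter_left _ (hPAsub f i))
  have hm_le_β : ∀ f g (β : {β // β ∈ F}), m f g ≤ (μ ((β : Fin r → Set X) (g β))).toReal :=
    fun f g β => toReal_mono' μ (Set.inter_subset_right.trans (hQBsub g β))
  have hrow : ∀ f, ∑ g, m f g = (μ (PA f)).toReal := by
    intro f
    calc ∑ g, m f g = ∑ g, (μ (PA f ∩ QB g)).toReal := rfl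
      _ = (μ (PA f)).toReal := sum_measure_inter μ QB hQB (PA f) (hPA.1 f)
  have hcol : ∀ g, ∑ f, m f g = q g := by
    intro g
    calc ∑ f, m f g = ∑ f, (μ (QB g ∩ PA f)).toReal :=
          Finset.sum_congr rfl fun f _ => by rw [hmdef]; rw [Set.inter_comm]
      _ = q g := sum_measure_inter μ PA hPA (QB g) (hQB.1 g)
  have hAmarg : ∀ i g, ∑ a, (μ (A i a ∩ QB g)).toReal = q g := by
    intro i g
    calc ∑ a, (μ (A i a ∩ QB g)).toReal = ∑ a, (μ (QB g ∩ A i a)).toReal :=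
          Finset.sum_congr rfl fun a _ => by rw [Set.inter_comm]
      _ = q g := sum_measure_inter μ (A i) (hA i) (QB g) (hQB.1 g)
  have hβmarg : ∀ β : {β // β ∈ F}, ∑ b, (μ ((β : Fin r → Set X) b)).toReal = 1 := by
    intro β
    calc ∑ b, (μ ((β : Fin r → Set X) b)).toReal
        = ∑ b, (μ (Set.univ ∩ (β : Fin r → Set X) b)).toReal := by
          refine Finset.sum_congr rfl fun b _ => by rw [Set.univ_inter]
      _ = (μ Set.univ).toReal := sum_measure_inter μ _ (hF β β.2) Set.univ MeasurableSet.univ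
      _ = 1 := by simp
  have hsum_m : ∑ f, ∑ g, m f g = 1 := by
    calc ∑ f, ∑ g, m f g = ∑ f, (μ (Set.univ ∩ PA f)).toReal := by
          refine Finset.sum_congr rfl fun f _ => ?_
          rw [hrow f, Set.univ_inter]
      _ = (μ Set.univ).toReal := sum_measure_inter μ PA hPA Set.univ MeasurableSet.univ
      _ = 1 := by simp
  -- Step 1: refinement increases entropy
  have step1 : jointEntropy μ A ≤ ∑ f, ∑ g, Real.negMulLog (m f g) := by
    unfold jointEntropy
    refine Finset.sum_le_sum fun f _ => ?_
    have : (μ (⋂ i, A i (f i))).toReal = ∑ g, m f g := (hrow f).symm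
    rw [this]
    exact negMulLog_sum_le _ fun g => hm_nonneg f g
  -- Step 2: Gibbs inequality
  have ht_nonneg : ∀ f g, 0 ≤ t f g := by
    intro f g
    refine mul_nonneg (Finset.prod_nonneg fun β _ => ENNReal.toReal_nonneg)
      (Finset.prod_nonneg fun i _ => div_nonneg ENNReal.toReal_nonneg ENNReal.toReal_nonneg)
  have ht0 : ∀ f g, t f g = 0 → m f g = 0 := by
    intro f g h
    rcases mul_eq_zero.mp h with h | h
    · obtain ⟨β, _, hβ⟩ := Finset.prod_eq_zero_iff.mp h
      exact le_antisymm (hβ ▸ hm_le_β f g β) (hm_nonneg f g)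
    · obtain ⟨i, _, hi⟩ := Finset.prod_eq_zero_iff.mp h
      rcases div_eq_zero_iff.mp hi with h2 | h2
      · exact le_antisymm (h2 ▸ hm_le_num f g i) (hm_nonneg f g)
      · exact le_antisymm (h2 ▸ hm_le_q f g) (hm_nonneg f g)
  have hsum_c : ∀ i g, ∑ a, c i a g ≤ 1 := by
    intro i g
    rw [hcdef]
    simp only
    rw [← Finset.sum_div, hAmarg i g]
    rcases eq_or_ne (q g) 0 with h | h
    · rw [h]; simp
    · rw [div_self h]
  have hsum_t : ∑ f, ∑ g, t f g ≤ ∑ f, ∑ g, m f g := by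
    rw [hsum_m, Finset.sum_comm]
    have hg : ∀ g : {β // β ∈ F} → Fin r, ∑ f, t f g
        = (∏ β : {β // β ∈ F}, (μ ((β : Fin r → Set X) (g β))).toReal) * ∏ i, ∑ a, c i a g := by
      intro g
      calc ∑ f, t f g
          = (∏ β : {β // β ∈ F}, (μ ((β : Fin r → Set X) (g β))).toReal) *
            ∑ f : Fin n → Fin r, ∏ i, c i (f i) g := by
            rw [Finset.mul_sum]
        _ = (∏ β : {β // β ∈ F}, (μ ((β : Fin r → Set X) (g β))).toReal) *
            ∏ i, ∑ a, c i a g := by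
            congr 1
            rw [Finset.prod_univ_sum, Fintype.piFinset_univ]
    calc ∑ g, ∑ f, t f g
        ≤ ∑ g : {β // β ∈ F} → Fin r,
            ∏ β : {β // β ∈ F}, (μ ((β : Fin r → Set X) (g β))).toReal := by
          refine Finset.sum_le_sum fun g _ => ?_
          rw [hg g]
          refine mul_le_of_le_one_right (Finset.prod_nonneg fun β _ => ENNReal.toReal_nonneg) ?_
          refine Finset.prod_le_one (fun i _ => Finset.sum_nonneg fun a _ =>
            div_nonneg ENNReal.toReal_nonneg ENNReal.toReal_nonneg) (fun i _ => hsum_c i g)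
      _ = ∏ β : {β // β ∈ F}, ∑ b, (μ ((β : Fin r → Set X) b)).toReal := by
          rw [Finset.prod_univ_sum, Fintype.piFinset_univ]
      _ = 1 := by
          rw [Finset.prod_congr rfl fun β _ => hβmarg β, Finset.prod_const_one]
  have step2 : ∑ f, ∑ g, Real.negMulLog (m f g) ≤ ∑ f, ∑ g, -(m f g * Real.log (t f g)) := by
    have := gibbs (γ := (Fin n → Fin r) × ({β // β ∈ F} → Fin r))
      (fun fg => m fg.1 fg.2) (fun fg => t fg.1 fg.2)
      (fun fg => hm_nonneg fg.1 fg.2) (fun fg => ht_nonneg fg.1 fg.2)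
      (fun fg => ht0 fg.1 fg.2)
      (by rw [Fintype.sum_prod_type, Fintype.sum_prod_type]; exact hsum_t)
    rw [Fintype.sum_prod_type, Fintype.sum_prod_type] at this
    exact this
  -- Step 3: split the logarithm
  have hlogsplit : ∀ f g, -(m f g * Real.log (t f g)) =
      (∑ β : {β // β ∈ F}, m f g * (-Real.log ((μ ((β : Fin r → Set X) (g β))).toReal))) +
      ∑ i, m f g * (-Real.log (c i (f i) g)) := by
    intro f g
    rcases eq_or_ne (m f g) 0 with h | h
    · rw [h]; simp
    · have hmpos : 0 < m f g := (hm_nonneg f g).lt_of_ne' h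
      have hβne : ∀ β : {β // β ∈ F}, ((μ ((β : Fin r → Set X) (g β))).toReal) ≠ 0 :=
        fun β => (lt_of_lt_of_le hmpos (hm_le_β f g β)).ne'
      have hcne : ∀ i, c i (f i) g ≠ 0 := by
        intro i
        have hnum : 0 < (μ (A i (f i) ∩ QB g)).toReal := lt_of_lt_of_le hmpos (hm_le_num f g i)
        have hq : 0 < q g := lt_of_lt_of_le hmpos (hm_le_q f g)
        exact (div_pos hnum hq).ne'
    -- expand log of the product
      have ht_eq : Real.log (t f g) =
          (∑ β : {β // β ∈ F}, Real.log ((μ ((β : Fin r → Set X) (g β))).toReal)) +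
          ∑ i, Real.log (c i (f i) g) := by
        rw [htdef]
        simp only
        rw [Real.log_mul (Finset.prod_ne_zero_iff.mpr fun β _ => hβne β)
          (Finset.prod_ne_zero_iff.mpr fun i _ => hcne i),
          Real.log_prod (fun β _ => hβne β), Real.log_prod (fun i _ => hcne i)]
      rw [ht_eq]
      simp only [mul_neg, Finset.sum_neg_distrib, ← Finset.mul_sum]
      ring
  -- rearrange into the two main terms
  have step3 : ∑ f, ∑ g, -(m f g * Real.log (t f g)) =
      (∑ β : {β // β ∈ F}, ∑ g : {β // β ∈ F} → Fin r,
        q g * (-Real.log ((μ ((β : Fin r → Set X) (g β))).toReal)))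
      + ∑ i, ∑ g : {β // β ∈ F} → Fin r, ∑ a,
          (μ (A i a ∩ QB g)).toReal * (-Real.log (c i a g)) := by
    rw [Finset.sum_congr rfl fun f _ => Finset.sum_congr rfl fun g _ => hlogsplit f g]
    rw [Finset.sum_congr rfl fun f _ => Finset.sum_add_distrib, Finset.sum_add_distrib]
    congr 1
    · -- first piece
      calc ∑ f : Fin n → Fin r, ∑ g : {β // β ∈ F} → Fin r, ∑ β : {β // β ∈ F},
              m f g * (-Real.log ((μ ((β : Fin r → Set X) (g β))).toReal))
          = ∑ g : {β // β ∈ F} → Fin r, ∑ f : Fin n → Fin r, ∑ β : {β // β ∈ F},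
              m f g * (-Real.log ((μ ((β : Fin r → Set X) (g β))).toReal)) :=
            Finset.sum_comm
        _ = ∑ g : {β // β ∈ F} → Fin r, ∑ β : {β // β ∈ F}, ∑ f : Fin n → Fin r,
              m f g * (-Real.log ((μ ((β : Fin r → Set X) (g β))).toReal)) :=
            Finset.sum_congr rfl fun g _ => Finset.sum_comm
        _ = ∑ g : {β // β ∈ F} → Fin r, ∑ β : {β // β ∈ F},
              q g * (-Real.log ((μ ((β : Fin r → Set X) (g β))).toReal)) := by
            refine Finset.sum_congr rfl fun g _ => Finset.sum_congr rfl fun β _ => ?_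
            rw [← Finset.sum_mul, hcol g]
        _ = ∑ β : {β // β ∈ F}, ∑ g : {β // β ∈ F} → Fin r,
              q g * (-Real.log ((μ ((β : Fin r → Set X) (g β))).toReal)) :=
            Finset.sum_comm
    · -- second piece
      calc ∑ f : Fin n → Fin r, ∑ g : {β // β ∈ F} → Fin r, ∑ i,
              m f g * (-Real.log (c i (f i) g))
          = ∑ g : {β // β ∈ F} → Fin r, ∑ f : Fin n → Fin r, ∑ i,
              m f g * (-Real.log (c i (f i) g)) := Finset.sum_comm
        _ = ∑ g : {β // β ∈ F} → Fin r, ∑ i, ∑ f : Fin n → Fin r,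
              m f g * (-Real.log (c i (f i) g)) :=
            Finset.sum_congr rfl fun g _ => Finset.sum_comm
        _ = ∑ i, ∑ g : {β // β ∈ F} → Fin r, ∑ f : Fin n → Fin r,
              m f g * (-Real.log (c i (f i) g)) := Finset.sum_comm
        _ = ∑ i, ∑ g : {β // β ∈ F} → Fin r, ∑ a,
              (μ (A i a ∩ QB g)).toReal * (-Real.log (c i a g)) := by
            refine Finset.sum_congr rfl fun i _ => Finset.sum_congr rfl fun g _ => ?_
            calc ∑ f, m f g * (-Real.log (c i (f i) g))
                = ∑ f : Fin n → Fin r, ∑ a,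
                    (μ (A i a ∩ (PA f ∩ QB g))).toReal * (-Real.log (c i a g)) := by
                  refine Finset.sum_congr rfl fun f _ => ?_
                  exact single_expand μ (A i) (hA i).2.1 (f i) (PA f ∩ QB g)
                    (Set.inter_subset_left.trans (hPAsub f i)) (fun a => -Real.log (c i a g))
              _ = ∑ a, ∑ f : Fin n → Fin r,
                    (μ ((A i a ∩ QB g) ∩ PA f)).toReal * (-Real.log (c i a g)) := by
                  rw [Finset.sum_comm]
                  refine Finset.sum_congr rfl fun a _ => Finset.sum_congr rfl fun f _ => ?_
                  rw [Set.inter_comm (PA f) (QB g), ← Set.inter_assoc]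
              _ = ∑ a, (μ (A i a ∩ QB g)).toReal * (-Real.log (c i a g)) := by
                  refine Finset.sum_congr rfl fun a _ => ?_
                  rw [← Finset.sum_mul, sum_measure_inter μ PA hPA (A i a ∩ QB g)
                    (((hA i).1 a).inter (hQB.1 g))]
  -- T1 : the F part
  have hT1 : ∀ β : {β // β ∈ F},
      ∑ g : {β // β ∈ F} → Fin r, q g * (-Real.log ((μ ((β : Fin r → Set X) (g β))).toReal))
        = partEntropy μ (β : Fin r → Set X) := by
    intro β
    have hβpart := hF (β : Fin r → Set X) β.2
    calc ∑ g : {β // β ∈ F} → Fin r, q g * (-Real.log ((μ ((β : Fin r → Set X) (g β))).toReal))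
        = ∑ g : {β // β ∈ F} → Fin r, ∑ b, ((μ ((β : Fin r → Set X) b ∩ QB g)).toReal *
            (-Real.log ((μ ((β : Fin r → Set X) b)).toReal))) := by
          refine Finset.sum_congr rfl fun g _ => ?_
          exact single_expand μ (β : Fin r → Set X) hβpart.2.1 (g β) (QB g) (hQBsub g β)
            (fun b => -Real.log ((μ ((β : Fin r → Set X) b)).toReal))
      _ = ∑ b, (∑ g : {β // β ∈ F} → Fin r, (μ ((β : Fin r → Set X) b ∩ QB g)).toReal) *
            (-Real.log ((μ ((β : Fin r → Set X) b)).toReal)) := by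
          rw [Finset.sum_comm]
          exact Finset.sum_congr rfl fun b _ => (Finset.sum_mul _ _ _).symm
      _ = ∑ b, (μ ((β : Fin r → Set X) b)).toReal *
            (-Real.log ((μ ((β : Fin r → Set X) b)).toReal)) := by
          refine Finset.sum_congr rfl fun b _ => ?_
          rw [sum_measure_inter μ QB hQB _ (hβpart.1 b)]
      _ = partEntropy μ (β : Fin r → Set X) := by
          unfold partEntropy
          refine Finset.sum_congr rfl fun b _ => ?_
          rw [Real.negMulLog]
          ring
  -- T2 : the conditional entropy part
  have hT2 : ∀ i, ∑ g : {β // β ∈ F} → Fin r, ∑ a,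
      (μ (A i a ∩ QB g)).toReal * (-Real.log (c i a g)) ≤ condEntropy' μ (A i) (B i) := by
    intro i
    have hβpart : IsPartition μ (B i) := hF (B i) (hBF i)
    set k₀ : {β // β ∈ F} := ⟨B i, hBF i⟩ with hk₀def
    have hterm : ∀ (g : {β // β ∈ F} → Fin r) a,
        (μ (A i a ∩ QB g)).toReal * (-Real.log (c i a g)) = q g * Real.negMulLog (c i a g) := by
      intro g a
      rcases eq_or_ne (q g) 0 with h | h
      · have hnum : (μ (A i a ∩ QB g)).toReal = 0 :=
          le_antisymm (h ▸ toReal_mono' μ Set.inter_subset_right) ENNReal.toReal_nonneg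
        rw [hnum, h]; simp
      · rw [Real.negMulLog, hcdef]
        simp only
        field_simp
    have hfib : ∀ (S : Set X), MeasurableSet S → ∀ b : Fin r,
        ∑ g ∈ Finset.univ.filter (fun g : {β // β ∈ F} → Fin r => g k₀ = b),
          (μ (S ∩ QB g)).toReal = (μ (S ∩ B i b)).toReal := by
      intro S hS b
      rw [Finset.sum_filter]
      have hcell : ∀ g : {β // β ∈ F} → Fin r,
          (if g k₀ = b then (μ (S ∩ QB g)).toReal else 0)
            = (μ ((S ∩ B i b) ∩ QB g)).toReal := by
        intro g
        by_cases h : g k₀ = b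
        · rw [if_pos h]
          have hQβ : QB g ⊆ B i b := by
            have := hQBsub g k₀
            rw [h] at this
            exact this
          have hset : S ∩ QB g = (S ∩ B i b) ∩ QB g := by
            ext x
            constructor
            · rintro ⟨hxS, hxQ⟩
              exact ⟨⟨hxS, hQβ hxQ⟩, hxQ⟩
            · rintro ⟨⟨hxS, _⟩, hxQ⟩
              exact ⟨hxS, hxQ⟩
          rw [hset]
        · rw [if_neg h]
          have hd : Disjoint (B i b) (B i (g k₀)) := hβpart.2.1 (Ne.symm h)
          have hsub : (S ∩ B i b) ∩ QB g ⊆ (∅ : Set X) := by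
            rintro x ⟨⟨_, hxb⟩, hxQ⟩
            exact (Set.disjoint_left.mp hd hxb) (hQBsub g k₀ hxQ)
          rw [measure_mono_null hsub measure_empty]
          simp
      rw [Finset.sum_congr rfl fun g _ => hcell g]
      exact sum_measure_inter μ QB hQB (S ∩ B i b) (hS.inter (hβpart.1 b))
    have hq_le : ∀ (g : {β // β ∈ F} → Fin r) a, (μ (A i a ∩ QB g)).toReal ≤ q g :=
      fun g a => toReal_mono' μ Set.inter_subset_right
    calc ∑ g : {β // β ∈ F} → Fin r, ∑ a,
            (μ (A i a ∩ QB g)).toReal * (-Real.log (c i a g))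
        = ∑ a, ∑ g : {β // β ∈ F} → Fin r, q g * Real.negMulLog (c i a g) := by
          rw [Finset.sum_comm]
          exact Finset.sum_congr rfl fun a _ => Finset.sum_congr rfl fun g _ => hterm g a
      _ = ∑ a, ∑ b, ∑ g ∈ Finset.univ.filter (fun g : {β // β ∈ F} → Fin r => g k₀ = b),
            q g * Real.negMulLog (c i a g) := by
          exact Finset.sum_congr rfl fun a _ => (Finset.sum_fiberwise _ _ _).symm
      _ ≤ ∑ a, ∑ b, (μ (B i b)).toReal *
            Real.negMulLog ((μ (A i a ∩ B i b)).toReal / (μ (B i b)).toReal) := by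
          refine Finset.sum_le_sum fun a _ => Finset.sum_le_sum fun b _ => ?_
          have hls := condLS (Finset.univ.filter (fun g : {β // β ∈ F} → Fin r => g k₀ = b))
            (fun g => (μ (A i a ∩ QB g)).toReal) q
            (fun g _ => ENNReal.toReal_nonneg) (fun g _ => hq_le g a)
          have e1 : ∑ g ∈ Finset.univ.filter (fun g : {β // β ∈ F} → Fin r => g k₀ = b),
              q g = (μ (B i b)).toReal := by
            have := hfib Set.univ MeasurableSet.univ b
            rw [Set.univ_inter] at this
            rw [← this]
            exact Finset.sum_congr rfl fun g _ => by rw [Set.univ_inter]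
          have e2 : ∑ g ∈ Finset.univ.filter (fun g : {β // β ∈ F} → Fin r => g k₀ = b),
              (μ (A i a ∩ QB g)).toReal = (μ (A i a ∩ B i b)).toReal :=
            hfib (A i a) ((hA i).1 a) b
          rw [e1, e2] at hls
          exact hls
      _ = ∑ b, (μ (B i b)).toReal * ∑ a, Real.negMulLog (condProb μ (A i a) (B i b)) := by
          rw [Finset.sum_comm]
          refine Finset.sum_congr rfl fun b _ => ?_
          rw [Finset.mul_sum]
          refine Finset.sum_congr rfl fun a _ => ?_
          rcases eq_or_ne (μ (B i b)) 0 with h | h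
          · rw [condProb, if_pos h, h]
            simp
          · rw [condProb, if_neg h]
      _ = condEntropy' μ (A i) (B i) := rfl
  -- assembly
  calc jointEntropy μ A ≤ ∑ f, ∑ g, Real.negMulLog (m f g) := step1
    _ ≤ ∑ f, ∑ g, -(m f g * Real.log (t f g)) := step2
    _ = (∑ β : {β // β ∈ F}, ∑ g : {β // β ∈ F} → Fin r,
          q g * (-Real.log ((μ ((β : Fin r → Set X) (g β))).toReal)))
        + ∑ i, ∑ g : {β // β ∈ F} → Fin r, ∑ a,
            (μ (A i a ∩ QB g)).toReal * (-Real.log (c i a g)) := step3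
    _ ≤ (∑ β ∈ F, partEntropy μ β) + ∑ i, condEntropy' μ (A i) (B i) := by
        refine add_le_add ?_ (Finset.sum_le_sum fun i _ => hT2 i)
        rw [Finset.sum_congr rfl fun β _ => hT1 β]
        rw [← Finset.sum_coe_sort F (fun β => partEntropy μ β)]


end MPE

/-- If `K ⊆ 𝔓_r` is precompact in the Rokhlin metric `ρ`,
then the maximal pattern entropy `h*_μ(K)` is zero. -/
theorem maxPatternEntropy_eq_zero_of_precompact (μ : Measure X) [IsProbabilityMeasure μ]
    {r : ℕ} (hr : 2 ≤ r) (K : Set (Fin r → Set X)) (hK : ∀ α ∈ K, IsPartition μ α)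
    (hpre : TotBddIn (rokhlinDist μ) K) :
    maxPatternEntropy μ K = 0 := by
  classical
  rcases Set.eq_empty_or_nonempty K with hKe | ⟨α₀, hα₀⟩
  · -- K is empty
    have hev : (fun n : ℕ => patternSup μ K n / n) =ᶠ[atTop] fun _ => (0 : ℝ) := by
      filter_upwards [eventually_ge_atTop 1] with n hn
      have hset : {H : ℝ | ∃ A : Fin n → Fin r → Set X, (∀ i, A i ∈ K) ∧ H = jointEntropy μ A}
          = ∅ := by
        ext H
        constructor
        · rintro ⟨A, hA, -⟩
          have := hA ⟨0, Nat.lt_of_lt_of_le Nat.zero_lt_one hn⟩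
          rw [hKe] at this
          exact this
        · intro h
          exact absurd h (Set.notMem_empty H)
      have : patternSup μ K n = 0 := by
        unfold patternSup
        rw [hset, Real.sSup_empty]
      rw [this, zero_div]
    unfold maxPatternEntropy
    rw [limsup_congr hev]
    exact limsup_const 0
  · -- K is nonempty
    have bound : ∀ ε : ℝ, 0 < ε → ∃ C : ℝ, 0 ≤ C ∧ ∀ n : ℕ,
        ∀ H ∈ {H : ℝ | ∃ A : Fin n → Fin r → Set X, (∀ i, A i ∈ K) ∧ H = jointEntropy μ A},
          H ≤ C + n * (ε / 2) := by
      intro ε hε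
      obtain ⟨F, hFK, hcov⟩ := hpre (ε / 2) (by linarith)
      refine ⟨∑ β ∈ F, partEntropy μ β,
        Finset.sum_nonneg fun β _ => MPE.partEntropy_nonneg μ β, ?_⟩
      intro n H hH
      obtain ⟨A, hAK, rfl⟩ := hH
      choose B hBF hBd using fun i => hcov (A i) (hAK i)
      have hkey := MPE.key μ F (fun β hβ => hK β (hFK hβ)) A (fun i => hK _ (hAK i)) B hBF
      refine hkey.trans (add_le_add_right ?_ _)
      calc ∑ i, condEntropy' μ (A i) (B i) ≤ ∑ _i : Fin n, ε / 2 := by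
            refine Finset.sum_le_sum fun i _ => ?_
            exact ((MPE.condEntropy'_le_rokhlinDist μ (A i) (B i)).trans_lt (hBd i)).le
        _ = n * (ε / 2) := by
            rw [Finset.sum_const, Finset.card_univ, Fintype.card_fin, nsmul_eq_mul]
    have hpsup : ∀ ε : ℝ, 0 < ε → ∃ C : ℝ, 0 ≤ C ∧ ∀ n : ℕ,
        patternSup μ K n ≤ C + n * (ε / 2) := by
      intro ε hε
      obtain ⟨C, hC0, hC⟩ := bound ε hε
      exact ⟨C, hC0, fun n => Real.sSup_le (hC n) (add_nonneg hC0 (by positivity))⟩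
    have hf0 : ∀ n : ℕ, 0 ≤ patternSup μ K n / n := by
      intro n
      refine div_nonneg ?_ (Nat.cast_nonneg n)
      obtain ⟨C, hC0, hC⟩ := bound 1 one_pos
      have hbdd : BddAbove {H : ℝ | ∃ A : Fin n → Fin r → Set X,
          (∀ i, A i ∈ K) ∧ H = jointEntropy μ A} :=
        ⟨C + n * (1 / 2), fun H hH => hC n H hH⟩
      have hmem : jointEntropy μ (fun _ : Fin n => α₀) ∈ {H : ℝ | ∃ A : Fin n → Fin r → Set X,
          (∀ i, A i ∈ K) ∧ H = jointEntropy μ A} := ⟨_, fun _ => hα₀, rfl⟩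
      exact (MPE.jointEntropy_nonneg μ _).trans (le_csSup hbdd hmem)
    have hbddf : IsBoundedUnder (· ≤ ·) atTop (fun n : ℕ => patternSup μ K n / n) := by
      obtain ⟨C, hC0, hC⟩ := hpsup 1 one_pos
      refine isBoundedUnder_of ⟨C + 1, fun n => ?_⟩
      rcases Nat.eq_zero_or_pos n with rfl | hn
      · simp only [Nat.cast_zero, div_zero]
        linarith
      · have hnR : (0 : ℝ) < n := by exact_mod_cast hn
        have h1 : patternSup μ K n / n ≤ (C + n * (1 / 2)) / n :=
          (div_le_div_iff_of_pos_right hnR).mpr (hC n)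
        have h2 : (C + n * (1 / 2)) / n = C / n + 1 / 2 := by
          rw [add_div, mul_div_cancel_left₀ _ hnR.ne']
        have h3 : C / n ≤ C := div_le_self hC0 (by exact_mod_cast hn)
        linarith
    have hle : ∀ ε : ℝ, 0 < ε → limsup (fun n : ℕ => patternSup μ K n / n) atTop ≤ ε := by
      intro ε hε
      obtain ⟨C, hC0, hC⟩ := hpsup ε hε
      have hg : Tendsto (fun n : ℕ => C * (1 / (n : ℝ)) + ε / 2) atTop (𝓝 (ε / 2)) := by
        have h1 := (tendsto_one_div_atTop_nhds_zero_nat.const_mul C).add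
          (tendsto_const_nhds (x := ε / 2))
        simpa using h1
      have hfg : (fun n : ℕ => patternSup μ K n / n) ≤ᶠ[atTop]
          fun n : ℕ => C * (1 / (n : ℝ)) + ε / 2 := by
        filter_upwards [eventually_ge_atTop 1] with n hn
        have hnR : (0 : ℝ) < n := by exact_mod_cast hn
        have h1 : patternSup μ K n / n ≤ (C + n * (ε / 2)) / n :=
          (div_le_div_iff_of_pos_right hnR).mpr (hC n)
        have h2 : (C + n * (ε / 2)) / n = C * (1 / n) + ε / 2 := by
          rw [add_div, mul_div_cancel_left₀ _ hnR.ne', mul_one_div]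
        linarith
      have hbb : IsBoundedUnder (· ≥ ·) atTop (fun n : ℕ => patternSup μ K n / n) :=
        isBoundedUnder_of ⟨0, fun n => hf0 n⟩
      have hcb : IsCoboundedUnder (· ≤ ·) atTop (fun n : ℕ => patternSup μ K n / n) :=
        hbb.isCoboundedUnder_le
      calc limsup (fun n : ℕ => patternSup μ K n / n) atTop
          ≤ limsup (fun n : ℕ => C * (1 / (n : ℝ)) + ε / 2) atTop :=
            limsup_le_limsup hfg hcb hg.isBoundedUnder_le
        _ = ε / 2 := hg.limsup_eq
        _ ≤ ε := by linarith
    have hge : 0 ≤ limsup (fun n : ℕ => patternSup μ K n / n) atTop :=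
      le_limsup_of_frequently_le (Filter.Frequently.of_forall hf0) hbddf
    unfold maxPatternEntropy
    refine le_antisymm ?_ hge
    by_contra hpos
    push_neg at hpos
    have := hle (limsup (fun n : ℕ => patternSup μ K n / n) atTop / 2) (by linarith)
    linarith
end

section
/- If a subset K of 𝔓_r has zero maximal pattern entropy, then K is precompact in the Rokhlin metric. Equivalently: if K is not precompact in ρ̃, then there exist δ > 0 and a sequence (α_{n_i}) in K with H_μ(α_{n_i} | ⋁_{j<i} α_{n_j}) ≥ δ for all i ≥ 2, whence the sequence entropy of (α_{n_i}) is at least δ > 0. -/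
open MeasureTheory Filter Real Topology
open scoped symmDiff ENNReal

variable {X : Type*} [MeasurableSpace X]

namespace Aux6


lemma negMulLog_le_one_sub {x : ℝ} (hx : 0 ≤ x) : Real.negMulLog x ≤ 1 - x := by
  rcases eq_or_lt_of_le hx with h | h
  · simp [← h]
  · have h1 : Real.log (1 / x) ≤ 1 / x - 1 := Real.log_le_sub_one_of_pos (by positivity)
    have h2 : Real.log (1 / x) = - Real.log x := by
      rw [one_div, Real.log_inv]
    have : x * Real.log (1 / x) ≤ x * (1 / x - 1) := by
      exact mul_le_mul_of_nonneg_left h1 hx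
    rw [h2] at this
    have hxx : x * (1 / x) = 1 := by field_simp
    simp only [Real.negMulLog]
    nlinarith

lemma negMulLog_one_sub_le {e : ℝ} (h0 : 0 ≤ e) (h1 : e ≤ 1) :
    Real.negMulLog (1 - e) ≤ e := by
  rcases eq_or_lt_of_le h1 with h | h
  · rw [h]; simp
  · have hpos : 0 < 1 - e := by linarith
    have h2 : Real.log (1 / (1 - e)) ≤ 1 / (1 - e) - 1 := Real.log_le_sub_one_of_pos (by positivity)
    have h3 : Real.log (1 / (1 - e)) = - Real.log (1 - e) := by rw [one_div, Real.log_inv]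
    rw [h3] at h2
    have h4 : (1 - e) * (- Real.log (1 - e)) ≤ (1 - e) * (1 / (1 - e) - 1) :=
      mul_le_mul_of_nonneg_left h2 (le_of_lt hpos)
    have h5 : (1 - e) * (1 / (1 - e) - 1) = e := by field_simp; ring
    simp only [Real.negMulLog]
    nlinarith

lemma negMulLog_le_two_sqrt {e : ℝ} (h0 : 0 ≤ e) : Real.negMulLog e ≤ 2 * Real.sqrt e := by
  rcases eq_or_lt_of_le h0 with h | h
  · simp [← h]
  · have hs : 0 < Real.sqrt e := Real.sqrt_pos.2 h
    have h1 : Real.log (1 / Real.sqrt e) ≤ 1 / Real.sqrt e - 1 :=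
      Real.log_le_sub_one_of_pos (by positivity)
    have h2 : Real.log (1 / Real.sqrt e) = - (Real.log e / 2) := by
      rw [one_div, Real.log_inv, Real.log_sqrt h0]
    rw [h2] at h1
    have h3 : e * (- (Real.log e / 2)) ≤ e * (1 / Real.sqrt e - 1) :=
      mul_le_mul_of_nonneg_left h1 h0
    have h4 : e / Real.sqrt e = Real.sqrt e := Real.div_sqrt
    have h5 : e * (1 / Real.sqrt e) = Real.sqrt e := by
      rw [mul_one_div, h4]
    simp only [Real.negMulLog]
    nlinarith [Real.sqrt_nonneg e]

lemma sum_negMulLog_le_card {ι : Type*} (s : Finset ι) (c : ι → ℝ) (h : ∀ i ∈ s, 0 ≤ c i) :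
    ∑ i ∈ s, Real.negMulLog (c i) ≤
      (∑ i ∈ s, c i) * Real.log s.card + Real.negMulLog (∑ i ∈ s, c i) := by
  set e := ∑ i ∈ s, c i with he
  have he0 : 0 ≤ e := Finset.sum_nonneg h
  rcases eq_or_lt_of_le he0 with heq | hpos
  · have hL : ∑ i ∈ s, Real.negMulLog (c i) = 0 :=
      Finset.sum_eq_zero fun i hi => by
        rw [(Finset.sum_eq_zero_iff_of_nonneg h).1 heq.symm i hi, Real.negMulLog_zero]
    rw [hL, ← heq]
    simp
  · have hsne : s.Nonempty := by
      by_contra hc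
      rw [Finset.not_nonempty_iff_eq_empty] at hc
      rw [hc] at he
      simp at he
      rw [he] at hpos; exact lt_irrefl _ hpos
    have hN : (0 : ℝ) < s.card := by
      have := Finset.card_pos.2 hsne
      exact_mod_cast this
    have key : ∀ i ∈ s, Real.negMulLog (c i) ≤
        c i * (Real.log s.card - Real.log e - 1) + e / s.card := by
      intro i hi
      rcases eq_or_lt_of_le (h i hi) with hc0 | hc0
      · rw [← hc0, Real.negMulLog_zero]
        have : 0 ≤ e / (s.card : ℝ) := by positivity
        linarith
      · have harg : 0 < e / (c i * s.card) := by positivity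
        have h1 : Real.log (e / (c i * s.card)) ≤ e / (c i * s.card) - 1 :=
          Real.log_le_sub_one_of_pos harg
        have h2 : Real.log (e / (c i * s.card)) =
            Real.log e - Real.log (c i) - Real.log s.card := by
          rw [Real.log_div (ne_of_gt hpos) (by positivity), Real.log_mul (ne_of_gt hc0) (ne_of_gt hN)]
          ring
        rw [h2] at h1
        have h3 : c i * (Real.log e - Real.log (c i) - Real.log s.card) ≤
            c i * (e / (c i * s.card) - 1) := mul_le_mul_of_nonneg_left h1 (le_of_lt hc0)
        have h4 : c i * (e / (c i * s.card)) = e / s.card := by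
          field_simp
        simp only [Real.negMulLog]
        nlinarith
    calc ∑ i ∈ s, Real.negMulLog (c i)
        ≤ ∑ i ∈ s, (c i * (Real.log s.card - Real.log e - 1) + e / s.card) :=
          Finset.sum_le_sum key
      _ = e * (Real.log s.card - Real.log e - 1) + (s.card : ℝ) * (e / s.card) := by
          rw [Finset.sum_add_distrib, ← Finset.sum_mul, Finset.sum_const, nsmul_eq_mul, ← he]
      _ = e * Real.log s.card + Real.negMulLog e := by
          simp only [Real.negMulLog]
          field_simp
          ring

lemma negMulLog_sum_le {ι : Type*} (s : Finset ι) (c : ι → ℝ) (h : ∀ i ∈ s, 0 ≤ c i) :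
    Real.negMulLog (∑ i ∈ s, c i) ≤ ∑ i ∈ s, Real.negMulLog (c i) := by
  set e := ∑ i ∈ s, c i with he
  have he0 : 0 ≤ e := Finset.sum_nonneg h
  rcases eq_or_lt_of_le he0 with heq | hpos
  · rw [← heq, Real.negMulLog_zero]
    exact Finset.sum_nonneg fun i hi => Real.negMulLog_nonneg (h i hi)
      (by
        have h1 := Finset.single_le_sum h hi
        rw [← he, ← heq] at h1
        linarith)
  · have key : ∀ i ∈ s, c i * (- Real.log e) ≤ Real.negMulLog (c i) := by
      intro i hi
      rcases eq_or_lt_of_le (h i hi) with hc0 | hc0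
      · simp [← hc0]
      · have hle : c i ≤ e := Finset.single_le_sum h hi
        have : Real.log (c i) ≤ Real.log e := Real.log_le_log hc0 hle
        simp only [Real.negMulLog, neg_mul]
        nlinarith
    calc Real.negMulLog e = (∑ i ∈ s, c i) * (- Real.log e) := by
          simp only [Real.negMulLog, ← he]; ring
      _ = ∑ i ∈ s, c i * (- Real.log e) := Finset.sum_mul _ _ _
      _ ≤ ∑ i ∈ s, Real.negMulLog (c i) := Finset.sum_le_sum key


lemma measure_iUnion_fintype' {ι : Type*} [Fintype ι] (μ : Measure X) {A : ι → Set X}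
    (hd : Pairwise (Function.onFun Disjoint A)) (hm : ∀ i, MeasurableSet (A i)) :
    μ (⋃ i, A i) = ∑ i, μ (A i) := by
  rw [measure_iUnion hd hm, tsum_fintype]

lemma sum_toReal_measure_le_one {ι : Type*} [Fintype ι] (μ : Measure X) [IsProbabilityMeasure μ]
    {A : ι → Set X} (hd : Pairwise (Function.onFun Disjoint A)) (hm : ∀ i, MeasurableSet (A i)) :
    ∑ i, (μ (A i)).toReal ≤ 1 := by
  rw [← ENNReal.toReal_sum (fun i _ => measure_ne_top μ _), ← measure_iUnion_fintype' μ hd hm]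
  have h1 : μ (⋃ i, A i) ≤ 1 := prob_le_one
  calc (μ (⋃ i, A i)).toReal ≤ (1 : ℝ≥0∞).toReal :=
        ENNReal.toReal_mono (by norm_num) h1
    _ = 1 := by simp

lemma measure_eq_sum_inter {ι : Type*} [Fintype ι] (μ : Measure X) {γ : ι → Set X}
    (hγ : IsPartition μ γ) {B : Set X} (hB : MeasurableSet B) :
    μ B = ∑ j, μ (B ∩ γ j) := by
  have h1 : μ (B ∩ ⋃ j, γ j) = μ B := measure_inter_conull hγ.2.2
  rw [← h1, Set.inter_iUnion]
  rw [measure_iUnion_fintype' μ ?_ (fun j => hB.inter (hγ.1 j))]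
  intro i j hij
  exact Set.disjoint_of_subset Set.inter_subset_right Set.inter_subset_right (hγ.2.1 hij)

lemma condProb_nonneg (μ : Measure X) (A B : Set X) : 0 ≤ condProb μ A B := by
  unfold condProb; split
  · exact le_refl 0
  · positivity

lemma condProb_le_one (μ : Measure X) [IsFiniteMeasure μ] (A B : Set X) :
    condProb μ A B ≤ 1 := by
  unfold condProb; split
  · norm_num
  · rename_i h
    apply div_le_one_of_le₀
    · exact ENNReal.toReal_mono (measure_ne_top μ _) (measure_mono Set.inter_subset_right)
    · exact ENNReal.toReal_nonneg

lemma toReal_mul_condProb (μ : Measure X) [IsFiniteMeasure μ] (A B : Set X) :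
    (μ B).toReal * condProb μ A B = (μ (A ∩ B)).toReal := by
  by_cases h : μ B = 0
  · have h2 : μ (A ∩ B) = 0 := measure_mono_null Set.inter_subset_right h
    simp [condProb, h, h2]
  · have hq : (μ B).toReal ≠ 0 := ENNReal.toReal_ne_zero.2 ⟨h, measure_ne_top μ _⟩
    rw [condProb, if_neg h, mul_comm, div_mul_cancel₀ _ hq]

lemma condProb_sum {ι : Type*} [Fintype ι] (μ : Measure X) [IsFiniteMeasure μ]
    {α : ι → Set X} (hα : IsPartition μ α) {B : Set X} (hB : MeasurableSet B)
    (hB0 : μ B ≠ 0) : ∑ i, condProb μ (α i) B = 1 := by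
  have hq : (μ B).toReal ≠ 0 := ENNReal.toReal_ne_zero.2 ⟨hB0, measure_ne_top μ _⟩
  simp only [condProb, if_neg hB0]
  rw [← Finset.sum_div]
  rw [div_eq_one_iff_eq hq]
  rw [← ENNReal.toReal_sum (fun i _ => measure_ne_top μ _)]
  congr 1
  have := measure_eq_sum_inter μ hα hB
  rw [this]
  exact Finset.sum_congr rfl fun i _ => by rw [Set.inter_comm]

lemma isPartition_join {n r : ℕ} (μ : Measure X) {A : Fin n → Fin r → Set X}
    (hA : ∀ i, IsPartition μ (A i)) :
    IsPartition μ (fun f : Fin n → Fin r => ⋂ i, A i (f i)) := by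
  refine ⟨fun f => MeasurableSet.iInter (fun i => (hA i).1 _), ?_, ?_⟩
  · intro f g hfg
    obtain ⟨i, hi⟩ := Function.ne_iff.1 hfg
    exact Disjoint.mono (Set.iInter_subset _ i) (Set.iInter_subset _ i) ((hA i).2.1 hi)
  · refine measure_mono_null ?_ (measure_iUnion_null fun i => (hA i).2.2)
    intro x hx
    by_contra hc
    simp only [Set.mem_iUnion, Set.mem_compl_iff, not_exists] at hc
    have hf : ∀ i, ∃ j, x ∈ A i j := by
      intro i
      have := hc i
      push_neg at this
      exact this
    choose f hf using hf
    exact hx (Set.mem_iUnion.2 ⟨f, Set.mem_iInter.2 hf⟩)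

lemma chain_rule (μ : Measure X) [IsProbabilityMeasure μ] {n r : ℕ}
    (A : Fin (n + 1) → Fin r → Set X) (hA : ∀ i, IsPartition μ (A i)) :
    jointEntropy μ A =
      condEntropy' μ (A 0) (fun f : Fin n → Fin r => ⋂ i, A (Fin.succ i) (f i)) +
        jointEntropy μ (fun i => A (Fin.succ i)) := by
  set B : (Fin n → Fin r) → Set X := fun f => ⋂ i, A (Fin.succ i) (f i) with hB
  have hBm : ∀ g, MeasurableSet (B g) := fun g => MeasurableSet.iInter fun i => (hA _).1 _
  have hset : ∀ (x : Fin r) (g : Fin n → Fin r),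
      (⋂ i, A i (Fin.cons (α := fun _ => Fin r) x g i)) = A 0 x ∩ B g := by
    intro x g
    ext y
    simp only [Set.mem_iInter, Set.mem_inter_iff, hB]
    constructor
    · intro h
      refine ⟨by simpa using h 0, ?_⟩
      intro i
      simpa [Fin.cons_succ] using h i.succ
    · rintro ⟨h0, hs⟩ i
      refine Fin.cases ?_ ?_ i
      · simpa using h0
      · intro j
        simpa [Fin.cons_succ] using hs j
  have hre : jointEntropy μ A =
      ∑ p : Fin r × (Fin n → Fin r), Real.negMulLog (μ (A 0 p.1 ∩ B p.2)).toReal := by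
    rw [jointEntropy]
    rw [← Equiv.sum_comp (Fin.consEquiv (fun _ : Fin (n + 1) => Fin r))
      (fun f => Real.negMulLog (μ (⋂ i, A i (f i))).toReal)]
    exact Finset.sum_congr rfl fun p _ => by
      simp only [Fin.consEquiv_apply]
      rw [hset p.1 p.2]
  have hcol : ∀ g : Fin n → Fin r,
      (∑ x : Fin r, Real.negMulLog (μ (A 0 x ∩ B g)).toReal) =
        Real.negMulLog (μ (B g)).toReal +
          (μ (B g)).toReal * ∑ x, Real.negMulLog (condProb μ (A 0 x) (B g)) := by
    intro g
    by_cases h0 : μ (B g) = 0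
    · have hz : ∀ x : Fin r, μ (A 0 x ∩ B g) = 0 :=
        fun x => measure_mono_null Set.inter_subset_right h0
      simp [hz, h0]
    · have hrw : ∀ x : Fin r, (μ (A 0 x ∩ B g)).toReal =
          (μ (B g)).toReal * condProb μ (A 0 x) (B g) :=
        fun x => (toReal_mul_condProb μ _ _).symm
      have hsum1 : ∑ x : Fin r, condProb μ (A 0 x) (B g) = 1 :=
        condProb_sum μ (hA 0) (hBm g) h0
      calc (∑ x : Fin r, Real.negMulLog (μ (A 0 x ∩ B g)).toReal)
          = ∑ x : Fin r, (condProb μ (A 0 x) (B g) * Real.negMulLog (μ (B g)).toReal +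
              (μ (B g)).toReal * Real.negMulLog (condProb μ (A 0 x) (B g))) := by
            refine Finset.sum_congr rfl fun x _ => ?_
            rw [hrw x, Real.negMulLog_mul]
        _ = (∑ x : Fin r, condProb μ (A 0 x) (B g)) * Real.negMulLog (μ (B g)).toReal +
              (μ (B g)).toReal * ∑ x, Real.negMulLog (condProb μ (A 0 x) (B g)) := by
            rw [Finset.sum_add_distrib, ← Finset.sum_mul, Finset.mul_sum]
        _ = Real.negMulLog (μ (B g)).toReal +
              (μ (B g)).toReal * ∑ x, Real.negMulLog (condProb μ (A 0 x) (B g)) := by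
            rw [hsum1, one_mul]
  rw [hre, Fintype.sum_prod_type_right]
  rw [Finset.sum_congr rfl fun g _ => hcol g]
  rw [Finset.sum_add_distrib]
  rw [add_comm]
  congr 1


noncomputable def amax {r : ℕ} (hr : 0 < r) (μ : Measure X) (α : Fin r → Set X) (B : Set X) :
    Fin r :=
  (Finset.exists_max_image Finset.univ (fun i => (μ (α i ∩ B)).toReal)
    ⟨⟨0, hr⟩, Finset.mem_univ _⟩).choose

lemma amax_spec {r : ℕ} (hr : 0 < r) (μ : Measure X) (α : Fin r → Set X) (B : Set X) :
    ∀ i, (μ (α i ∩ B)).toReal ≤ (μ (α (amax hr μ α B) ∩ B)).toReal := by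
  have h := (Finset.exists_max_image Finset.univ (fun i => (μ (α i ∩ B)).toReal)
    ⟨⟨0, hr⟩, Finset.mem_univ _⟩).choose_spec
  exact fun i => h.2 i (Finset.mem_univ i)

lemma fano1 {r : ℕ} (hr : 0 < r) {κ : Type*} [Fintype κ] (μ : Measure X) [IsProbabilityMeasure μ]
    {α : Fin r → Set X} (hα : IsPartition μ α) {γ : κ → Set X} (hγm : ∀ j, MeasurableSet (γ j)) :
    Real.log 2 * (∑ j, (μ (γ j \ α (amax hr μ α (γ j)))).toReal) ≤ condEntropy' μ α γ := by
  rw [Finset.mul_sum, condEntropy']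
  refine Finset.sum_le_sum fun j _ => ?_
  set m := amax hr μ α (γ j) with hm
  by_cases h0 : μ (γ j) = 0
  · have h1 : μ (γ j \ α m) = 0 := measure_mono_null Set.diff_subset h0
    simp [h1, h0]
  · have hq : 0 < (μ (γ j)).toReal := ENNReal.toReal_pos h0 (measure_ne_top μ _)
    set q := (μ (γ j)).toReal with hqdef
    set c : Fin r → ℝ := fun i => condProb μ (α i) (γ j) with hc
    have hc0 : ∀ i, 0 ≤ c i := fun i => condProb_nonneg μ _ _
    have hc1 : ∑ i, c i = 1 := condProb_sum μ hα (hγm j) h0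
    have hcm : ∀ i, c i ≤ c m := by
      intro i
      simp only [hc, condProb, if_neg h0]
      rw [div_le_div_iff_of_pos_right hq]
      exact amax_spec hr μ α (γ j) i
    have hcm1 : c m ≤ 1 := by
      rw [← hc1]
      exact Finset.single_le_sum (fun i _ => hc0 i) (Finset.mem_univ m)
    have hdiff : (μ (γ j \ α m)).toReal = q * (1 - c m) := by
      have h1 : μ (γ j ∩ α m) + μ (γ j \ α m) = μ (γ j) := measure_inter_add_diff _ (hα.1 m)
      have h2 : (μ (γ j ∩ α m)).toReal = q * c m := by
        rw [Set.inter_comm]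
        exact (toReal_mul_condProb μ _ _).symm
      have h3 := congrArg ENNReal.toReal h1
      rw [ENNReal.toReal_add (measure_ne_top μ _) (measure_ne_top μ _), h2] at h3
      rw [hqdef] at h3 ⊢
      linarith
    have hinner : (1 - c m) * Real.log 2 ≤ ∑ i, Real.negMulLog (c i) := by
      by_cases hcase : (1 : ℝ) / 2 ≤ c m
      · have h5 : ∑ i ∈ Finset.univ.erase m, c i = 1 - c m := by
          rw [Finset.sum_erase_eq_sub (Finset.mem_univ m), hc1]
        have h4 : Real.negMulLog (1 - c m) ≤ ∑ i ∈ Finset.univ.erase m, Real.negMulLog (c i) := by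
          rw [← h5]
          exact negMulLog_sum_le _ _ (fun i _ => hc0 i)
        have h6 : (1 - c m) * Real.log 2 ≤ Real.negMulLog (1 - c m) := by
          rcases eq_or_lt_of_le (sub_nonneg.2 hcm1) with h | h
          · rw [← h]; simp
          · have h7 : Real.log (1 - c m) ≤ Real.log (1 / 2) := by
              apply Real.log_le_log h
              linarith
            rw [Real.log_div one_ne_zero two_ne_zero, Real.log_one] at h7
            simp only [Real.negMulLog]
            nlinarith
        calc (1 - c m) * Real.log 2 ≤ Real.negMulLog (1 - c m) := h6
          _ ≤ ∑ i ∈ Finset.univ.erase m, Real.negMulLog (c i) := h4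
          _ ≤ ∑ i, Real.negMulLog (c i) := by
              apply Finset.sum_le_sum_of_subset_of_nonneg (Finset.erase_subset _ _)
              intro i _ _
              exact Real.negMulLog_nonneg (hc0 i) (le_trans (hcm i) hcm1)
      · have h7 : ∀ i, c i ≤ 1 / 2 := fun i => le_trans (hcm i) (le_of_not_ge hcase)
        have h8 : ∀ i ∈ Finset.univ (α := Fin r), c i * Real.log 2 ≤ Real.negMulLog (c i) := by
          intro i _
          rcases eq_or_lt_of_le (hc0 i) with h | h
          · rw [← h]; simp
          · have h9 : Real.log (c i) ≤ Real.log (1 / 2) := Real.log_le_log h (h7 i)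
            rw [Real.log_div one_ne_zero two_ne_zero, Real.log_one] at h9
            simp only [Real.negMulLog]
            nlinarith
        calc (1 - c m) * Real.log 2 ≤ 1 * Real.log 2 := by
              apply mul_le_mul_of_nonneg_right _ (Real.log_nonneg one_le_two)
              linarith [hc0 m]
          _ = (∑ i, c i) * Real.log 2 := by rw [hc1]
          _ = ∑ i, c i * Real.log 2 := Finset.sum_mul _ _ _
          _ ≤ ∑ i, Real.negMulLog (c i) := Finset.sum_le_sum h8
    calc Real.log 2 * (μ (γ j \ α m)).toReal = q * ((1 - c m) * Real.log 2) := by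
          rw [hdiff]; ring
      _ ≤ q * ∑ i, Real.negMulLog (c i) := by
          apply mul_le_mul_of_nonneg_left hinner (le_of_lt hq)


/-- The off-diagonal mass between two partitions. -/
noncomputable def offMass {r : ℕ} (μ : Measure X) (α α' : Fin r → Set X) : ℝ :=
  ∑ j, ∑ i ∈ Finset.univ.erase j, (μ (α i ∩ α' j)).toReal

lemma offMass_nonneg {r : ℕ} (μ : Measure X) (α α' : Fin r → Set X) :
    0 ≤ offMass μ α α' :=
  Finset.sum_nonneg fun j _ => Finset.sum_nonneg fun i _ => ENNReal.toReal_nonneg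

lemma offMass_comm {r : ℕ} (μ : Measure X) (α α' : Fin r → Set X) :
    offMass μ α α' = offMass μ α' α := by
  unfold offMass
  rw [Finset.sum_comm' (t' := Finset.univ) (s' := fun i => Finset.univ.erase i)]
  · refine Finset.sum_congr rfl fun j _ => Finset.sum_congr rfl fun i _ => ?_
    rw [Set.inter_comm]
  · intro x y
    simp only [Finset.mem_univ, Finset.mem_erase, true_and, and_true, ne_eq]
    tauto

lemma slink {r : ℕ} {κ : Type*} [Fintype κ] (μ : Measure X) [IsProbabilityMeasure μ]
    {α α' : Fin r → Set X} (hα : IsPartition μ α) (hα' : IsPartition μ α')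
    {γ : κ → Set X} (hγ : IsPartition μ γ) (m : κ → Fin r) :
    offMass μ α α' ≤
      (∑ j, (μ (γ j \ α (m j))).toReal) + (∑ j, (μ (γ j \ α' (m j))).toReal) := by
  have hterm : ∀ p : Fin r × Fin r, (μ (α p.1 ∩ α' p.2)).toReal
      = ∑ k, (μ ((α p.1 ∩ α' p.2) ∩ γ k)).toReal := by
    intro p
    rw [← ENNReal.toReal_sum (fun k _ => measure_ne_top μ _),
      ← measure_eq_sum_inter μ hγ ((hα.1 _).inter (hα'.1 _))]
  unfold offMass
  calc ∑ j, ∑ i ∈ Finset.univ.erase j, (μ (α i ∩ α' j)).toReal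
      = ∑ j, ∑ i ∈ Finset.univ.erase j, ∑ k, (μ ((α i ∩ α' j) ∩ γ k)).toReal := by
        exact Finset.sum_congr rfl fun j _ => Finset.sum_congr rfl fun i _ => hterm (i, j)
    _ = ∑ k : κ, ∑ j, ∑ i ∈ Finset.univ.erase j, (μ ((α i ∩ α' j) ∩ γ k)).toReal := by
        rw [Finset.sum_comm]
        refine Finset.sum_congr rfl fun j _ => Finset.sum_comm
    _ ≤ ∑ k : κ, ((μ (γ k \ α (m k))).toReal + (μ (γ k \ α' (m k))).toReal) := ?_
    _ = _ := Finset.sum_add_distrib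
  refine Finset.sum_le_sum fun k _ => ?_
  -- pass to ℝ≥0∞
  have hmeas : ∀ (j : Fin r) (i : Fin r), MeasurableSet ((α i ∩ α' j) ∩ γ k) :=
    fun j i => ((hα.1 i).inter (hα'.1 j)).inter (hγ.1 k)
  have hEN : ∑ j : Fin r, ∑ i ∈ Finset.univ.erase j, μ ((α i ∩ α' j) ∩ γ k)
      ≤ μ (γ k \ α (m k)) + μ (γ k \ α' (m k)) := by
    -- rewrite double sum as a sum over the off-diagonal sigma-type finset
    have hsub : ∀ (j i : Fin r), i ≠ j → (α i ∩ α' j) ∩ γ k ⊆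
        (γ k \ α (m k)) ∪ (γ k \ α' (m k)) := by
      intro j i hij x hx
      obtain ⟨⟨hxi, hxj⟩, hxk⟩ := hx
      by_cases hi : i = m k
      · right
        refine ⟨hxk, fun hcon => ?_⟩
        have hj : j ≠ m k := by rw [← hi]; exact fun h => hij h.symm
        exact (Set.disjoint_left.mp (hα'.2.1 hj) hxj) hcon
      · left
        refine ⟨hxk, fun hcon => ?_⟩
        exact (Set.disjoint_left.mp (hα.2.1 hi) hxi) hcon
    -- use biUnion over the sigma finset
    classical
    set T : Finset (Fin r × Fin r) := Finset.univ.filter (fun p => p.1 ≠ p.2) with hT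
    have hre : ∑ j : Fin r, ∑ i ∈ Finset.univ.erase j, μ ((α i ∩ α' j) ∩ γ k)
        = ∑ p ∈ T, μ ((α p.1 ∩ α' p.2) ∩ γ k) := by
      rw [Finset.sum_comm' (t' := Finset.univ) (s' := fun i => Finset.univ.erase i)
        (f := fun j i => μ ((α i ∩ α' j) ∩ γ k))]
      · rw [Finset.sum_sigma']
        refine Finset.sum_nbij' (fun p => (p.1, p.2)) (fun p => ⟨p.1, p.2⟩) ?_ ?_ ?_ ?_ ?_ <;>
          simp [hT]
        · exact fun a h1 h2 => h1 h2.symm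
        · exact fun a b h1 h2 => h1 h2.symm
      · intro x y
        simp only [Finset.mem_univ, Finset.mem_erase, true_and, and_true, ne_eq]
        tauto
    rw [hre]
    have hdisj : (↑T : Set (Fin r × Fin r)).PairwiseDisjoint
        (fun p : Fin r × Fin r => (α p.1 ∩ α' p.2) ∩ γ k) := by
      intro p _ p' _ hpp'
      have : p.1 ≠ p'.1 ∨ p.2 ≠ p'.2 := by
        by_contra hcon
        push_neg at hcon
        exact hpp' (Prod.ext hcon.1 hcon.2)
      rcases this with h | h
      · exact Disjoint.mono (le_trans Set.inter_subset_left Set.inter_subset_left)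
          (le_trans Set.inter_subset_left Set.inter_subset_left) (hα.2.1 h)
      · exact Disjoint.mono (le_trans Set.inter_subset_left Set.inter_subset_right)
          (le_trans Set.inter_subset_left Set.inter_subset_right) (hα'.2.1 h)
    rw [← measure_biUnion_finset hdisj (fun p _ => hmeas p.2 p.1)]
    refine le_trans (measure_mono ?_) (measure_union_le _ _)
    intro x hx
    rw [Set.mem_iUnion₂] at hx
    obtain ⟨p, hp, hxp⟩ := hx
    have hp' : p.1 ≠ p.2 := by
      rw [hT] at hp
      simpa using hp
    exact hsub p.2 p.1 hp' hxp
  -- back to toReal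
  calc ∑ j : Fin r, ∑ i ∈ Finset.univ.erase j, (μ ((α i ∩ α' j) ∩ γ k)).toReal
      = (∑ j : Fin r, ∑ i ∈ Finset.univ.erase j, μ ((α i ∩ α' j) ∩ γ k)).toReal := by
        rw [ENNReal.toReal_sum (fun j _ => ?_)]
        · exact Finset.sum_congr rfl fun j _ =>
            (ENNReal.toReal_sum (fun i _ => measure_ne_top μ _)).symm
        · exact (ENNReal.sum_lt_top.2 (fun i _ => (measure_ne_top μ _).lt_top)).ne
    _ ≤ (μ (γ k \ α (m k)) + μ (γ k \ α' (m k))).toReal := by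
        apply ENNReal.toReal_mono _ hEN
        exact (ENNReal.add_lt_top.2 ⟨(measure_ne_top μ _).lt_top,
          (measure_ne_top μ _).lt_top⟩).ne
    _ = (μ (γ k \ α (m k))).toReal + (μ (γ k \ α' (m k))).toReal :=
        ENNReal.toReal_add (measure_ne_top μ _) (measure_ne_top μ _)


lemma fano2 {r : ℕ} (hr : 2 ≤ r) (μ : Measure X) [IsProbabilityMeasure μ]
    {α α' : Fin r → Set X} (hα : IsPartition μ α) (hα' : IsPartition μ α') :
    condEntropy' μ α α' ≤
      offMass μ α α' * (1 + Real.log ((r : ℝ) - 1)) + 2 * Real.sqrt (offMass μ α α') := by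
  have hlogr : 0 ≤ Real.log ((r : ℝ) - 1) := by
    apply Real.log_nonneg
    have : (2 : ℝ) ≤ (r : ℝ) := by exact_mod_cast hr
    linarith
  set s := offMass μ α α' with hs
  have hs0 : 0 ≤ s := offMass_nonneg μ α α'
  set q : Fin r → ℝ := fun j => (μ (α' j)).toReal with hqdef
  have hq0 : ∀ j, 0 ≤ q j := fun j => ENNReal.toReal_nonneg
  set e : Fin r → ℝ := fun j => ∑ i ∈ Finset.univ.erase j, condProb μ (α i) (α' j) with he
  have he0 : ∀ j, 0 ≤ e j :=
    fun j => Finset.sum_nonneg fun i _ => condProb_nonneg μ _ _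
  have hqe : ∀ j, q j * e j = ∑ i ∈ Finset.univ.erase j, (μ (α i ∩ α' j)).toReal := by
    intro j
    rw [he, Finset.mul_sum]
    exact Finset.sum_congr rfl fun i _ => toReal_mul_condProb μ _ _
  have hs_eq : s = ∑ j, q j * e j := by
    rw [hs]
    exact Finset.sum_congr rfl fun j _ => (hqe j).symm
  -- per-row bound
  have hrow : ∀ j, q j * ∑ i, Real.negMulLog (condProb μ (α i) (α' j)) ≤
      (q j * e j) * (1 + Real.log ((r : ℝ) - 1)) + 2 * (q j * Real.sqrt (e j)) := by
    intro j
    by_cases h0 : μ (α' j) = 0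
    · have hqj : q j = 0 := by rw [hqdef]; simp [h0]
      rw [hqj]
      simp
    · have hqj : 0 < q j := ENNReal.toReal_pos h0 (measure_ne_top μ _)
      set c : Fin r → ℝ := fun i => condProb μ (α i) (α' j) with hc
      have hc0 : ∀ i, 0 ≤ c i := fun i => condProb_nonneg μ _ _
      have hc1 : ∑ i, c i = 1 := condProb_sum μ hα (hα'.1 j) h0
      have hej : e j = 1 - c j := by
        rw [he]
        simp only
        rw [Finset.sum_erase_eq_sub (Finset.mem_univ j), hc1]
      have hej1 : e j ≤ 1 := by
        rw [hej]; linarith [hc0 j]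
      -- split inner sum
      have hsplit : ∑ i, Real.negMulLog (c i) =
          Real.negMulLog (c j) + ∑ i ∈ Finset.univ.erase j, Real.negMulLog (c i) :=
        (Finset.add_sum_erase _ _ (Finset.mem_univ j)).symm
      have hcard : ((Finset.univ.erase j).card : ℝ) = (r : ℝ) - 1 := by
        rw [Finset.card_erase_of_mem (Finset.mem_univ j), Finset.card_univ, Fintype.card_fin]
        have : (1 : ℕ) ≤ r := by omega
        push_cast [Nat.cast_sub this]
        ring
      have h1 : ∑ i ∈ Finset.univ.erase j, Real.negMulLog (c i) ≤
          e j * Real.log ((r : ℝ) - 1) + Real.negMulLog (e j) := by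
        have h1' := sum_negMulLog_le_card (Finset.univ.erase j) c (fun i _ => hc0 i)
        rw [hcard] at h1'
        have hee : e j = ∑ i ∈ Finset.univ.erase j, c i := rfl
        rw [hee]
        exact h1'
      have h2 : Real.negMulLog (c j) ≤ e j := by
        have : c j = 1 - e j := by rw [hej]; ring
        rw [this]
        exact negMulLog_one_sub_le (he0 j) hej1
      have h3 : Real.negMulLog (e j) ≤ 2 * Real.sqrt (e j) := negMulLog_le_two_sqrt (he0 j)
      have hinner : ∑ i, Real.negMulLog (c i) ≤
          e j * (1 + Real.log ((r : ℝ) - 1)) + 2 * Real.sqrt (e j) := by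
        rw [hsplit]
        calc Real.negMulLog (c j) + ∑ i ∈ Finset.univ.erase j, Real.negMulLog (c i)
            ≤ e j + (e j * Real.log ((r : ℝ) - 1) + Real.negMulLog (e j)) :=
              add_le_add h2 h1
          _ ≤ e j + (e j * Real.log ((r : ℝ) - 1) + 2 * Real.sqrt (e j)) := by linarith
          _ = e j * (1 + Real.log ((r : ℝ) - 1)) + 2 * Real.sqrt (e j) := by ring
      calc q j * ∑ i, Real.negMulLog (c i)
          ≤ q j * (e j * (1 + Real.log ((r : ℝ) - 1)) + 2 * Real.sqrt (e j)) :=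
            mul_le_mul_of_nonneg_left hinner (le_of_lt hqj)
        _ = (q j * e j) * (1 + Real.log ((r : ℝ) - 1)) + 2 * (q j * Real.sqrt (e j)) := by
            ring
  -- Cauchy–Schwarz
  have hcs : ∑ j, q j * Real.sqrt (e j) ≤ Real.sqrt s := by
    have h4 : ∀ j, q j * Real.sqrt (e j) = Real.sqrt (q j) * Real.sqrt (q j * e j) := by
      intro j
      rw [Real.sqrt_mul (hq0 j), ← mul_assoc, Real.mul_self_sqrt (hq0 j)]
    rw [Finset.sum_congr rfl fun j _ => h4 j]
    calc ∑ j, Real.sqrt (q j) * Real.sqrt (q j * e j)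
        ≤ Real.sqrt (∑ j, q j) * Real.sqrt (∑ j, q j * e j) :=
          Real.sum_sqrt_mul_sqrt_le _ (fun j => hq0 j)
            (fun j => mul_nonneg (hq0 j) (he0 j))
      _ ≤ 1 * Real.sqrt s := by
          rw [hs_eq]
          apply mul_le_mul_of_nonneg_right _ (Real.sqrt_nonneg _)
          rw [show (1 : ℝ) = Real.sqrt 1 by simp]
          apply Real.sqrt_le_sqrt
          exact sum_toReal_measure_le_one μ hα'.2.1 hα'.1
      _ = Real.sqrt s := one_mul _
  calc condEntropy' μ α α' = ∑ j, q j * ∑ i, Real.negMulLog (condProb μ (α i) (α' j)) := rfl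
    _ ≤ ∑ j, ((q j * e j) * (1 + Real.log ((r : ℝ) - 1)) + 2 * (q j * Real.sqrt (e j))) :=
        Finset.sum_le_sum fun j _ => hrow j
    _ = (∑ j, q j * e j) * (1 + Real.log ((r : ℝ) - 1)) + 2 * ∑ j, q j * Real.sqrt (e j) := by
        rw [Finset.sum_add_distrib, ← Finset.sum_mul, Finset.mul_sum]
    _ ≤ s * (1 + Real.log ((r : ℝ) - 1)) + 2 * Real.sqrt s := by
        rw [← hs_eq]
        have := hcs
        nlinarith

/-- Greedy construction of an `ε`-separated sequence. -/
noncomputable def bseq {P : Type*} [DecidableEq P] (g : Finset P → P) : ℕ → P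
  | n => g (Finset.image (fun m : Fin n => bseq g m.1) Finset.univ)
  termination_by n => n
  decreasing_by exact m.isLt

lemma bseq_mem_sep {P : Type*} [DecidableEq P] {K : Set P} {d : P → P → ℝ} {ε : ℝ}
    (g : Finset P → P) (hg : ∀ F : Finset P, ↑F ⊆ K → g F ∈ K ∧ ∀ b ∈ F, ε ≤ d (g F) b) :
    (∀ n, bseq g n ∈ K) ∧ ∀ m n : ℕ, m < n → ε ≤ d (bseq g n) (bseq g m) := by
  have hmem : ∀ n, bseq g n ∈ K := by
    intro n
    induction n using Nat.strong_induction_on with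
    | _ n ih =>
      rw [bseq]
      refine (hg _ ?_).1
      intro x hx
      simp only [Finset.coe_image, Set.mem_image, Finset.mem_coe, Finset.coe_univ,
        Set.mem_univ] at hx
      obtain ⟨m, _, rfl⟩ := hx
      exact ih m.1 m.isLt
  refine ⟨hmem, fun m n hmn => ?_⟩
  have hsub : ↑(Finset.image (fun m : Fin n => bseq g m.1) Finset.univ) ⊆ K := by
    intro x hx
    simp only [Finset.coe_image, Set.mem_image, Finset.mem_coe, Finset.coe_univ,
      Set.mem_univ] at hx
    obtain ⟨k, _, rfl⟩ := hx
    exact hmem k.1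
  have h2 := (hg _ hsub).2 (bseq g m)
    (Finset.mem_image.2 ⟨⟨m, hmn⟩, Finset.mem_univ _, rfl⟩)
  rw [bseq]
  exact h2

/-- Join partition of the sublist of a sequence of partitions. -/
noncomputable def jpF (μ : Measure X) {r : ℕ} (β : ℕ → Fin r → Set X) (L : List ℕ) (n : ℕ) :
    (Fin n → Fin r) → Set X :=
  fun f => ⋂ i : Fin n, β (L.getD i.1 0) (f i)

/-- Pick the smallest index whose partition has conditional entropy `≥ δ` given the join. -/
noncomputable def pickIdx (μ : Measure X) {r : ℕ} (β : ℕ → Fin r → Set X) (δ : ℝ)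
    (n : ℕ) (L : List ℕ) : ℕ :=
  sInf {m | δ ≤ condEntropy' μ (β m) (jpF μ β L n)}

/-- The list of chosen indices at stage `n` (newest first). -/
noncomputable def chainL (μ : Measure X) {r : ℕ} (β : ℕ → Fin r → Set X) (δ : ℝ) :
    ℕ → List ℕ
  | 0 => []
  | n + 1 => pickIdx μ β δ n (chainL μ β δ n) :: chainL μ β δ n

/-- The family of the `n` chosen partitions, newest first. -/
noncomputable def famC (μ : Measure X) {r : ℕ} (β : ℕ → Fin r → Set X) (δ : ℝ) (n : ℕ) :
    Fin n → Fin r → Set X :=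
  fun i => β ((chainL μ β δ n).getD i.1 0)

lemma famC_succ (μ : Measure X) {r : ℕ} (β : ℕ → Fin r → Set X) (δ : ℝ) (n : ℕ) :
    ∀ i : Fin n, famC μ β δ (n + 1) (Fin.succ i) = famC μ β δ n i := by
  intro i
  have hLC : chainL μ β δ (n + 1)
      = pickIdx μ β δ n (chainL μ β δ n) :: chainL μ β δ n := by rw [chainL]
  simp [famC, hLC, List.getD_cons_succ]

lemma famC_zero (μ : Measure X) {r : ℕ} (β : ℕ → Fin r → Set X) (δ : ℝ) (n : ℕ) :
    famC μ β δ (n + 1) 0 = β (pickIdx μ β δ n (chainL μ β δ n)) := by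
  have hLC : chainL μ β δ (n + 1)
      = pickIdx μ β δ n (chainL μ β δ n) :: chainL μ β δ n := by rw [chainL]
  simp [famC, hLC]

/-- The key counting lemma: only finitely many `β m` can have small conditional
entropy relative to a fixed partition `γ`, when the `β`'s are `ε`-separated. -/
lemma count_bad {r : ℕ} (hr : 2 ≤ r) (μ : Measure X) [IsProbabilityMeasure μ]
    (β : ℕ → Fin r → Set X) (hβ : ∀ n, IsPartition μ (β n))
    {ε : ℝ} (hsep : ∀ m n : ℕ, m ≠ n → ε ≤ rokhlinDist μ (β m) (β n))
    {δ : ℝ}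
    (hkey : ∀ s : ℝ, 0 ≤ s → Real.log 2 * s ≤ 2 * δ →
      2 * (s * (1 + Real.log ((r : ℝ) - 1)) + 2 * Real.sqrt s) < ε)
    {κ : Type*} [Fintype κ] (γ : κ → Set X) (hγ : IsPartition μ γ) :
    {m : ℕ | condEntropy' μ (β m) γ < δ}.Finite := by
  have hr0 : 0 < r := by omega
  apply Set.Finite.of_finite_image (f := fun mi : ℕ => (fun j => amax hr0 μ (β mi) (γ j)))
    (Set.toFinite _)
  intro a ha b hb hab
  by_contra hne
  simp only [Set.mem_setOf_eq] at ha hb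
  set ma : κ → Fin r := fun j => amax hr0 μ (β a) (γ j) with hma
  have hmb : (fun j => amax hr0 μ (β b) (γ j)) = ma := hab.symm
  -- Fano 1 for both
  have hEa : Real.log 2 * (∑ j, (μ (γ j \ β a (ma j))).toReal) ≤ condEntropy' μ (β a) γ :=
    fano1 hr0 μ (hβ a) hγ.1
  have hmb' : ∀ j, amax hr0 μ (β b) (γ j) = ma j := fun j => congrFun hmb j
  have hEb : Real.log 2 * (∑ j, (μ (γ j \ β b (ma j))).toReal) ≤ condEntropy' μ (β b) γ := by
    have h := fano1 hr0 μ (hβ b) hγ.1 (α := β b) (γ := γ)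
    simp only [hmb'] at h
    exact h
  set Ea := ∑ j, (μ (γ j \ β a (ma j))).toReal with hEadef
  set Eb := ∑ j, (μ (γ j \ β b (ma j))).toReal with hEbdef
  set s := offMass μ (β a) (β b) with hsdef
  have hs0 : 0 ≤ s := offMass_nonneg μ _ _
  have hslink : s ≤ Ea + Eb := slink μ (hβ a) (hβ b) hγ ma
  have hlog2 : (0 : ℝ) < Real.log 2 := Real.log_pos one_lt_two
  have hsmall : Real.log 2 * s ≤ 2 * δ := by
    have h1 : Real.log 2 * Ea < δ := lt_of_le_of_lt hEa ha
    have h2 : Real.log 2 * Eb < δ := lt_of_le_of_lt hEb hb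
    nlinarith
  have hfar := hsep a b hne
  have h3 := fano2 hr μ (hβ a) (hβ b)
  have h4 := fano2 hr μ (hβ b) (hβ a)
  rw [offMass_comm μ (β b) (β a), ← hsdef] at h4
  have h5 := hkey s hs0 hsmall
  rw [rokhlinDist] at hfar
  rw [← hsdef] at h3
  nlinarith

end Aux6

/-- If `K ⊆ 𝔓_r` has zero maximal pattern entropy,
then `K` is precompact in the Rokhlin metric. -/
theorem precompact_of_maxPatternEntropy_eq_zero (μ : Measure X) [IsProbabilityMeasure μ]
    {r : ℕ} (hr : 2 ≤ r) (K : Set (Fin r → Set X)) (hK : ∀ α ∈ K, IsPartition μ α)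
    (h0 : maxPatternEntropy μ K = 0) :
    TotBddIn (rokhlinDist μ) K := by
  classical
  by_contra hTB
  unfold TotBddIn at hTB
  push_neg at hTB
  obtain ⟨ε, hε, hnet⟩ := hTB
  -- choice of a far-away partition for each finite set
  have hg0 : ∀ F : Finset (Fin r → Set X),
      ∃ a, ↑F ⊆ K → (a ∈ K ∧ ∀ b ∈ F, ε ≤ rokhlinDist μ a b) := by
    intro F
    by_cases hF : ↑F ⊆ K
    · obtain ⟨a, haK, ha⟩ := hnet F hF
      exact ⟨a, fun _ => ⟨haK, ha⟩⟩
    · exact ⟨fun _ => ∅, fun h => absurd h hF⟩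
  choose g hg using hg0
  obtain ⟨hβK, hβsep⟩ := Aux6.bseq_mem_sep (K := K) (d := rokhlinDist μ) (ε := ε) g
    (fun F hF => hg F hF)
  set β : ℕ → Fin r → Set X := Aux6.bseq g with hβdef
  have hβ : ∀ n, IsPartition μ (β n) := fun n => hK _ (hβK n)
  have hsym : ∀ a b : Fin r → Set X, rokhlinDist μ a b = rokhlinDist μ b a :=
    fun a b => add_comm _ _
  have hsep : ∀ m n : ℕ, m ≠ n → ε ≤ rokhlinDist μ (β m) (β n) := by
    intro m n hmn
    rcases lt_or_gt_of_ne hmn with h | h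
    · rw [hsym]
      exact hβsep m n h
    · exact hβsep n m h
  have hr1 : (1 : ℝ) ≤ (r : ℝ) - 1 := by
    have : (2 : ℝ) ≤ (r : ℝ) := by exact_mod_cast hr
    linarith
  have hlogr : (0 : ℝ) ≤ Real.log ((r : ℝ) - 1) := Real.log_nonneg hr1
  have hlog2 : (0 : ℝ) < Real.log 2 := Real.log_pos one_lt_two
  -- choose δ
  have hδex : ∃ δ : ℝ, 0 < δ ∧ ∀ s : ℝ, 0 ≤ s → Real.log 2 * s ≤ 2 * δ →
      2 * (s * (1 + Real.log ((r : ℝ) - 1)) + 2 * Real.sqrt s) < ε := by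
    set c := 1 + Real.log ((r : ℝ) - 1) with hc
    have hc1 : (1 : ℝ) ≤ c := by rw [hc]; linarith
    set x := ε / (2 * c + 5) with hx
    have hxpos : 0 < x := div_pos hε (by linarith)
    set s₀ := min 1 (x ^ 2) with hs₀
    have hs₀pos : 0 < s₀ := lt_min one_pos (by positivity)
    have hs₀le1 : s₀ ≤ 1 := min_le_left _ _
    refine ⟨s₀ * Real.log 2 / 2, div_pos (mul_pos hs₀pos hlog2) two_pos, ?_⟩
    intro s hs0 hsmall
    have h1 : s ≤ s₀ := by nlinarith
    have h2 : Real.sqrt s ≤ x := by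
      have h3 : Real.sqrt s ≤ Real.sqrt (x ^ 2) :=
        Real.sqrt_le_sqrt (le_trans h1 (min_le_right _ _))
      rwa [Real.sqrt_sq (le_of_lt hxpos)] at h3
    have h4 : s ≤ Real.sqrt s := by
      have h5 : s ^ 2 ≤ s := by nlinarith
      calc s = Real.sqrt (s ^ 2) := (Real.sqrt_sq hs0).symm
        _ ≤ Real.sqrt s := Real.sqrt_le_sqrt h5
    have h6 : 2 * (s * c + 2 * Real.sqrt s) ≤ (2 * c + 4) * x := by
      have h7 : s * c ≤ Real.sqrt s * c := mul_le_mul_of_nonneg_right h4 (by linarith)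
      nlinarith [Real.sqrt_nonneg s]
    have h8 : (2 * c + 4) * x < ε := by
      rw [hx, mul_comm, div_mul_eq_mul_div, div_lt_iff₀ (by linarith : (0:ℝ) < 2 * c + 5)]
      nlinarith
    linarith
  obtain ⟨δ, hδpos, hkey⟩ := hδex
  -- the pick at every stage works
  have hjp_part : ∀ (n : ℕ) (L : List ℕ), IsPartition μ (Aux6.jpF μ β L n) :=
    fun n L => Aux6.isPartition_join μ (A := fun i : Fin n => β (L.getD i.1 0))
      (fun i => hβ _)
  have hpick : ∀ n : ℕ, δ ≤ condEntropy' μ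
      (β (Aux6.pickIdx μ β δ n (Aux6.chainL μ β δ n)))
      (Aux6.jpF μ β (Aux6.chainL μ β δ n) n) := by
    intro n
    have hfin : {m : ℕ |
        condEntropy' μ (β m) (Aux6.jpF μ β (Aux6.chainL μ β δ n) n) < δ}.Finite :=
      Aux6.count_bad hr μ β hβ hsep hkey _ (hjp_part n _)
    have hinf := hfin.infinite_compl
    have h7 : {m : ℕ | condEntropy' μ (β m) (Aux6.jpF μ β (Aux6.chainL μ β δ n) n) < δ}ᶜ
        = {m : ℕ | δ ≤ condEntropy' μ (β m) (Aux6.jpF μ β (Aux6.chainL μ β δ n) n)} := by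
      ext m
      simp [not_lt]
    rw [h7] at hinf
    exact Nat.sInf_mem hinf.nonempty
  -- joint entropy of the chain grows linearly
  have hJE : ∀ n : ℕ, (n : ℝ) * δ ≤ jointEntropy μ (Aux6.famC μ β δ n) := by
    intro n
    induction n with
    | zero =>
      simp only [Nat.cast_zero, zero_mul]
      have hz : jointEntropy μ (Aux6.famC μ β δ 0) = 0 := by
        simp [jointEntropy]
      rw [hz]
    | succ n ih =>
      rw [Aux6.chain_rule μ (Aux6.famC μ β δ (n + 1)) (fun i => hβ _)]
      rw [show (fun i : Fin n => Aux6.famC μ β δ (n + 1) (Fin.succ i)) = Aux6.famC μ β δ n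
        from funext (Aux6.famC_succ μ β δ n)]
      rw [Aux6.famC_zero μ β δ n]
      simp only [Aux6.famC_succ μ β δ n]
      have h2 : δ ≤ condEntropy' μ (β (Aux6.pickIdx μ β δ n (Aux6.chainL μ β δ n)))
          (fun f : Fin n → Fin r => ⋂ i, Aux6.famC μ β δ n i (f i)) := hpick n
      push_cast
      linarith
  -- upper bound on joint entropies of families from K
  have hub : ∀ (n : ℕ) (A : Fin n → Fin r → Set X), (∀ i, A i ∈ K) →
      jointEntropy μ A ≤ (n : ℝ) * Real.log r + 1 := by
    intro n A hAK
    have hA : ∀ i, IsPartition μ (A i) := fun i => hK _ (hAK i)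
    have hjp := Aux6.isPartition_join μ hA
    have h1 := Aux6.sum_negMulLog_le_card (Finset.univ : Finset (Fin n → Fin r))
      (fun f => (μ (⋂ i, A i (f i))).toReal) (fun f _ => ENNReal.toReal_nonneg)
    have h2 : ∑ f : Fin n → Fin r, (μ (⋂ i, A i (f i))).toReal ≤ 1 :=
      Aux6.sum_toReal_measure_le_one μ hjp.2.1 hjp.1
    have h2' : (0:ℝ) ≤ ∑ f : Fin n → Fin r, (μ (⋂ i, A i (f i))).toReal :=
      Finset.sum_nonneg fun f _ => ENNReal.toReal_nonneg
    have hcard : (((Finset.univ : Finset (Fin n → Fin r)).card : ℕ) : ℝ) = (r : ℝ) ^ n := by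
      rw [Finset.card_univ, Fintype.card_fun]
      push_cast [Fintype.card_fin]
      ring
    have hlogcard : Real.log ((Finset.univ : Finset (Fin n → Fin r)).card : ℝ)
        = (n : ℝ) * Real.log r := by
      rw [hcard, Real.log_pow]
    have hlogrr : (0:ℝ) ≤ Real.log r := Real.log_nonneg (by
      have : (2:ℝ) ≤ (r:ℝ) := by exact_mod_cast hr
      linarith)
    have hlogpos : (0:ℝ) ≤ (n : ℝ) * Real.log r := mul_nonneg (Nat.cast_nonneg n) hlogrr
    calc jointEntropy μ A
        ≤ (∑ f : Fin n → Fin r, (μ (⋂ i, A i (f i))).toReal) *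
            Real.log ((Finset.univ : Finset (Fin n → Fin r)).card : ℝ) +
            Real.negMulLog (∑ f : Fin n → Fin r, (μ (⋂ i, A i (f i))).toReal) := h1
      _ ≤ 1 * ((n : ℝ) * Real.log r) + 1 := by
          apply add_le_add
          · rw [hlogcard]
            exact mul_le_mul_of_nonneg_right h2 hlogpos
          · have := Aux6.negMulLog_le_one_sub h2'
            linarith
      _ = (n : ℝ) * Real.log r + 1 := by ring
  -- patternSup bounds
  have hmemS : ∀ n : ℕ, jointEntropy μ (Aux6.famC μ β δ n) ∈
      {H : ℝ | ∃ A : Fin n → Fin r → Set X, (∀ i, A i ∈ K) ∧ H = jointEntropy μ A} :=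
    fun n => ⟨Aux6.famC μ β δ n, fun i => hβK _, rfl⟩
  have hbdd : ∀ n : ℕ, BddAbove
      {H : ℝ | ∃ A : Fin n → Fin r → Set X, (∀ i, A i ∈ K) ∧ H = jointEntropy μ A} :=
    fun n => ⟨(n : ℝ) * Real.log r + 1, by
      rintro H ⟨A, hAK, rfl⟩
      exact hub n A hAK⟩
  have hlow : ∀ n : ℕ, (n : ℝ) * δ ≤ patternSup μ K n :=
    fun n => le_trans (hJE n) (le_csSup (hbdd n) (hmemS n))
  have hup : ∀ n : ℕ, patternSup μ K n ≤ (n : ℝ) * Real.log r + 1 :=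
    fun n => csSup_le ⟨_, hmemS n⟩ (by
      rintro H ⟨A, hAK, rfl⟩
      exact hub n A hAK)
  have hlogrr : (0:ℝ) ≤ Real.log r := Real.log_nonneg (by
    have : (2:ℝ) ≤ (r:ℝ) := by exact_mod_cast hr
    linarith)
  -- limsup bound
  have hfinal : δ ≤ maxPatternEntropy μ K := by
    rw [maxPatternEntropy, Filter.limsup_eq]
    apply le_csInf
    · refine ⟨Real.log r + 1, ?_⟩
      simp only [Set.mem_setOf_eq]
      refine Filter.eventually_atTop.2 ⟨1, fun n hn => ?_⟩
      have hn0 : (0:ℝ) < (n : ℝ) := by exact_mod_cast hn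
      rw [div_le_iff₀ hn0]
      have h1 : (1:ℝ) ≤ (n : ℝ) := by exact_mod_cast hn
      calc patternSup μ K n ≤ (n : ℝ) * Real.log r + 1 := hup n
        _ ≤ (Real.log r + 1) * (n : ℝ) := by nlinarith
    · rintro b hb
      simp only [Set.mem_setOf_eq] at hb
      rw [Filter.eventually_atTop] at hb
      obtain ⟨N, hN⟩ := hb
      have h1 := hN (max N 1) (le_max_left _ _)
      have hn1 : (1 : ℕ) ≤ max N 1 := le_max_right _ _
      have hn0 : (0:ℝ) < ((max N 1 : ℕ) : ℝ) := by exact_mod_cast hn1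
      have h2 : δ ≤ patternSup μ K (max N 1) / ((max N 1 : ℕ) : ℝ) := by
        rw [le_div_iff₀ hn0]
        calc δ * ((max N 1 : ℕ) : ℝ) = ((max N 1 : ℕ) : ℝ) * δ := by ring
          _ ≤ patternSup μ K (max N 1) := hlow _
      linarith
  rw [h0] at hfinal
  linarith
end

section
/- If a subset K of 𝔓_r is precompact in the Rokhlin metric, then K has bounded mean complexity: for every ε > 0 there is a constant C such that for every finite subset E of K, one can cover all but ε of the measure of X by at most C Hamming balls of radius ε with respect to E. -/
open MeasureTheory Filter Real Topology
open scoped symmDiff ENNReal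

variable {X : Type*} [MeasurableSpace X]

set_option linter.unusedSectionVars false

lemma condProb_nonneg (μ : Measure X) (A B : Set X) : 0 ≤ condProb μ A B := by
  unfold condProb; split <;> positivity

lemma condProb_le_one (μ : Measure X) [IsProbabilityMeasure μ] (A B : Set X) :
    condProb μ A B ≤ 1 := by
  unfold condProb
  split
  · norm_num
  · rename_i h
    apply div_le_one_of_le₀
    · exact ENNReal.toReal_mono (measure_ne_top μ _) (measure_mono Set.inter_subset_right)
    · exact ENNReal.toReal_nonneg

lemma condEntropy'_nonneg (μ : Measure X) [IsProbabilityMeasure μ] {ι κ : Type*}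
    [Fintype ι] [Fintype κ] (A : ι → Set X) (B : κ → Set X) : 0 ≤ condEntropy' μ A B :=
  Finset.sum_nonneg fun _ _ => mul_nonneg ENNReal.toReal_nonneg <|
    Finset.sum_nonneg fun _ _ =>
      Real.negMulLog_nonneg (condProb_nonneg _ _ _) (condProb_le_one _ _ _)

lemma sum_condProb_eq_one (μ : Measure X) [IsProbabilityMeasure μ] {r : ℕ}
    {α : Fin r → Set X} (hα : IsPartition μ α) {Bset : Set X} (hBm : MeasurableSet Bset)
    (hB : μ Bset ≠ 0) : ∑ i, condProb μ (α i) Bset = 1 := by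
  obtain ⟨hmeas, hdisj, hnull⟩ := hα
  have hsum : ∑ i, μ (α i ∩ Bset) = μ Bset := by
    have hiu := measure_iUnion (μ := μ)
      (fun i j hij => (hdisj hij).mono Set.inter_subset_left Set.inter_subset_left)
      (fun i => (hmeas i).inter hBm)
    rw [tsum_fintype] at hiu
    rw [← hiu, ← Set.iUnion_inter]
    refine le_antisymm (measure_mono Set.inter_subset_right) ?_
    have h2 : μ Bset ≤ μ ((⋃ i, α i) ∩ Bset) + μ (⋃ i, α i)ᶜ := by
      refine le_trans (measure_mono ?_) (measure_union_le _ _)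
      intro x hx
      by_cases h : x ∈ ⋃ i, α i
      · exact Or.inl ⟨h, hx⟩
      · exact Or.inr h
    rwa [hnull, add_zero] at h2
  have hfin : (μ Bset).toReal ≠ 0 := by
    simp [ENNReal.toReal_eq_zero_iff, hB, measure_ne_top μ Bset]
  simp only [condProb, if_neg hB]
  rw [← Finset.sum_div, ← ENNReal.toReal_sum (fun _ _ => measure_ne_top μ _), hsum,
    div_self hfin]

lemma exists_good_index {r : ℕ} (hr : 0 < r) (p : Fin r → ℝ) (h0 : ∀ i, 0 ≤ p i)
    (hsum : ∑ i, p i = 1) : ∃ i, 1 - p i ≤ ∑ i, Real.negMulLog (p i) := by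
  obtain ⟨i0, -, hmax⟩ := Finset.exists_max_image Finset.univ p ⟨⟨0, hr⟩, Finset.mem_univ _⟩
  have hmax' : ∀ i, p i ≤ p i0 := fun i => hmax i (Finset.mem_univ i)
  have hpos : 0 < p i0 := by
    by_contra h
    push_neg at h
    have : ∑ i, p i ≤ 0 := Finset.sum_nonpos fun i _ => le_trans (hmax' i) h
    linarith
  refine ⟨i0, ?_⟩
  have h1 : ∑ i, p i * (-Real.log (p i0)) ≤ ∑ i, Real.negMulLog (p i) := by
    apply Finset.sum_le_sum
    intro i _
    rcases eq_or_lt_of_le (h0 i) with h | h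
    · simp [← h, Real.negMulLog]
    · have hlog : Real.log (p i) ≤ Real.log (p i0) := Real.log_le_log h (hmax' i)
      rw [Real.negMulLog]
      nlinarith
  have h2 : ∑ i, p i * (-Real.log (p i0)) = -Real.log (p i0) := by
    rw [← Finset.sum_mul]
    rw [hsum, one_mul]
  have h3 : Real.log (p i0) ≤ p i0 - 1 := Real.log_le_sub_one_of_pos hpos
  linarith

lemma atom_unique {r : ℕ} {β : Fin r → Set X} (hd : Pairwise (Function.onFun Disjoint β))
    {x : X} {i j : Fin r} (hi : x ∈ β i) (hj : x ∈ β j) : i = j := by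
  by_contra h
  exact Set.disjoint_left.mp (hd h) hi hj

lemma fano (μ : Measure X) [IsProbabilityMeasure μ] {r : ℕ} (hr : 0 < r)
    {α β : Fin r → Set X} (hα : IsPartition μ α) (hβ : IsPartition μ β) :
    ∃ φ : Fin r → Fin r, μ (⋃ j, β j ∩ α (φ j))ᶜ ≤ ENNReal.ofReal (condEntropy' μ α β) := by
  have key : ∀ j, ∃ i, μ (β j) ≠ 0 →
      1 - condProb μ (α i) (β j) ≤ ∑ i', Real.negMulLog (condProb μ (α i') (β j)) := by
    intro j
    by_cases h : μ (β j) = 0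
    · exact ⟨⟨0, hr⟩, fun h' => absurd h h'⟩
    · obtain ⟨i, hi⟩ := exists_good_index hr (fun i => condProb μ (α i) (β j))
        (fun i => condProb_nonneg _ _ _) (sum_condProb_eq_one μ hα (hβ.1 j) h)
      exact ⟨i, fun _ => hi⟩
  choose φ hφ using key
  refine ⟨φ, ?_⟩
  have hsub : (⋃ j, β j ∩ α (φ j))ᶜ ⊆ (⋃ j, β j)ᶜ ∪ ⋃ j, (β j \ α (φ j)) := by
    intro x hx
    by_cases h : x ∈ ⋃ j, β j
    · obtain ⟨j, hj⟩ := Set.mem_iUnion.1 h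
      refine Or.inr (Set.mem_iUnion.2 ⟨j, hj, fun hxa => ?_⟩)
      exact hx (Set.mem_iUnion.2 ⟨j, hj, hxa⟩)
    · exact Or.inl h
  have h1 : μ (⋃ j, β j ∩ α (φ j))ᶜ ≤ ∑ j, μ (β j \ α (φ j)) := by
    calc μ (⋃ j, β j ∩ α (φ j))ᶜ
        ≤ μ (⋃ j, β j)ᶜ + μ (⋃ j, β j \ α (φ j)) :=
          le_trans (measure_mono hsub) (measure_union_le _ _)
      _ = μ (⋃ j, β j \ α (φ j)) := by rw [hβ.2.2, zero_add]
      _ ≤ ∑ j, μ (β j \ α (φ j)) := measure_iUnion_fintype_le μ _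
  have h2 : ∀ j, (μ (β j \ α (φ j))).toReal ≤
      (μ (β j)).toReal * ∑ i, Real.negMulLog (condProb μ (α i) (β j)) := by
    intro j
    by_cases h : μ (β j) = 0
    · have hz : μ (β j \ α (φ j)) = 0 := measure_mono_null Set.diff_subset h
      simp [hz, h]
    · have hle := hφ j h
      have hsplit : μ (β j ∩ α (φ j)) + μ (β j \ α (φ j)) = μ (β j) :=
        measure_inter_add_diff _ (hα.1 _)
      have htr : (μ (β j ∩ α (φ j))).toReal + (μ (β j \ α (φ j))).toReal = (μ (β j)).toReal := by
        rw [← ENNReal.toReal_add (measure_ne_top μ _) (measure_ne_top μ _), hsplit]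
      have hp : condProb μ (α (φ j)) (β j) = (μ (β j ∩ α (φ j))).toReal / (μ (β j)).toReal := by
        rw [condProb, if_neg h, Set.inter_comm]
      have hbp : 0 < (μ (β j)).toReal := ENNReal.toReal_pos h (measure_ne_top μ _)
      have heq : (μ (β j \ α (φ j))).toReal =
          (μ (β j)).toReal * (1 - condProb μ (α (φ j)) (β j)) := by
        rw [hp]
        field_simp
        linarith
      rw [heq]
      exact mul_le_mul_of_nonneg_left hle ENNReal.toReal_nonneg
  have h3 : (μ (⋃ j, β j ∩ α (φ j))ᶜ).toReal ≤ condEntropy' μ α β := by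
    calc (μ (⋃ j, β j ∩ α (φ j))ᶜ).toReal
        ≤ (∑ j, μ (β j \ α (φ j))).toReal :=
          ENNReal.toReal_mono (ENNReal.sum_ne_top.2 fun _ _ => measure_ne_top μ _) h1
      _ = ∑ j, (μ (β j \ α (φ j))).toReal := ENNReal.toReal_sum fun _ _ => measure_ne_top μ _
      _ ≤ ∑ j, (μ (β j)).toReal * ∑ i, Real.negMulLog (condProb μ (α i) (β j)) :=
          Finset.sum_le_sum fun j _ => h2 j
      _ = condEntropy' μ α β := rfl
  rw [← ENNReal.ofReal_toReal (measure_ne_top μ _)]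
  exact ENNReal.ofReal_le_ofReal h3

/-- If `K ⊆ 𝔓_r` is precompact in the Rokhlin metric, then `K` has
bounded mean complexity: for every `ε > 0` there is `C` such that for every finite
`E ⊆ K`, all but `ε` of the measure of `X` is covered by at most `C` Hamming balls of
radius `ε` with respect to `E`. -/
theorem boundedMeanComplexity_of_precompact (μ : Measure X) [IsProbabilityMeasure μ]
    {r : ℕ} (hr : 2 ≤ r) (K : Set (Fin r → Set X)) (hK : ∀ α ∈ K, IsPartition μ α)
    (hpre : TotBddIn (rokhlinDist μ) K) :
    ∀ ε > (0 : ℝ), ∃ C : ℕ, ∀ E : Finset (Fin r → Set X), ↑E ⊆ K →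
      ∃ D : Finset X, D.card ≤ C ∧
        μ (⋃ x ∈ D, hamBall E x ε) > 1 - ENNReal.ofReal ε := by
  classical
  suffices H : ∀ ε : ℝ, 0 < ε → ε ≤ 1/2 → ∃ C : ℕ, ∀ E : Finset (Fin r → Set X), ↑E ⊆ K →
      ∃ D : Finset X, D.card ≤ C ∧
        μ (⋃ x ∈ D, hamBall E x ε) > 1 - ENNReal.ofReal ε by
    intro ε hε
    obtain ⟨C, hC⟩ := H (min ε (1/2)) (lt_min hε (by norm_num)) (min_le_right _ _)
    refine ⟨C, fun E hE => ?_⟩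
    obtain ⟨D, hD1, hD2⟩ := hC E hE
    refine ⟨D, hD1, ?_⟩
    have hsub : (⋃ x ∈ D, hamBall E x (min ε (1/2))) ⊆ ⋃ x ∈ D, hamBall E x ε := by
      refine Set.iUnion₂_mono fun x _ => ?_
      intro y hy
      simp only [hamBall, Set.mem_setOf_eq] at hy ⊢
      exact lt_of_lt_of_le hy (min_le_left _ _)
    calc 1 - ENNReal.ofReal ε ≤ 1 - ENNReal.ofReal (min ε (1/2)) :=
          tsub_le_tsub_left (ENNReal.ofReal_le_ofReal (min_le_left _ _)) 1
      _ < μ (⋃ x ∈ D, hamBall E x (min ε (1/2))) := hD2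
      _ ≤ μ (⋃ x ∈ D, hamBall E x ε) := measure_mono hsub
  intro ε hε hε2
  have hrpos : 0 < r := lt_of_lt_of_le two_pos hr
  have hXne : Nonempty X := by
    by_contra h
    rw [not_nonempty_iff] at h
    have h0 : μ Set.univ = 0 := by
      rw [Set.univ_eq_empty_iff.2 h]
      exact measure_empty
    rw [measure_univ] at h0
    exact one_ne_zero h0
  set δ : ℝ := ε^2/4 with hδ
  obtain ⟨F, hFK, hFnet⟩ := hpre δ (by positivity)
  refine ⟨r ^ F.card, ?_⟩
  intro E hEK
  by_cases hEe : E = ∅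
  · subst hEe
    refine ⟨{Classical.arbitrary X}, ?_, ?_⟩
    · simpa using Nat.one_le_iff_ne_zero.2 (pow_ne_zero _ (by omega))
    · have hball : hamBall (∅ : Finset (Fin r → Set X)) (Classical.arbitrary X) ε
          = Set.univ := by
        ext y
        simp [hamBall, hamDist, hε]
      simp only [Finset.mem_singleton, Set.iUnion_iUnion_eq_left, hball, measure_univ]
      exact ENNReal.sub_lt_self ENNReal.one_ne_top one_ne_zero (ENNReal.ofReal_pos.2 hε).ne'
  have hEne : E.Nonempty := Finset.nonempty_of_ne_empty hEe
  have hcard : (0:ℝ) < (E.card : ℝ) := Nat.cast_pos.2 (Finset.card_pos.2 hEne)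
  -- choose for each α ∈ E a net element B α and an atom map ψ α
  have hch : ∀ α : Fin r → Set X, ∃ β : Fin r → Set X, ∃ ψ : Fin r → Fin r,
      α ∈ E → β ∈ F ∧ μ (⋃ j, β j ∩ α (ψ j))ᶜ ≤ ENNReal.ofReal δ := by
    intro α
    by_cases hα : α ∈ E
    · obtain ⟨β, hβF, hρ⟩ := hFnet α (hEK hα)
      obtain ⟨ψ, hψ⟩ := fano μ hrpos (hK α (hEK hα)) (hK β (hFK (Finset.mem_coe.2 hβF)))
      refine ⟨β, ψ, fun _ => ⟨hβF, le_trans hψ (ENNReal.ofReal_le_ofReal ?_)⟩⟩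
      have h1 := condEntropy'_nonneg μ β α
      have h2 : rokhlinDist μ α β = condEntropy' μ α β + condEntropy' μ β α := rfl
      linarith
    · exact ⟨α, id, fun h => absurd h hα⟩
  choose B ψ hBψ using hch
  set G : (Fin r → Set X) → Set X := fun α => ⋃ j, B α j ∩ α (ψ α j) with hG
  have hGmeas : ∀ α ∈ E, MeasurableSet (G α) := fun α hα =>
    MeasurableSet.iUnion fun j =>
      ((hK _ (hFK (Finset.mem_coe.2 (hBψ α hα).1))).1 j).inter ((hK α (hEK hα)).1 _)
  have hGsmall : ∀ α ∈ E, μ (G α)ᶜ ≤ ENNReal.ofReal δ := fun α hα => (hBψ α hα).2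
  set f : X → ℝ≥0∞ := fun x => ∑ α ∈ E, ((G α)ᶜ).indicator 1 x with hf
  have hfmeas : Measurable f :=
    Finset.measurable_sum _ fun α hα => measurable_const.indicator (hGmeas α hα).compl
  have hint : ∫⁻ x, f x ∂μ ≤ (E.card : ℝ≥0∞) * ENNReal.ofReal δ := by
    show ∫⁻ x, ∑ α ∈ E, ((G α)ᶜ).indicator 1 x ∂μ ≤ (E.card : ℝ≥0∞) * ENNReal.ofReal δ
    rw [lintegral_finset_sum (f := fun α => ((G α)ᶜ).indicator (1 : X → ℝ≥0∞)) E
      (fun α hα => measurable_const.indicator (hGmeas α hα).compl)]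
    calc ∑ α ∈ E, ∫⁻ x, ((G α)ᶜ).indicator 1 x ∂μ
        = ∑ α ∈ E, μ (G α)ᶜ := Finset.sum_congr rfl fun α hα =>
            lintegral_indicator_one (hGmeas α hα).compl
      _ ≤ ∑ _α ∈ E, ENNReal.ofReal δ := Finset.sum_le_sum fun α hα => hGsmall α hα
      _ = (E.card : ℝ≥0∞) * ENNReal.ofReal δ := by rw [Finset.sum_const, nsmul_eq_mul]
  set t : ℝ≥0∞ := ENNReal.ofReal (ε * E.card / 2) with ht
  have htpos : (0:ℝ) < ε * E.card / 2 := by positivity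
  have htne : t ≠ 0 := (ENNReal.ofReal_pos.2 htpos).ne'
  set S := {x | t ≤ f x} with hSdef
  have hS : μ S ≤ ENNReal.ofReal (ε/2) := by
    calc μ S ≤ (∫⁻ x, f x ∂μ) / t :=
          meas_ge_le_lintegral_div hfmeas.aemeasurable htne ENNReal.ofReal_ne_top
      _ ≤ ((E.card : ℝ≥0∞) * ENNReal.ofReal δ) / t := by gcongr
      _ = ENNReal.ofReal ((E.card : ℝ) * δ) / ENNReal.ofReal (ε * E.card / 2) := by
          rw [← ENNReal.ofReal_natCast, ← ENNReal.ofReal_mul (by positivity)]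
      _ = ENNReal.ofReal (((E.card : ℝ) * δ) / (ε * E.card / 2)) :=
          (ENNReal.ofReal_div_of_pos htpos).symm
      _ = ENNReal.ofReal (ε/2) := by
          congr 1
          rw [hδ]
          field_simp
          ring
  have hSmeas : MeasurableSet S := measurableSet_le measurable_const hfmeas
  set N : Set X := ⋂ β ∈ F, ⋃ j, β j with hNdef
  have hN : μ Nᶜ = 0 := by
    rw [hNdef, Set.compl_iInter₂]
    exact (measure_biUnion_null_iff F.countable_toSet).2
      fun β hβ => (hK β (hFK (Finset.mem_coe.2 hβ))).2.2
  set W := Sᶜ ∩ N with hW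
  have hcount : ∀ x : X, f x = ((E.filter fun α => x ∉ G α).card : ℝ≥0∞) := by
    intro x
    rw [hf, Finset.card_filter]
    push_cast
    refine Finset.sum_congr rfl fun α _ => ?_
    by_cases h : x ∈ G α <;> simp [Set.indicator_apply, h]
  have hWcount : ∀ x ∈ W, ((E.filter fun α => x ∉ G α).card : ℝ) < ε * E.card / 2 := by
    intro x hx
    have hxS : ¬ t ≤ f x := hx.1
    rw [not_le, hcount x, ht] at hxS
    have := (ENNReal.lt_ofReal_iff_toReal_lt (by simp)).1 hxS
    simpa using this
  have key : ∀ x ∈ W, ∀ y ∈ W,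
      (∀ β ∈ F, ∀ j k : Fin r, x ∈ β j → y ∈ β k → j = k) → hamDist E x y < ε := by
    intro x hx y hy hsame
    have hxc := hWcount x hx
    have hyc := hWcount y hy
    have hsubP : (E.filter fun α => ∀ i, ¬(x ∈ α i ∧ y ∈ α i)) ⊆
        (E.filter fun α => x ∉ G α) ∪ (E.filter fun α => y ∉ G α) := by
      intro α hα
      rw [Finset.mem_filter] at hα
      rw [Finset.mem_union, Finset.mem_filter, Finset.mem_filter]
      by_contra hcon
      push_neg at hcon
      obtain ⟨h1, h2⟩ := hcon
      have hxG : x ∈ G α := h1 hα.1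
      have hyG : y ∈ G α := h2 hα.1
      obtain ⟨j1, hj1⟩ := Set.mem_iUnion.1 hxG
      obtain ⟨j2, hj2⟩ := Set.mem_iUnion.1 hyG
      have hBF : B α ∈ F := (hBψ α hα.1).1
      have hjj : j1 = j2 := hsame (B α) hBF j1 j2 hj1.1 hj2.1
      exact hα.2 (ψ α j1) ⟨hj1.2, by rw [hjj]; exact hj2.2⟩
    have hcL : ((E.filter fun α => ∀ i, ¬(x ∈ α i ∧ y ∈ α i)).card : ℝ) < ε * E.card := by
      have h1 : (E.filter fun α => ∀ i, ¬(x ∈ α i ∧ y ∈ α i)).card ≤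
          (E.filter fun α => x ∉ G α).card + (E.filter fun α => y ∉ G α).card :=
        le_trans (Finset.card_le_card hsubP) (Finset.card_union_le _ _)
      have h1' : ((E.filter fun α => ∀ i, ¬(x ∈ α i ∧ y ∈ α i)).card : ℝ) ≤
          ((E.filter fun α => x ∉ G α).card : ℝ) + ((E.filter fun α => y ∉ G α).card : ℝ) := by
        exact_mod_cast h1
      linarith
    rw [hamDist, div_lt_iff₀ hcard]
    convert hcL using 3
  set J : (↥F → Fin r) → Set X := fun g => ⋂ β : ↥F, (β : Fin r → Set X) (g β) with hJ
  have hpick : ∀ g : ↥F → Fin r, ∃ x : X, (W ∩ J g).Nonempty → x ∈ W ∩ J g := by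
    intro g
    by_cases h : (W ∩ J g).Nonempty
    · exact ⟨h.choose, fun _ => h.choose_spec⟩
    · exact ⟨Classical.arbitrary X, fun h' => absurd h' h⟩
  choose pick hpickspec using hpick
  set D : Finset X := (Finset.univ.filter fun g : ↥F → Fin r => (W ∩ J g).Nonempty).image pick
    with hD
  refine ⟨D, ?_, ?_⟩
  · calc D.card ≤ (Finset.univ.filter fun g : ↥F → Fin r => (W ∩ J g).Nonempty).card :=
        Finset.card_image_le
      _ ≤ (Finset.univ : Finset (↥F → Fin r)).card := Finset.card_filter_le _ _
      _ = r ^ F.card := by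
        simp [Finset.card_univ]
  · have hcover : W ⊆ ⋃ x ∈ D, hamBall E x ε := by
      intro y hy
      have hyN : y ∈ N := hy.2
      have hg : ∀ β : ↥F, ∃ j, y ∈ (β : Fin r → Set X) j := by
        intro β
        have hmem : y ∈ ⋃ j, (β : Fin r → Set X) j := by
          have := Set.mem_iInter₂.1 hyN (β : Fin r → Set X) β.2
          exact this
        exact Set.mem_iUnion.1 hmem
      choose g hgy using hg
      have hyJ : y ∈ J g := Set.mem_iInter.2 hgy
      have hne : (W ∩ J g).Nonempty := ⟨y, hy, hyJ⟩
      have hxW := hpickspec g hne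
      refine Set.mem_iUnion₂.2 ⟨pick g, ?_, ?_⟩
      · exact Finset.mem_image.2 ⟨g, Finset.mem_filter.2 ⟨Finset.mem_univ _, hne⟩, rfl⟩
      · refine key (pick g) hxW.1 y hy ?_
        intro β hβF j k hxj hyk
        have hβK := hK β (hFK (Finset.mem_coe.2 hβF))
        have hxg : pick g ∈ β (g ⟨β, hβF⟩) := Set.mem_iInter.1 hxW.2 ⟨β, hβF⟩
        have h1 : j = g ⟨β, hβF⟩ := atom_unique hβK.2.1 hxj hxg
        have h2 : k = g ⟨β, hβF⟩ := atom_unique hβK.2.1 hyk (hgy ⟨β, hβF⟩)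
        rw [h1, h2]
    have hWme : μ W = μ Sᶜ := measure_inter_conull hN
    have h5 : μ Sᶜ = 1 - μ S := prob_compl_eq_one_sub hSmeas
    calc 1 - ENNReal.ofReal ε < 1 - ENNReal.ofReal (ε/2) := by
          rw [show (1:ℝ≥0∞) = ENNReal.ofReal 1 by simp, ← ENNReal.ofReal_sub _ (by positivity),
            ← ENNReal.ofReal_sub _ (by positivity)]
          exact (ENNReal.ofReal_lt_ofReal_iff (by linarith)).2 (by linarith)
      _ ≤ 1 - μ S := tsub_le_tsub_left hS 1
      _ = μ W := by rw [← h5, ← hWme]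
      _ ≤ μ (⋃ x ∈ D, hamBall E x ε) := measure_mono hcover
end

section
/- If a sequence (E_n) of finite subsets of 𝔓_r is mean equicontinuous (in limsup form), then the mean equicontinuity can be upgraded to a uniform version: for every ε > 0 there exist pairwise disjoint measurable sets B_1,…,B_k with μ(⋃B_i) > 1−ε such that whenever x, y lie in the same B_i, H_{E_n}(x,y) < ε for all n ∈ ℕ. -/
open MeasureTheory Filter Real Topology
open scoped symmDiff ENNReal

variable {X : Type*} [MeasurableSpace X]

set_option linter.unusedSectionVars false
set_option linter.unusedVariables false
set_option maxHeartbeats 1000000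

lemma hamDist_nonneg {r : ℕ} (E : Finset (Fin r → Set X)) (x y : X) : 0 ≤ hamDist E x y := by
  unfold hamDist; positivity

lemma hamDist_le_one {r : ℕ} (E : Finset (Fin r → Set X)) (x y : X) : hamDist E x y ≤ 1 := by
  classical
  unfold hamDist
  rcases Nat.eq_zero_or_pos E.card with h | h
  · simp [h]
  · rw [div_le_one (by exact_mod_cast h)]
    exact_mod_cast Finset.card_filter_le _ _

lemma hamDist_symm {r : ℕ} (E : Finset (Fin r → Set X)) (x y : X) :
    hamDist E x y = hamDist E y x := by
  classical
  unfold hamDist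
  have h : ∀ α ∈ E, ((∀ i, ¬(x ∈ α i ∧ y ∈ α i)) ↔ (∀ i, ¬(y ∈ α i ∧ x ∈ α i))) := by
    intro α _
    constructor <;> intro h i hi <;> exact h i ⟨hi.2, hi.1⟩
  rw [Finset.filter_congr h]

lemma hamDist_triangle {r : ℕ} {E : Finset (Fin r → Set X)}
    (hE : ∀ α ∈ E, Pairwise (Function.onFun Disjoint α)) (x y z : X) :
    hamDist E x z ≤ hamDist E x y + hamDist E y z := by
  classical
  unfold hamDist
  rcases Nat.eq_zero_or_pos E.card with h | h
  · simp [h]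
  rw [← add_div, div_le_div_iff_of_pos_right (by exact_mod_cast h)]
  have hsub : (E.filter fun α => ∀ i, ¬(x ∈ α i ∧ z ∈ α i)) ⊆
      (E.filter fun α => ∀ i, ¬(x ∈ α i ∧ y ∈ α i)) ∪
      (E.filter fun α => ∀ i, ¬(y ∈ α i ∧ z ∈ α i)) := by
    intro α hα
    rw [Finset.mem_filter] at hα
    rw [Finset.mem_union, Finset.mem_filter, Finset.mem_filter]
    by_contra hc
    push_neg at hc
    obtain ⟨hc1, hc2⟩ := hc
    obtain ⟨i, hxi, hyi⟩ := hc1 hα.1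
    obtain ⟨j, hyj, hzj⟩ := hc2 hα.1
    have hij : i = j := by
      by_contra hne
      exact (hE α hα.1 hne).le_bot ⟨hyi, hyj⟩
    subst hij
    exact hα.2 i ⟨hxi, hzj⟩
  calc ((E.filter fun α => ∀ i, ¬(x ∈ α i ∧ z ∈ α i)).card : ℝ)
      ≤ ((E.filter fun α => ∀ i, ¬(x ∈ α i ∧ y ∈ α i)) ∪
        (E.filter fun α => ∀ i, ¬(y ∈ α i ∧ z ∈ α i))).card := by
        exact_mod_cast Finset.card_le_card hsub
    _ ≤ _ := by exact_mod_cast Finset.card_union_le _ _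

lemma hamDist_eq_zero {r : ℕ} {E : Finset (Fin r → Set X)} {x y : X}
    (h : ∀ α ∈ E, ∃ i, x ∈ α i ∧ y ∈ α i) : hamDist E x y = 0 := by
  classical
  unfold hamDist
  have : (E.filter fun α => ∀ i, ¬(x ∈ α i ∧ y ∈ α i)) = ∅ := by
    rw [Finset.filter_eq_empty_iff]
    intro α hα hall
    obtain ⟨i, hi⟩ := h α hα
    exact hall i hi
  rw [this]; simp

lemma measurable_hamDist {r : ℕ} {E : Finset (Fin r → Set X)}
    (hE : ∀ α ∈ E, ∀ i, MeasurableSet (α i)) (x : X) :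
    Measurable (fun y => hamDist E x y) := by
  classical
  unfold hamDist
  have heq : ∀ y, ((E.filter fun α => ∀ i, ¬(x ∈ α i ∧ y ∈ α i)).card : ℝ) =
      ∑ α ∈ E, if (∀ i, ¬(x ∈ α i ∧ y ∈ α i)) then (1:ℝ) else 0 := by
    intro y
    rw [Finset.card_filter]
    push_cast
    rfl
  simp only [heq]
  apply Measurable.div_const
  apply Finset.measurable_sum
  intro α hα
  have hms : MeasurableSet {y : X | ∀ i, ¬(x ∈ α i ∧ y ∈ α i)} := by
    have : {y : X | ∀ i, ¬(x ∈ α i ∧ y ∈ α i)} = ⋂ i, {y : X | ¬(x ∈ α i ∧ y ∈ α i)} := by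
      ext y; simp
    rw [this]
    apply MeasurableSet.iInter
    intro i
    by_cases hx : x ∈ α i
    · have : {y : X | ¬(x ∈ α i ∧ y ∈ α i)} = (α i)ᶜ := by ext y; simp [hx]
      rw [this]; exact (hE α hα i).compl
    · have : {y : X | ¬(x ∈ α i ∧ y ∈ α i)} = Set.univ := by ext y; simp [hx]
      rw [this]; exact MeasurableSet.univ
  exact Measurable.ite hms measurable_const measurable_const

lemma exists_good_subset (μ : Measure X) [IsFiniteMeasure μ] {r : ℕ}
    (E : ℕ → Finset (Fin r → Set X))
    (hpart : ∀ n, ∀ α ∈ E n, IsPartition μ α)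
    {ε δ : ℝ} (hε : 0 < ε) (hδ : 0 < δ) (B : Set X) (hB : MeasurableSet B)
    (hlim : ∀ x y, x ∈ B → y ∈ B → limsup (fun n => hamDist (E n) x y) atTop < ε / 2) :
    ∃ (D : Set X) (N : ℕ), MeasurableSet D ∧ D ⊆ B ∧ μ (B \ D) < ENNReal.ofReal δ ∧
      ∀ y ∈ D, ∀ z ∈ D, ∀ n, N ≤ n → hamDist (E n) y z < ε := by
  rcases B.eq_empty_or_nonempty with rfl | ⟨x, hx⟩
  · exact ⟨∅, 0, MeasurableSet.empty, subset_rfl,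
      by simpa using ENNReal.ofReal_pos.mpr hδ, by simp⟩
  set C : ℕ → Set X := fun N => B ∩ ⋂ n, {y | N ≤ n → hamDist (E n) x y < ε / 2} with hC
  have hCm : ∀ N, MeasurableSet (C N) := by
    intro N
    apply hB.inter
    apply MeasurableSet.iInter
    intro n
    by_cases hn : N ≤ n
    · have : {y : X | N ≤ n → hamDist (E n) x y < ε / 2}
          = (fun y => hamDist (E n) x y) ⁻¹' Set.Iio (ε / 2) := by
        ext y; simp [hn]
      rw [this]
      exact measurable_hamDist (fun α hα i => (hpart n α hα).1 i) x measurableSet_Iio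
    · have : {y : X | N ≤ n → hamDist (E n) x y < ε / 2} = Set.univ := by
        ext y; simp [hn]
      rw [this]; exact MeasurableSet.univ
  have hmono : Antitone (fun N => B \ C N) := by
    intro N M hNM
    apply Set.diff_subset_diff_right
    apply Set.inter_subset_inter_right
    intro y hy
    simp only [Set.mem_iInter, Set.mem_setOf_eq] at hy ⊢
    intro n hn
    exact hy n (hNM.trans hn)
  have hempty : (⋂ N, B \ C N) = ∅ := by
    rw [Set.eq_empty_iff_forall_notMem]
    intro y hy
    simp only [Set.mem_iInter, Set.mem_diff] at hy
    have hyB : y ∈ B := (hy 0).1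
    have hbd : IsBoundedUnder (· ≤ ·) atTop (fun n => hamDist (E n) x y) :=
      isBoundedUnder_of ⟨1, fun n => hamDist_le_one _ _ _⟩
    have := eventually_lt_of_limsup_lt (hlim x y hx hyB) hbd
    rw [eventually_atTop] at this
    obtain ⟨N, hN⟩ := this
    exact (hy N).2 ⟨hyB, Set.mem_iInter.mpr fun n => by
      simp only [Set.mem_setOf_eq]; exact fun hn => hN n hn⟩
  have htend : Tendsto (fun N => μ (B \ C N)) atTop (𝓝 0) := by
    have := tendsto_measure_iInter_atTop
      (μ := μ) (s := fun N => B \ C N)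
      (fun N => (hB.diff (hCm N)).nullMeasurableSet) hmono ⟨0, measure_ne_top μ _⟩
    rw [hempty] at this
    simpa [Function.comp_def] using this
  have := htend.eventually_lt_const (ENNReal.ofReal_pos.mpr hδ)
  rw [eventually_atTop] at this
  obtain ⟨N, hN⟩ := this
  refine ⟨C N, N, hCm N, Set.inter_subset_left, hN N le_rfl, ?_⟩
  intro y hy z hz n hn
  have hdisj : ∀ α ∈ E n, Pairwise (Function.onFun Disjoint α) :=
    fun α hα => (hpart n α hα).2.1
  have hy' : hamDist (E n) x y < ε / 2 := by
    have := hy.2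
    rw [Set.mem_iInter] at this
    exact this n hn
  have hz' : hamDist (E n) x z < ε / 2 := by
    have := hz.2
    rw [Set.mem_iInter] at this
    exact this n hn
  calc hamDist (E n) y z ≤ hamDist (E n) y x + hamDist (E n) x z := hamDist_triangle hdisj y x z
    _ = hamDist (E n) x y + hamDist (E n) x z := by rw [hamDist_symm]
    _ < ε / 2 + ε / 2 := add_lt_add hy' hz'
    _ = ε := by ring


/-- If a sequence `(E_n)` of finite subsets of `𝔓_r` is mean equicontinuous
(in `limsup` form), then for every `ε > 0` there are pairwise disjoint measurable sets
`B_1,…,B_k` with `μ(⋃ B_i) > 1 − ε` such that points in a common `B_i` are `ε`-close in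
`H_{E_n}` for **all** `n`. -/
theorem meanEquicontinuous_uniform_upgrade (μ : Measure X) [IsProbabilityMeasure μ]
    {r : ℕ} (hr : 2 ≤ r) (E : ℕ → Finset (Fin r → Set X))
    (hpart : ∀ n, ∀ α ∈ E n, IsPartition μ α)
    (hme : ∀ ε > (0 : ℝ), ∃ (k : ℕ) (B : Fin k → Set X),
      (∀ i, MeasurableSet (B i)) ∧ Pairwise (Function.onFun Disjoint B) ∧
      μ (⋃ i, B i) > 1 - ENNReal.ofReal ε ∧
      ∀ (i : Fin k) (x y : X), x ∈ B i → y ∈ B i →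
        limsup (fun n => hamDist (E n) x y) atTop < ε) :
    ∀ ε > (0 : ℝ), ∃ (k : ℕ) (B : Fin k → Set X),
      (∀ i, MeasurableSet (B i)) ∧ Pairwise (Function.onFun Disjoint B) ∧
      μ (⋃ i, B i) > 1 - ENNReal.ofReal ε ∧
      ∀ (i : Fin k) (x y : X), x ∈ B i → y ∈ B i →
        ∀ n : ℕ, hamDist (E n) x y < ε := by
  classical
  intro ε hε
  by_cases hε1 : 1 < ε
  · refine ⟨1, fun _ => Set.univ, fun _ => MeasurableSet.univ, Subsingleton.pairwise, ?_, ?_⟩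
    · have h1 : μ (⋃ _ : Fin 1, (Set.univ : Set X)) = 1 := by
        rw [Set.iUnion_const]; exact measure_univ
      rw [h1]
      exact ENNReal.sub_lt_self ENNReal.one_ne_top one_ne_zero
        (ne_of_gt (ENNReal.ofReal_pos.mpr (by linarith)))
    · intro i x y hx hy n
      exact lt_of_le_of_lt (hamDist_le_one _ _ _) hε1
  have hε1' : ε ≤ 1 := not_lt.mp hε1
  obtain ⟨k, B, hBm, hBd, hBμ, hBlim⟩ := hme (ε / 2) (by positivity)
  set δ : ℝ := ε / (2 * (k + 1)) with hδdef
  have hδ : 0 < δ := by positivity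
  choose D N hDm hDsub hDμ hDprop using fun i : Fin k =>
    exists_good_subset μ E hpart hε hδ (B i) (hBm i)
      (fun x y hx hy => hBlim i x y hx hy)
  set S : Fin k → Finset (Fin r → Set X) := fun i => (Finset.range (N i)).biUnion E with hS
  have hSatom : ∀ i, ∀ α ∈ S i, ∀ j, MeasurableSet (α j) := by
    intro i α hα j
    obtain ⟨m, _, hm⟩ := Finset.mem_biUnion.mp hα
    exact (hpart m α hm).1 j
  have hSdisj : ∀ i, ∀ α ∈ S i, Pairwise (Function.onFun Disjoint α) := by
    intro i α hα
    obtain ⟨m, _, hm⟩ := Finset.mem_biUnion.mp hα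
    exact (hpart m α hm).2.1
  have hSnull : ∀ i, ∀ α ∈ S i, μ (⋃ j, α j)ᶜ = 0 := by
    intro i α hα
    obtain ⟨m, _, hm⟩ := Finset.mem_biUnion.mp hα
    exact (hpart m α hm).2.2
  set T := (i : Fin k) × ({α // α ∈ S i} → Fin r) with hT
  set cell : T → Set X :=
    fun t => D t.1 ∩ ⋂ a : {α // α ∈ S t.1}, (a : Fin r → Set X) (t.2 a) with hcell
  have hcellm : ∀ t, MeasurableSet (cell t) :=
    fun t => (hDm t.1).inter (MeasurableSet.iInter fun a => hSatom t.1 a a.2 (t.2 a))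
  have hcellD : ∀ t, cell t ⊆ D t.1 := fun t => Set.inter_subset_left
  have hcelldisj : Pairwise (Function.onFun Disjoint cell) := by
    rintro ⟨i, g⟩ ⟨i', g'⟩ hne
    by_cases hii : i = i'
    · subst hii
      have hg : g ≠ g' := fun h => hne (by rw [h])
      obtain ⟨a, ha⟩ := Function.ne_iff.mp hg
      have hd : Disjoint ((a : Fin r → Set X) (g a)) ((a : Fin r → Set X) (g' a)) :=
        hSdisj i a a.2 ha
      exact hd.mono (Set.inter_subset_right.trans (Set.iInter_subset _ a))
        (Set.inter_subset_right.trans (Set.iInter_subset _ a))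
    · exact (hBd hii).mono ((hcellD _).trans (hDsub i)) ((hcellD _).trans (hDsub i'))
  set bad : Set X := ⋃ i : Fin k, ⋃ α ∈ ((S i : Set (Fin r → Set X))), (⋃ j, α j)ᶜ with hbaddef
  have hbad : μ bad = 0 := by
    apply measure_iUnion_null
    intro i
    rw [measure_biUnion_null_iff (S i).countable_toSet]
    exact fun α hα => hSnull i α hα
  have hcover : (⋃ i, D i) ⊆ (⋃ t, cell t) ∪ bad := by
    intro y hy
    obtain ⟨i, hyD⟩ := Set.mem_iUnion.mp hy
    by_cases hb : y ∈ bad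
    · exact Or.inr hb
    · left
      have hall : ∀ a : {α // α ∈ S i}, ∃ j, y ∈ (a : Fin r → Set X) j := by
        intro a
        by_contra h
        push_neg at h
        apply hb
        exact Set.mem_iUnion.mpr ⟨i, Set.mem_biUnion (Finset.mem_coe.mpr a.2) (by
          simpa [Set.mem_iUnion] using h)⟩
      choose g hg using hall
      exact Set.mem_iUnion.mpr ⟨⟨i, g⟩, hyD, Set.mem_iInter.mpr hg⟩
  have hUV : μ (⋃ i, B i) ≤ μ (⋃ t, cell t) + ENNReal.ofReal (ε / 2) := by
    have hsub1 : (⋃ i, B i) ⊆ (⋃ i, D i) ∪ ⋃ i, (B i \ D i) := by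
      intro x hx
      obtain ⟨i, hxB⟩ := Set.mem_iUnion.mp hx
      by_cases hxD : x ∈ D i
      · exact Or.inl (Set.mem_iUnion.mpr ⟨i, hxD⟩)
      · exact Or.inr (Set.mem_iUnion.mpr ⟨i, hxB, hxD⟩)
    have hbound : (k : ℝ≥0∞) * ENNReal.ofReal δ ≤ ENNReal.ofReal (ε / 2) := by
      rw [show ((k : ℝ≥0∞)) = ENNReal.ofReal (k : ℝ) by simp,
        ← ENNReal.ofReal_mul (by positivity)]
      apply ENNReal.ofReal_le_ofReal
      rw [hδdef, ← mul_div_assoc, div_le_div_iff₀ (by positivity) (by norm_num)]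
      nlinarith [hε.le, Nat.cast_nonneg (α := ℝ) k]
    calc μ (⋃ i, B i) ≤ μ ((⋃ i, D i) ∪ ⋃ i, (B i \ D i)) := measure_mono hsub1
      _ ≤ μ (⋃ i, D i) + μ (⋃ i, (B i \ D i)) := measure_union_le _ _
      _ ≤ μ ((⋃ t, cell t) ∪ bad) + ∑' i : Fin k, μ (B i \ D i) :=
          add_le_add (measure_mono hcover) (measure_iUnion_le _)
      _ ≤ (μ (⋃ t, cell t) + μ bad) + ∑ i : Fin k, ENNReal.ofReal δ := by
          rw [tsum_fintype]
          exact add_le_add (measure_union_le _ _)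
            (Finset.sum_le_sum fun i _ => (hDμ i).le)
      _ = μ (⋃ t, cell t) + (k : ℝ≥0∞) * ENNReal.ofReal δ := by
          rw [hbad, add_zero, Finset.sum_const, Finset.card_univ, Fintype.card_fin,
            nsmul_eq_mul]
      _ ≤ μ (⋃ t, cell t) + ENNReal.ofReal (ε / 2) := add_le_add_right hbound _
  refine ⟨Fintype.card T, fun j => cell ((Fintype.equivFin T).symm j),
    fun j => hcellm _, fun j j' hjj' => hcelldisj ((Fintype.equivFin T).symm.injective.ne hjj'),
    ?_, ?_⟩
  · have hWeq : (⋃ j, cell ((Fintype.equivFin T).symm j)) = ⋃ t, cell t :=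
      (Fintype.equivFin T).symm.surjective.iUnion_comp cell
    rw [hWeq]
    have key : 1 - ENNReal.ofReal (ε / 2) < μ (⋃ t, cell t) + ENNReal.ofReal (ε / 2) :=
      lt_of_lt_of_le hBμ hUV
    have heq2 : (1 : ℝ≥0∞) - ENNReal.ofReal ε
        = (1 - ENNReal.ofReal (ε / 2)) - ENNReal.ofReal (ε / 2) := by
      rw [tsub_tsub, ← ENNReal.ofReal_add (by positivity) (by positivity)]
      norm_num
    rw [heq2]
    apply ENNReal.sub_lt_of_lt_add _ key
    apply ENNReal.le_sub_of_add_le_right ENNReal.ofReal_ne_top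
    rw [← ENNReal.ofReal_add (by positivity) (by positivity)]
    calc ENNReal.ofReal (ε / 2 + ε / 2) = ENNReal.ofReal ε := by norm_num
      _ ≤ ENNReal.ofReal 1 := ENNReal.ofReal_le_ofReal hε1'
      _ = 1 := ENNReal.ofReal_one
  · have hmain : ∀ t : T, ∀ x ∈ cell t, ∀ y ∈ cell t, ∀ n, hamDist (E n) x y < ε := by
      rintro ⟨i, g⟩ x hx y hy n
      have hxD : x ∈ D i := hx.1
      have hyD : y ∈ D i := hy.1
      by_cases hn : N i ≤ n
      · exact hDprop i x hxD y hyD n hn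
      · have hz : hamDist (E n) x y = 0 := by
          apply hamDist_eq_zero
          intro α hα
          have hαS : α ∈ S i := Finset.mem_biUnion.mpr ⟨n, Finset.mem_range.mpr (not_le.mp hn), hα⟩
          refine ⟨g ⟨α, hαS⟩, ?_, ?_⟩
          · exact Set.mem_iInter.mp hx.2 ⟨α, hαS⟩
          · exact Set.mem_iInter.mp hy.2 ⟨α, hαS⟩
        rw [hz]
        exact hε
    exact fun j x y hx hy n => hmain _ x hx y hy n
end

section
/- For a topological dynamical system (X,d,G) with G-invariant Borel probability measure μ and a subset S of G: μ has bounded (S,d)-mean complexity (covering numbers 𝒞_d(F,ε) with respect to the averaged metric d̄_F(x,y) = (1/|F|)Σ_{g∈F} d(gx,gy) are bounded uniformly over finite F ⊂ S, for each ε) if and only if every finite measurable partition of X has bounded mean complexity along S (covering numbers with respect to the normalized Hamming distance H_{F⁻¹α} are bounded uniformly over finite F ⊂ S, for each ε). -/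
open MeasureTheory Filter Real Topology
open scoped symmDiff ENNReal

variable {X : Type*} [MeasurableSpace X]

open Classical in
/-- `H_{F⁻¹α}(x,y) = (1/|F|)|{g ∈ F : gx, gy lie in different atoms of α}|`. -/
noncomputable def hamOrbit {G : Type*} [Group G] [MulAction G X] {ι : Type*}
    (α : ι → Set X) (F : Finset G) (x y : X) : ℝ :=
  ((F.filter fun g => ∀ i, ¬(g • x ∈ α i ∧ g • y ∈ α i)).card : ℝ) / F.card

/-- The averaged metric `d̄_F(x,y) = (1/|F|) Σ_{g∈F} d(gx,gy)`. -/
noncomputable def dBar [PseudoMetricSpace X] {G : Type*} [Group G] [MulAction G X]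
    (F : Finset G) (x y : X) : ℝ :=
  (∑ g ∈ F, dist (g • x) (g • y)) / F.card

lemma pair_gap {X : Type*} [MetricSpace X] {s t : Set X} (hs : IsCompact s) (ht : IsClosed t)
    (hst : Disjoint s t) : ∃ δ > (0:ℝ), ∀ x ∈ s, ∀ y ∈ t, δ ≤ dist x y := by
  obtain ⟨r, hr, h⟩ := EMetric.exists_pos_forall_lt_edist hs ht hst
  refine ⟨r, by exact_mod_cast hr, fun x hx y hy => ?_⟩
  have h1 := (h x hx y hy).le
  rw [edist_dist] at h1
  calc (r:ℝ) = ENNReal.toReal (r : ℝ≥0∞) := by simp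
  _ ≤ ENNReal.toReal (ENNReal.ofReal (dist x y)) := ENNReal.toReal_mono ENNReal.ofReal_ne_top h1
  _ = dist x y := ENNReal.toReal_ofReal dist_nonneg

lemma exists_uniform_gap {X : Type*} [MetricSpace X] {r : ℕ} (hr : 0 < r) (K : Fin r → Set X)
    (hK : ∀ i, IsCompact (K i)) (hd : Pairwise (Function.onFun Disjoint K)) :
    ∃ δ > (0:ℝ), ∀ i j, i ≠ j → ∀ x ∈ K i, ∀ y ∈ K j, δ ≤ dist x y := by
  have hpair : ∀ p : Fin r × Fin r, ∃ δ > (0:ℝ),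
      p.1 ≠ p.2 → ∀ x ∈ K p.1, ∀ y ∈ K p.2, δ ≤ dist x y := by
    intro p
    by_cases h : p.1 = p.2
    · exact ⟨1, one_pos, fun hne => absurd h hne⟩
    · obtain ⟨δ, hδ, hgap⟩ := pair_gap (hK p.1) (hK p.2).isClosed (hd h)
      exact ⟨δ, hδ, fun _ => hgap⟩
  choose f hf hf2 using hpair
  have hne : (Finset.univ : Finset (Fin r × Fin r)).Nonempty := by
    have : Nonempty (Fin r) := ⟨⟨0, hr⟩⟩
    exact Finset.univ_nonempty
  refine ⟨Finset.univ.inf' hne f, ?_, fun i j hij x hx y hy => ?_⟩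
  · exact (Finset.lt_inf'_iff hne).mpr fun p _ => hf p
  · exact le_trans (Finset.inf'_le f (Finset.mem_univ (i, j))) (hf2 (i,j) hij x hx y hy)


lemma exists_fine_partition {X : Type*} [MetricSpace X] [CompactSpace X] [MeasurableSpace X]
    [BorelSpace X] {ρ : ℝ} (hρ : 0 < ρ) :
    ∃ (r : ℕ) (α : Fin r → Set X), (∀ i, MeasurableSet (α i)) ∧
      Pairwise (Function.onFun Disjoint α) ∧ (⋃ i, α i) = Set.univ ∧
      ∀ i, ∀ x ∈ α i, ∀ y ∈ α i, dist x y < 2*ρ := by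
  classical
  obtain ⟨t, ht⟩ := isCompact_univ.elim_finite_subcover (fun x : X => Metric.ball x ρ)
    (fun x => Metric.isOpen_ball) (fun x _ => Set.mem_iUnion.mpr ⟨x, Metric.mem_ball_self hρ⟩)
  set r := t.card with hr
  set c : Fin r → X := fun i => (t.equivFin.symm i : X) with hc
  set α : Fin r → Set X := fun i =>
    Metric.ball (c i) ρ \ ⋃ (j : Fin r) (_ : j < i), Metric.ball (c j) ρ with hα
  have hαball : ∀ i, α i ⊆ Metric.ball (c i) ρ := fun i => Set.diff_subset
  refine ⟨r, α, ?_, ?_, ?_, ?_⟩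
  · intro i
    exact (Metric.isOpen_ball.measurableSet).diff
      (MeasurableSet.iUnion fun j => MeasurableSet.iUnion fun _ => Metric.isOpen_ball.measurableSet)
  · intro i j hij
    have key : ∀ i j : Fin r, i < j → Disjoint (α i) (α j) := by
      intro i j hlt
      rw [Set.disjoint_left]
      intro a hai haj
      exact haj.2 (Set.mem_iUnion.mpr ⟨i, Set.mem_iUnion.mpr ⟨hlt, hαball i hai⟩⟩)
    rcases lt_or_gt_of_ne hij with h | h
    · exact key i j h
    · exact (key j i h).symm
  · apply Set.eq_univ_of_forall
    intro x
    have hx : x ∈ ⋃ y ∈ t, Metric.ball y ρ := ht (Set.mem_univ x)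
    obtain ⟨y, hyt, hxy⟩ := Set.mem_iUnion₂.mp hx
    have hex : ∃ i : Fin r, x ∈ Metric.ball (c i) ρ := by
      refine ⟨t.equivFin ⟨y, hyt⟩, ?_⟩
      simp only [hc, Equiv.symm_apply_apply]
      exact hxy
    set s : Finset (Fin r) := Finset.univ.filter (fun i => x ∈ Metric.ball (c i) ρ) with hs
    have hsne : s.Nonempty := ⟨hex.choose, Finset.mem_filter.mpr ⟨Finset.mem_univ _, hex.choose_spec⟩⟩
    set i₀ := s.min' hsne with hi₀
    have hi₀s : i₀ ∈ s := s.min'_mem hsne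
    refine Set.mem_iUnion.mpr ⟨i₀, (Finset.mem_filter.mp hi₀s).2, ?_⟩
    intro hmem
    obtain ⟨j, hjmem⟩ := Set.mem_iUnion.mp hmem
    obtain ⟨hji, hjball⟩ := Set.mem_iUnion.mp hjmem
    have : i₀ ≤ j := s.min'_le j (Finset.mem_filter.mpr ⟨Finset.mem_univ j, hjball⟩)
    exact absurd hji (not_lt.mpr this)
  · intro i x hx y hy
    calc dist x y ≤ dist x (c i) + dist (c i) y := dist_triangle _ _ _
    _ < ρ + ρ := add_lt_add (Metric.mem_ball.mp (hαball i hx))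
        (by rw [dist_comm]; exact Metric.mem_ball.mp (hαball i hy))
    _ = 2*ρ := by ring

set_option maxHeartbeats 1000000 in
/-- For a topological dynamical system `(X,d,G)` with invariant Borel
probability measure `μ` and `S ⊆ G`: `μ` has bounded `(S,d)`-mean complexity iff every
finite measurable partition of `X` has bounded mean complexity along `S`. -/
theorem boundedMeanComplexity_metric_iff_partitions
    {X : Type*} [MetricSpace X] [CompactSpace X] [MeasurableSpace X] [BorelSpace X]
    {G : Type*} [Group G] [MulAction G X]
    (hcont : ∀ g : G, Continuous (fun x : X => g • x))
    (μ : Measure X) [IsProbabilityMeasure μ]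
    (hmp : ∀ g : G, MeasurePreserving (fun x : X => g • x) μ μ)
    (S : Set G) :
    (∀ ε > (0 : ℝ), ∃ C : ℕ, ∀ F : Finset G, ↑F ⊆ S →
      ∃ D : Finset X, D.card ≤ C ∧
        μ (⋃ x ∈ D, {y : X | dBar F x y < ε}) > 1 - ENNReal.ofReal ε) ↔
    (∀ (r : ℕ) (α : Fin r → Set X), IsPartition μ α →
      ∀ ε > (0 : ℝ), ∃ C : ℕ, ∀ F : Finset G, ↑F ⊆ S →
        ∃ D : Finset X, D.card ≤ C ∧
          μ (⋃ x ∈ D, {y : X | hamOrbit α F x y < ε}) > 1 - ENNReal.ofReal ε) := by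
  constructor
  · intro hmet
    intro r α hα ε hε
    -- reduce to ε ≤ 1/2
    set e := min ε (1/2) with he
    have he0 : 0 < e := lt_min hε (by norm_num)
    have he2 : e ≤ 1/2 := min_le_right _ _
    have heε : e ≤ ε := min_le_left _ _
    suffices h : ∃ C : ℕ, ∀ F : Finset G, ↑F ⊆ S →
        ∃ D : Finset X, D.card ≤ C ∧
          μ (⋃ x ∈ D, {y : X | hamOrbit α F x y < e}) > 1 - ENNReal.ofReal e by
      obtain ⟨C, hC⟩ := h
      refine ⟨C, fun F hF => ?_⟩
      obtain ⟨D, hDc, hDμ⟩ := hC F hF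
      refine ⟨D, hDc, ?_⟩
      calc 1 - ENNReal.ofReal ε ≤ 1 - ENNReal.ofReal e :=
            tsub_le_tsub_left (ENNReal.ofReal_le_ofReal heε) 1
      _ < μ (⋃ x ∈ D, {y : X | hamOrbit α F x y < e}) := hDμ
      _ ≤ _ := measure_mono (Set.iUnion₂_mono fun x _ y hy => lt_of_lt_of_le hy heε)
    clear heε hε he
    -- r = 0 is impossible
    rcases Nat.eq_zero_or_pos r with hr | hr
    · exfalso
      subst hr
      have h0 := hα.2.2
      rw [Set.iUnion_of_empty, Set.compl_empty, measure_univ] at h0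
      exact one_ne_zero h0
    classical
    -- compact approximations of atoms
    have hrpos : (0:ℝ) < r := by exact_mod_cast hr
    have hset : ∀ i : Fin r, ∃ K, K ⊆ α i ∧ IsCompact K ∧
        μ (α i \ K) < ENNReal.ofReal (e^2/(32*r)) := fun i =>
      (hα.1 i).exists_isCompact_diff_lt (measure_ne_top μ _)
        (ne_of_gt (ENNReal.ofReal_pos.mpr (by positivity)))
    choose K hKsub hKcomp hKμ using hset
    set U := (⋃ i, K i)ᶜ with hU
    have hUmeas : MeasurableSet U :=
      (MeasurableSet.iUnion fun i => (hKcomp i).isClosed.measurableSet).compl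
    have hUμ : μ U ≤ ENNReal.ofReal (e^2/32) := by
      have hsub : U ⊆ (⋃ i, α i)ᶜ ∪ ⋃ i, (α i \ K i) := by
        intro x hx
        by_cases hx2 : x ∈ ⋃ i, α i
        · obtain ⟨i, hi⟩ := Set.mem_iUnion.mp hx2
          exact Or.inr (Set.mem_iUnion.mpr ⟨i, hi, fun hK => hx (Set.mem_iUnion.mpr ⟨i, hK⟩)⟩)
        · exact Or.inl hx2
      calc μ U ≤ μ ((⋃ i, α i)ᶜ) + μ (⋃ i, (α i \ K i)) :=
            le_trans (measure_mono hsub) (measure_union_le _ _)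
      _ ≤ 0 + ∑ i, μ (α i \ K i) := add_le_add (le_of_eq hα.2.2) (measure_iUnion_fintype_le _ _)
      _ ≤ ∑ i : Fin r, ENNReal.ofReal (e^2/(32*r)) := by
          rw [zero_add]
          exact Finset.sum_le_sum (fun i _ => (hKμ i).le)
      _ = ENNReal.ofReal (e^2/32) := by
          rw [Finset.sum_const, Finset.card_univ, Fintype.card_fin, nsmul_eq_mul,
            ← ENNReal.ofReal_natCast r, ← ENNReal.ofReal_mul (by positivity)]
          congr 1
          field_simp
    -- uniform gap between the compacts
    obtain ⟨δ, hδ, hgap⟩ := exists_uniform_gap hr K hKcomp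
      (fun i j hij => ((hα.2.1 hij).mono (hKsub i) (hKsub j)))
    set ε₁ := min (e/4) (e*δ/16) with hε₁def
    have hε₁ : 0 < ε₁ := lt_min (by positivity) (by positivity)
    have hε₁4 : ε₁ ≤ e/4 := min_le_left _ _
    have hε₁δ : ε₁ ≤ e*δ/16 := min_le_right _ _
    obtain ⟨C, hC⟩ := hmet ε₁ hε₁
    refine ⟨C + 1, fun F hF => ?_⟩
    by_cases hFe : F = ∅
    · subst hFe
      have hXne : Nonempty X := by
        by_contra h
        rw [not_nonempty_iff] at h
        have h1 : μ Set.univ = 1 := measure_univ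
        rw [Set.univ_eq_empty_iff.mpr h, measure_empty] at h1
        exact zero_ne_one h1
      obtain ⟨x₀⟩ := hXne
      refine ⟨{x₀}, by simp, ?_⟩
      have huniv : (⋃ x ∈ ({x₀} : Finset X), {y : X | hamOrbit α (∅ : Finset G) x y < e})
          = Set.univ := by
        apply Set.eq_univ_of_forall
        intro y
        refine Set.mem_iUnion₂.mpr ⟨x₀, Finset.mem_singleton_self _, ?_⟩
        simpa [hamOrbit] using he0
      rw [huniv, measure_univ]
      exact ENNReal.sub_lt_self ENNReal.one_ne_top one_ne_zero
        (ne_of_gt (ENNReal.ofReal_pos.mpr he0))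
    -- main case: F nonempty
    have hFne : F.Nonempty := Finset.nonempty_iff_ne_empty.mpr hFe
    have hFc : (0:ℝ) < F.card := by exact_mod_cast Finset.card_pos.mpr hFne
    set cnt : X → ℝ≥0∞ := fun y => ∑ g ∈ F, U.indicator (1 : X → ℝ≥0∞) (g • y) with hcnt
    have hcntm : Measurable cnt :=
      Finset.measurable_sum _ (fun g _ =>
        (measurable_one.indicator hUmeas).comp (hcont g).measurable)
    have hcnt_count : ∀ w : X, cnt w = ((F.filter fun g => g • w ∈ U).card : ℝ≥0∞) := by
      intro w
      rw [hcnt]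
      simp only [Set.indicator_apply, Pi.one_apply]
      rw [Finset.sum_boole]
    have hlint : ∫⁻ y, cnt y ∂μ = F.card * μ U := by
      rw [hcnt]
      simp only
      have hm : ∀ g ∈ F, Measurable fun y : X => U.indicator (1 : X → ℝ≥0∞) (g • y) :=
        fun g _ => (measurable_one.indicator hUmeas).comp (hcont g).measurable
      rw [lintegral_finset_sum _ hm]
      have heach : ∀ g : G, ∫⁻ y, U.indicator (1 : X → ℝ≥0∞) (g • y) ∂μ = μ U := by
        intro g
        rw [(hmp g).lintegral_comp (measurable_one.indicator hUmeas)]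
        rw [lintegral_indicator_one hUmeas]
      rw [Finset.sum_congr rfl (fun g _ => heach g), Finset.sum_const, nsmul_eq_mul]
    set a : ℝ≥0∞ := ENNReal.ofReal (e/8) with ha
    set B := {y : X | (F.card : ℝ≥0∞) * a ≤ cnt y} with hB
    have hBμ : μ B ≤ ENNReal.ofReal (e/4) := by
      have h1 := mul_meas_ge_le_lintegral₀ (μ := μ) hcntm.aemeasurable ((F.card : ℝ≥0∞) * a)
      rw [hlint] at h1
      have hane : a ≠ 0 := ne_of_gt (ENNReal.ofReal_pos.mpr (by positivity))
      have hatop : a ≠ ⊤ := ENNReal.ofReal_ne_top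
      have hcne : (F.card : ℝ≥0∞) ≠ 0 := by
        simp [Finset.card_eq_zero, hFe]
      have hctop : (F.card : ℝ≥0∞) ≠ ⊤ := ENNReal.natCast_ne_top _
      have h2 : μ B ≤ (F.card * μ U) / ((F.card : ℝ≥0∞) * a) := by
        rw [ENNReal.le_div_iff_mul_le (Or.inl (mul_ne_zero hcne hane))
          (Or.inl (ENNReal.mul_ne_top hctop hatop))]
        rw [mul_comm]
        exact h1
      rw [ENNReal.mul_div_mul_left _ _ hcne hctop] at h2
      calc μ B ≤ μ U / a := h2
      _ ≤ ENNReal.ofReal (e^2/32) / a := by exact ENNReal.div_le_div_right hUμ a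
      _ = ENNReal.ofReal ((e^2/32) / (e/8)) := (ENNReal.ofReal_div_of_pos (by positivity)).symm
      _ = ENNReal.ofReal (e/4) := by
          congr 1
          field_simp
          ring
    obtain ⟨D', hD'card, hD'μ⟩ := hC F hF
    set V : X → Set X := fun x => {y | dBar F x y < ε₁} with hV
    have hrep0 : ∀ x : X, ∃ z : X, ((V x \ B).Nonempty → z ∈ V x \ B) := by
      intro x
      by_cases h : (V x \ B).Nonempty
      · exact ⟨h.choose, fun _ => h.choose_spec⟩
      · exact ⟨x, fun h' => absurd h' h⟩
    choose rep hrep using hrep0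
    have hcount : ∀ w : X, w ∉ B → ((F.filter fun g => g • w ∈ U).card : ℝ) < F.card * (e/8) := by
      intro w hw
      have h1 : cnt w < (F.card : ℝ≥0∞) * a := lt_of_not_ge hw
      rw [hcnt_count w] at h1
      have h2 : ENNReal.ofReal ((F.filter fun g => g • w ∈ U).card : ℝ)
          < ENNReal.ofReal ((F.card : ℝ) * (e/8)) := by
        rw [ENNReal.ofReal_natCast, ENNReal.ofReal_mul (Nat.cast_nonneg _),
          ENNReal.ofReal_natCast]
        exact h1
      exact (ENNReal.ofReal_lt_ofReal_iff (by positivity)).mp h2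
    have hkey : ∀ y z : X, y ∉ B → z ∉ B → dBar F y z < 2*ε₁ → hamOrbit α F y z < e := by
      intro y z hy hz hd
      rw [hamOrbit, div_lt_iff₀ hFc]
      set F1 := F.filter (fun g => δ ≤ dist (g • y) (g • z)) with hF1
      set F2 := F.filter (fun g => g • y ∈ U) with hF2
      set F3 := F.filter (fun g => g • z ∈ U) with hF3
      have hsum : ∑ g ∈ F, dist (g • y) (g • z) < 2*ε₁ * F.card := by
        rw [dBar, div_lt_iff₀ hFc] at hd
        exact hd
      have hF1card : (F1.card : ℝ) * δ ≤ ∑ g ∈ F, dist (g • y) (g • z) := by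
        calc (F1.card : ℝ) * δ = ∑ _g ∈ F1, δ := by rw [Finset.sum_const, nsmul_eq_mul]
        _ ≤ ∑ g ∈ F1, dist (g • y) (g • z) :=
            Finset.sum_le_sum (fun g hg => (Finset.mem_filter.mp hg).2)
        _ ≤ ∑ g ∈ F, dist (g • y) (g • z) :=
            Finset.sum_le_sum_of_subset_of_nonneg (Finset.filter_subset _ _)
              (fun _ _ _ => dist_nonneg)
      have hF1b : (F1.card : ℝ) < F.card * (e/8) := by
        have h3 : (F1.card:ℝ) * δ < (e*δ/8) * F.card := by
          refine lt_of_le_of_lt hF1card (lt_of_lt_of_le hsum ?_)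
          have : 2*ε₁ ≤ e*δ/8 := by linarith
          nlinarith
        nlinarith
      have hsubset : (F.filter fun g => ∀ i, ¬(g • y ∈ α i ∧ g • z ∈ α i)) ⊆ (F1 ∪ F2) ∪ F3 := by
        intro g hg
        obtain ⟨hgF, hbad⟩ := Finset.mem_filter.mp hg
        simp only [Finset.mem_union, hF1, hF2, hF3, Finset.mem_filter]
        by_cases h1 : δ ≤ dist (g • y) (g • z)
        · exact Or.inl (Or.inl ⟨hgF, h1⟩)
        by_cases h2 : g • y ∈ U
        · exact Or.inl (Or.inr ⟨hgF, h2⟩)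
        by_cases h3 : g • z ∈ U
        · exact Or.inr ⟨hgF, h3⟩
        exfalso
        rw [hU, Set.notMem_compl_iff] at h2 h3
        obtain ⟨i, hgi⟩ := Set.mem_iUnion.mp h2
        obtain ⟨j, hgj⟩ := Set.mem_iUnion.mp h3
        by_cases hij : i = j
        · subst hij
          exact hbad i ⟨hKsub i hgi, hKsub i hgj⟩
        · exact h1 (hgap i j hij _ hgi _ hgj)
      have hcard : ((F.filter fun g => ∀ i, ¬(g • y ∈ α i ∧ g • z ∈ α i)).card : ℝ)
          ≤ (F1.card : ℝ) + F2.card + F3.card := by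
        have hc1 := Finset.card_le_card hsubset
        have hc2 := le_trans hc1 (le_trans (Finset.card_union_le _ _)
          (add_le_add (Finset.card_union_le F1 F2) le_rfl))
        exact_mod_cast hc2
      have h2 := hcount y hy
      have h3 := hcount z hz
      have final : ((F.filter fun g => ∀ i, ¬(g • y ∈ α i ∧ g • z ∈ α i)).card : ℝ)
          < e * F.card := by
        have : (3:ℝ) * (F.card * (e/8)) ≤ e * F.card := by nlinarith
        linarith
      convert final using 4
      rfl
    refine ⟨D'.image rep, le_trans Finset.card_image_le (le_trans hD'card (Nat.le_succ C)), ?_⟩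
    set T := ⋃ z ∈ D'.image rep, {y : X | hamOrbit α F z y < e} with hT
    have hcover : (⋃ x ∈ D', V x) \ B ⊆ T := by
      rintro y ⟨hyV, hyB⟩
      obtain ⟨x, hxD, hyx⟩ := Set.mem_iUnion₂.mp hyV
      have hne : (V x \ B).Nonempty := ⟨y, hyx, hyB⟩
      obtain ⟨hzV, hzB⟩ := hrep x hne
      refine Set.mem_iUnion₂.mpr ⟨rep x, Finset.mem_image_of_mem rep hxD, ?_⟩
      refine hkey (rep x) y hzB hyB ?_
      have htri : dBar F (rep x) y ≤ dBar F x (rep x) + dBar F x y := by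
        rw [dBar, dBar, dBar, ← add_div]
        refine (div_le_div_iff_of_pos_right hFc).mpr ?_
        rw [← Finset.sum_add_distrib]
        exact Finset.sum_le_sum (fun g _ => dist_triangle_left _ _ _)
      have h1 : dBar F x (rep x) < ε₁ := hzV
      have h2 : dBar F x y < ε₁ := hyx
      linarith
    have hoe : ENNReal.ofReal e ≤ 1 := ENNReal.ofReal_le_one.mpr (by linarith)
    have hq : ENNReal.ofReal ε₁ ≤ 1 := ENNReal.ofReal_le_one.mpr (by linarith)
    rw [gt_iff_lt, ENNReal.sub_lt_iff_lt_right ENNReal.ofReal_ne_top hoe]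
    rw [add_comm]
    set A := ⋃ x ∈ D', V x with hA
    have h2 : μ A ≤ μ (A \ B) + μ B := by
      refine le_trans (measure_mono ?_) (measure_union_le _ _)
      intro u hu
      by_cases h : u ∈ B
      · exact Or.inr h
      · exact Or.inl ⟨hu, h⟩
    calc (1:ℝ≥0∞) = (1 - ENNReal.ofReal ε₁) + ENNReal.ofReal ε₁ := (tsub_add_cancel_of_le hq).symm
    _ < μ A + ENNReal.ofReal ε₁ := ENNReal.add_lt_add_right ENNReal.ofReal_ne_top hD'μ
    _ ≤ (μ (A \ B) + μ B) + ENNReal.ofReal ε₁ := add_le_add h2 le_rfl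
    _ ≤ (μ T + ENNReal.ofReal (e/4)) + ENNReal.ofReal ε₁ :=
        add_le_add (add_le_add (measure_mono hcover) hBμ) le_rfl
    _ ≤ μ T + ENNReal.ofReal e := by
        rw [add_assoc, ← ENNReal.ofReal_add (by positivity) hε₁.le]
        exact add_le_add le_rfl (ENNReal.ofReal_le_ofReal (by linarith))
    _ = ENNReal.ofReal e + μ T := add_comm _ _
  · intro hpart
    intro ε hε
    obtain ⟨Dm, hDm⟩ := Metric.isBounded_iff.mp (isCompact_univ (X := X)).isBounded
    set M : ℝ := max Dm 0 + 1 with hM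
    have hM0 : 0 < M := by positivity
    have hMd : ∀ x y : X, dist x y ≤ M := by
      intro x y
      have := hDm (Set.mem_univ x) (Set.mem_univ y)
      have h2 : Dm ≤ max Dm 0 := le_max_left _ _
      linarith
    obtain ⟨r, α, hmeas, hdisj, huniv, hdiam⟩ := exists_fine_partition (X := X) (show (0:ℝ) < ε/4 by positivity)
    set ε' := min ε (ε / (2*M)) with hε'
    have hε'0 : 0 < ε' := lt_min hε (by positivity)
    obtain ⟨C, hC⟩ := hpart r α ⟨hmeas, hdisj, by rw [huniv, Set.compl_univ, measure_empty]⟩ ε' hε'0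
    refine ⟨C, fun F hF => ?_⟩
    obtain ⟨D, hDcard, hDμ⟩ := hC F hF
    refine ⟨D, hDcard, ?_⟩
    have hsub : (⋃ x ∈ D, {y : X | hamOrbit α F x y < ε'}) ⊆ ⋃ x ∈ D, {y : X | dBar F x y < ε} := by
      refine Set.iUnion₂_mono fun x _ => ?_
      intro y hy
      simp only [Set.mem_setOf_eq] at *
      by_cases hFe : F = ∅
      · simpa [dBar, hFe] using hε
      have hFc : (0:ℝ) < F.card := by
        exact_mod_cast Finset.card_pos.mpr (Finset.nonempty_iff_ne_empty.mpr hFe)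
      rw [dBar, div_lt_iff₀ hFc]
      rw [hamOrbit, div_lt_iff₀ hFc] at hy
      classical
      set P : G → Prop := fun g => ∀ i, ¬(g • x ∈ α i ∧ g • y ∈ α i) with hP
      have hsplit := Finset.sum_filter_add_sum_filter_not F P (fun g => dist (g • x) (g • y))
      have h1 : ∑ g ∈ F.filter P, dist (g • x) (g • y) ≤ (F.filter P).card * M := by
        rw [← nsmul_eq_mul]
        exact Finset.sum_le_card_nsmul _ _ _ (fun g _ => hMd _ _)
      have h2 : ∑ g ∈ F.filter (fun g => ¬ P g), dist (g • x) (g • y)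
          ≤ (F.filter (fun g => ¬ P g)).card * (ε/2) := by
        rw [← nsmul_eq_mul]
        refine Finset.sum_le_card_nsmul _ _ _ (fun g hg => ?_)
        obtain ⟨-, hg2⟩ := Finset.mem_filter.mp hg
        simp only [hP, not_forall, not_not] at hg2
        obtain ⟨i, hgi, hgj⟩ := hg2
        have := hdiam i _ hgi _ hgj
        linarith
      have hham : ((F.filter P).card : ℝ) < ε' * F.card := by
        convert hy using 4
        rfl
      have hcN : ((F.filter (fun g => ¬ P g)).card : ℝ) ≤ F.card := by
        exact_mod_cast Finset.card_filter_le _ _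
      have hε'2 : ε' ≤ ε / (2*M) := min_le_right _ _
      have hcP : (0:ℝ) ≤ ((F.filter P).card : ℝ) := Nat.cast_nonneg _
      calc ∑ g ∈ F, dist (g • x) (g • y)
          = ∑ g ∈ F.filter P, dist (g • x) (g • y)
            + ∑ g ∈ F.filter (fun g => ¬ P g), dist (g • x) (g • y) := hsplit.symm
      _ ≤ (F.filter P).card * M + F.card * (ε/2) := by
          refine add_le_add h1 (le_trans h2 ?_)
          exact mul_le_mul_of_nonneg_right hcN (by positivity)
      _ < (ε' * F.card) * M + F.card * (ε/2) :=
          add_lt_add_of_lt_of_le (mul_lt_mul_of_pos_right hham hM0) le_rfl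
      _ ≤ (ε / (2*M) * F.card) * M + F.card * (ε/2) := by
          have : ε' * F.card * M ≤ ε / (2*M) * F.card * M := by
            apply mul_le_mul_of_nonneg_right _ hM0.le
            exact mul_le_mul_of_nonneg_right hε'2 hFc.le
          linarith
      _ = ε * F.card := by field_simp; ring
    calc 1 - ENNReal.ofReal ε ≤ 1 - ENNReal.ofReal ε' :=
          tsub_le_tsub_left (ENNReal.ofReal_le_ofReal (min_le_left _ _)) 1
    _ < μ (⋃ x ∈ D, {y : X | hamOrbit α F x y < ε'}) := hDμ
    _ ≤ _ := measure_mono hsub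
end

section
/- Let (E_n) be a sequence of finite subsets of 𝔓_r arising as E_n = {g⁻¹α : g ∈ F_n} for a finite partition α and a Følner sequence (F_n) in an amenable group G acting measure-preservingly. If α is mean equicontinuous with respect to (F_n), then α has bounded mean complexity with respect to (F_n): for every ε>0 there exists k such that 𝒞(E_n, ε) ≤ k for all n. -/
open MeasureTheory Filter Real Topology
open scoped symmDiff ENNReal

variable {X : Type*} [MeasurableSpace X]

set_option linter.unusedSectionVars false

lemma hamOrbit_nonneg {G : Type*} [Group G] [MulAction G X] {ι : Type*}
    (α : ι → Set X) (F : Finset G) (x y : X) : 0 ≤ hamOrbit α F x y :=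
  div_nonneg (Nat.cast_nonneg _) (Nat.cast_nonneg _)

lemma hamOrbit_le_one {G : Type*} [Group G] [MulAction G X] {ι : Type*}
    (α : ι → Set X) (F : Finset G) (x y : X) : hamOrbit α F x y ≤ 1 := by
  classical
  unfold hamOrbit
  rcases Finset.eq_empty_or_nonempty F with h | h
  · simp [h]
  · rw [div_le_one (by exact_mod_cast Finset.card_pos.mpr h)]
    exact_mod_cast Finset.card_filter_le _ _

lemma hamOrbit_eq_zero {G : Type*} [Group G] [MulAction G X] {ι : Type*}
    (α : ι → Set X) (F : Finset G) (x y : X)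
    (h : ∀ g ∈ F, ∃ i, g • x ∈ α i ∧ g • y ∈ α i) :
    hamOrbit α F x y = 0 := by
  classical
  unfold hamOrbit
  rw [Finset.filter_false_of_mem, Finset.card_empty]
  · simp
  · intro g hg
    push_neg
    exact h g hg

/-- For a single `n`, cover almost all of `X` by balls centered at pattern
representatives. -/
lemma cover_of_patterns {G : Type*} [Group G] [Countable G] [MulAction G X]
    (μ : Measure X) [IsProbabilityMeasure μ]
    (hmp : ∀ g : G, MeasurePreserving (fun x => g • x) μ μ)
    {r : ℕ} (α : Fin r → Set X) (hαm : ∀ i, MeasurableSet (α i))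
    (hαc : μ (⋃ i, α i)ᶜ = 0)
    (F : Finset G) {ε : ℝ} (hε : 0 < ε) :
    ∃ D : Finset X, μ (⋃ x ∈ D, {y : X | hamOrbit α F x y < ε}) = 1 := by
  classical
  have hXne : Nonempty X := by
    have : (Set.univ : Set X).Nonempty :=
      MeasureTheory.nonempty_of_measure_ne_zero (μ := μ) (by simp)
    exact ⟨this.some⟩
  set T : Set X := {x | ∀ g ∈ F, ∃ i, g • x ∈ α i} with hT
  have hTc : μ Tᶜ = 0 := by
    have hsub : Tᶜ ⊆ ⋃ g : G, (fun x => g • x) ⁻¹' (⋃ i, α i)ᶜ := by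
      intro x hx
      simp only [hT, Set.mem_compl_iff, Set.mem_setOf_eq] at hx
      push_neg at hx
      obtain ⟨g, hg, hgi⟩ := hx
      exact Set.mem_iUnion.mpr ⟨g, by simpa using hgi⟩
    refine measure_mono_null hsub (measure_iUnion_null fun g => ?_)
    rw [(hmp g).measure_preimage ((MeasurableSet.iUnion hαm).compl.nullMeasurableSet)]
    exact hαc
  -- pattern representatives
  set P := ({g : G // g ∈ F} → Fin r)
  set S : P → Set X := fun f => {x | ∀ g : {g : G // g ∈ F}, (g : G) • x ∈ α (f g)} with hS
  set pick : P → X := fun f => if h : (S f).Nonempty then h.some else Classical.arbitrary X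
    with hpick
  refine ⟨Finset.univ.image pick, ?_⟩
  have hcov : T ⊆ ⋃ x ∈ Finset.univ.image pick, {y : X | hamOrbit α F x y < ε} := by
    intro x hx
    simp only [hT, Set.mem_setOf_eq] at hx
    set f : P := fun g => (hx g g.2).choose with hf
    have hxf : x ∈ S f := fun g => (hx g g.2).choose_spec
    have hSf : (S f).Nonempty := ⟨x, hxf⟩
    have hpickf : pick f ∈ S f := by
      rw [hpick]; simp only [hSf, dif_pos]; exact hSf.some_mem
    have : hamOrbit α F (pick f) x < ε := by
      rw [hamOrbit_eq_zero α F (pick f) x ?_]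
      · exact hε
      · intro g hg
        exact ⟨f ⟨g, hg⟩, hpickf ⟨g, hg⟩, hxf ⟨g, hg⟩⟩
    exact Set.mem_biUnion (Finset.mem_image_of_mem pick (Finset.mem_univ f)) this
  refine le_antisymm prob_le_one ?_
  calc (1 : ℝ≥0∞) = μ T := by
        have : μ T + μ Tᶜ ≥ μ Set.univ := by
          rw [← Set.union_compl_self T]; exact measure_union_le _ _
        simp only [hTc, add_zero, measure_univ] at this
        exact le_antisymm prob_le_one this |>.symm ▸ (le_antisymm this prob_le_one).symm
    _ ≤ _ := measure_mono hcov

/-- For a measure-preserving action of a countably infinite discrete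
amenable group `G` with Følner sequence `(F_n)`, if the finite partition `α` is mean
equicontinuous with respect to `(F_n)`, then `α` has bounded mean complexity with respect
to `(F_n)`. -/
theorem boundedMeanComplexity_of_meanEquicontinuous (μ : Measure X) [IsProbabilityMeasure μ]
    {G : Type*} [Group G] [Countable G] [Infinite G] [DecidableEq G] [MulAction G X]
    (hmp : ∀ g : G, MeasurePreserving (fun x => g • x) μ μ)
    {r : ℕ} (hr : 2 ≤ r) (α : Fin r → Set X) (hα : IsPartition μ α)
    (F : ℕ → Finset G) (hFne : ∀ n, (F n).Nonempty)
    (hFol : ∀ g : G, Tendsto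
      (fun n => ((((F n).image (fun h => g * h)) ∆ (F n)).card : ℝ) / (F n).card)
      atTop (𝓝 0))
    (hme : ∀ ε > (0 : ℝ), ∃ (k : ℕ) (B : Fin k → Set X),
      (∀ i, MeasurableSet (B i)) ∧ Pairwise (Function.onFun Disjoint B) ∧
      μ (⋃ i, B i) > 1 - ENNReal.ofReal ε ∧
      ∀ (i : Fin k) (x y : X), x ∈ B i → y ∈ B i →
        limsup (fun n => hamOrbit α (F n) x y) atTop < ε) :
    ∀ ε > (0 : ℝ), ∃ k : ℕ, ∀ n : ℕ,
      ∃ D : Finset X, D.card ≤ k ∧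
        μ (⋃ x ∈ D, {y : X | hamOrbit α (F n) x y < ε}) > 1 - ENNReal.ofReal ε := by

  obtain ⟨hαm, -, hαc⟩ := hα
  classical
  intro ε hε
  obtain ⟨k, B, hBm, hBd, hBμ, hB⟩ := hme ε hε
  have h1ε : 1 - ENNReal.ofReal ε < 1 :=
    ENNReal.sub_lt_self ENNReal.one_ne_top one_ne_zero
      (by simpa using (ENNReal.ofReal_pos.mpr hε).ne')
  -- small-n covers via patterns
  have hcov : ∀ n, ∃ D : Finset X, μ (⋃ x ∈ D, {y : X | hamOrbit α (F n) x y < ε}) = 1 :=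
    fun n => cover_of_patterns μ hmp α hαm hαc (F n) hε
  choose Dn hDn using hcov
  have hXne : Nonempty X := by
    have : (Set.univ : Set X).Nonempty :=
      MeasureTheory.nonempty_of_measure_ne_zero (μ := μ) (by simp)
    exact ⟨this.some⟩
  -- centers
  set c : Fin k → X := fun i => if h : (B i).Nonempty then h.some else Classical.arbitrary X
    with hc
  have hcmem : ∀ i, (B i).Nonempty → c i ∈ B i := by
    intro i h
    rw [hc]; simp only [h, dif_pos]; exact h.some_mem
  set Y : ℕ → Set X := fun n => ⋃ i, (B i ∩ {y | hamOrbit α (F n) (c i) y < ε}) with hY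
  set Z : ℕ → Set X := fun N => ⋂ n, ⋂ (_ : N ≤ n), Y n with hZ
  have hZmono : Monotone Z := by
    intro N M hNM
    exact Set.iInter₂_mono' fun n hn => ⟨n, hNM.trans hn, subset_rfl⟩
  have hZun : (⋃ N, Z N) = ⋃ i, B i := by
    apply Set.Subset.antisymm
    · refine Set.iUnion_subset fun N => ?_
      intro y hy
      have : y ∈ Y N := by
        simp only [hZ, Set.mem_iInter] at hy
        exact hy N le_rfl
      obtain ⟨i, hi, _⟩ := Set.mem_iUnion.mp this
      exact Set.mem_iUnion.mpr ⟨i, hi⟩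
    · intro y hy
      obtain ⟨i, hi⟩ := Set.mem_iUnion.mp hy
      have hBne2 : (B i).Nonempty := ⟨y, hi⟩
      have hlim : limsup (fun n => hamOrbit α (F n) (c i) y) atTop < ε :=
        hB i (c i) y (hcmem i hBne2) hi
      have hev : ∀ᶠ n in atTop, hamOrbit α (F n) (c i) y < ε :=
        eventually_lt_of_limsup_lt hlim
          (isBoundedUnder_of ⟨1, fun n => hamOrbit_le_one α (F n) (c i) y⟩)
      obtain ⟨N, hN⟩ := eventually_atTop.mp hev
      refine Set.mem_iUnion.mpr ⟨N, ?_⟩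
      simp only [hZ, Set.mem_iInter]
      intro n hn
      exact Set.mem_iUnion.mpr ⟨i, hi, hN n hn⟩
  have hsup : μ (⋃ N, Z N) = ⨆ N, μ (Z N) :=
    (hZmono.directed_le).measure_iUnion
  obtain ⟨N, hN⟩ : ∃ N, 1 - ENNReal.ofReal ε < μ (Z N) := by
    have : 1 - ENNReal.ofReal ε < ⨆ N, μ (Z N) := by
      rw [← hsup, hZun]; exact hBμ
    exact lt_iSup_iff.mp this
  refine ⟨max k ((Finset.range N).sup fun n => (Dn n).card), fun n => ?_⟩
  by_cases hn : n < N
  · refine ⟨Dn n, le_max_of_le_right (Finset.le_sup (f := fun n => (Dn n).card) (Finset.mem_range.mpr hn)), ?_⟩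
    rw [hDn n]; exact h1ε
  · push_neg at hn
    refine ⟨Finset.univ.image c, ?_, ?_⟩
    · exact le_max_of_le_left ((Finset.card_image_le).trans (by simp))
    · refine lt_of_lt_of_le hN (measure_mono ?_)
      intro y hy
      have : y ∈ Y n := by
        simp only [hZ, Set.mem_iInter] at hy
        exact hy n hn
      obtain ⟨i, hi⟩ := Set.mem_iUnion.mp this
      exact Set.mem_biUnion (Finset.mem_image_of_mem c (Finset.mem_univ i)) hi.2
end
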